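/- arXiv:2509.08645 — 11 statements merged into one kernel-verified Lean document; each statement's English description precedes it below -/
import Mathlib

section
/- Let G : Z → Z' be Lipschitz continuous with constant L > 0 and strongly monotone with constant m > 0. Then G is bijective and its inverse G⁻¹ : Z' → Z is Lipschitz continuous with constant 1/m, i.e. ‖G⁻¹ f − G⁻¹ g‖_Z ≤ (1/m)·‖f − g‖_{Z'} for all f, g ∈ Z'. -/
open NormedSpace

set_option maxHeartbeats 1000000 in
/-- A Lipschitz continuous and strongly monotone operator `G : Z → Z'` on a real
Hilbert space `Z` is bijective, with inverse that is Lipschitz continuous with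
constant `1/m`. -/
theorem lipschitz_stronglyMonotone_inverse_lipschitz
    {Z : Type*} [NormedAddCommGroup Z] [InnerProductSpace ℝ Z] [CompleteSpace Z]
    (G : Z → StrongDual ℝ Z) (L m : ℝ) (hL : 0 < L) (hm : 0 < m)
    (hlip : ∀ w v : Z, ‖G w - G v‖ ≤ L * ‖w - v‖)
    (hmono : ∀ w v : Z, (G w - G v) (w - v) ≥ m * ‖w - v‖ ^ 2) :
    Function.Bijective G ∧
      ∀ f g : StrongDual ℝ Z,
        ‖Function.invFun G f - Function.invFun G g‖ ≤ (1 / m) * ‖f - g‖ := by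
  -- key estimate: m ‖w - v‖ ≤ ‖G w - G v‖
  have key : ∀ w v : Z, m * ‖w - v‖ ≤ ‖G w - G v‖ := by
    intro w v
    rcases eq_or_ne w v with rfl | h
    · simp
    · have h0 : 0 < ‖w - v‖ := by rwa [norm_pos_iff, sub_ne_zero]
      have h1 : m * ‖w - v‖ ^ 2 ≤ ‖G w - G v‖ * ‖w - v‖ :=
        le_trans (hmono w v) (le_trans (le_abs_self _)
          (by simpa [Real.norm_eq_abs] using (G w - G v).le_opNorm (w - v)))
      have h2 : (m * ‖w - v‖) * ‖w - v‖ ≤ ‖G w - G v‖ * ‖w - v‖ := by nlinarith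
      exact le_of_mul_le_mul_right h2 h0
  have hinj : Function.Injective G := by
    intro w v h
    have hk := key w v
    rw [h, sub_self, norm_zero] at hk
    have h0 : ‖w - v‖ ≤ 0 := by nlinarith
    have h1 : w - v = 0 := by
      simpa [norm_eq_zero] using le_antisymm h0 (norm_nonneg _)
    exact sub_eq_zero.mp h1
  -- surjectivity via Banach fixed point
  have hsurj : Function.Surjective G := by
    intro f
    set ρ : ℝ := m / (L ^ 2 + m ^ 2) with hρ
    have hden : (0:ℝ) < L ^ 2 + m ^ 2 := by positivity
    have hρpos : 0 < ρ := by positivity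
    set c : ℝ := L ^ 2 / (L ^ 2 + m ^ 2) with hc
    have hc0 : 0 ≤ c := by positivity
    have hc1 : c < 1 := by
      rw [hc, div_lt_one hden]; nlinarith
    set J := (InnerProductSpace.toDual ℝ Z).symm with hJ
    set T : Z → Z := fun w => w - ρ • J (G w - f) with hT
    -- contraction estimate
    have hcontr : ∀ w v : Z, ‖T w - T v‖ ≤ Real.sqrt c * ‖w - v‖ := by
      intro w v
      have hTsub : T w - T v = (w - v) - ρ • J (G w - G v) := by
        simp only [hT]
        rw [show G w - f = (G w - G v) + (G v - f) by abel, map_add, smul_add]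
        abel
      have hsq : ‖T w - T v‖ ^ 2 =
          ‖w - v‖ ^ 2 - 2 * inner ℝ (w - v) (ρ • J (G w - G v)) + ‖ρ • J (G w - G v)‖ ^ 2 := by
        rw [hTsub]; exact norm_sub_sq_real _ _
      have hinner : (inner ℝ (w - v) (ρ • J (G w - G v)) : ℝ) = ρ * ((G w - G v) (w - v)) := by
        rw [real_inner_smul_right, real_inner_comm]
        congr 1
        exact InnerProductSpace.toDual_symm_apply
      have hnorm : ‖ρ • J (G w - G v)‖ ^ 2 = ρ ^ 2 * ‖G w - G v‖ ^ 2 := by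
        rw [norm_smul, J.norm_map, mul_pow, Real.norm_eq_abs, sq_abs]
      have hmonoWV := hmono w v
      have hlipWV := hlip w v
      have hρL : ρ * (L ^ 2) ≤ m := by
        rw [hρ, div_mul_eq_mul_div, div_le_iff₀ hden]; nlinarith
      have hbound : ‖T w - T v‖ ^ 2 ≤ c * ‖w - v‖ ^ 2 := by
        rw [hsq, hinner, hnorm]
        have hGn : ‖G w - G v‖ ^ 2 ≤ L ^ 2 * ‖w - v‖ ^ 2 := by
          nlinarith [norm_nonneg (G w - G v), norm_nonneg (w - v)]
        have hc' : c = 1 - ρ * m := by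
          rw [hc, hρ]; field_simp; ring
        rw [hc']
        have h3 : ρ ^ 2 * ‖G w - G v‖ ^ 2 ≤ ρ ^ 2 * (L ^ 2 * ‖w - v‖ ^ 2) :=
          mul_le_mul_of_nonneg_left hGn (sq_nonneg ρ)
        have h4 : ρ * (m * ‖w - v‖ ^ 2) ≤ ρ * ((G w - G v) (w - v)) :=
          mul_le_mul_of_nonneg_left hmonoWV hρpos.le
        have h5 : ρ ^ 2 * (L ^ 2 * ‖w - v‖ ^ 2) ≤ ρ * m * ‖w - v‖ ^ 2 := by
          have h := mul_le_mul_of_nonneg_right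
            (mul_le_mul_of_nonneg_left hρL hρpos.le) (sq_nonneg ‖w - v‖)
          linarith [h]
        linarith [h3, h4, h5]
      calc ‖T w - T v‖ = Real.sqrt (‖T w - T v‖ ^ 2) := by
            rw [Real.sqrt_sq (norm_nonneg _)]
        _ ≤ Real.sqrt (c * ‖w - v‖ ^ 2) := Real.sqrt_le_sqrt hbound
        _ = Real.sqrt c * ‖w - v‖ := by
            rw [Real.sqrt_mul hc0, Real.sqrt_sq (norm_nonneg _)]
    set K : NNReal := ⟨Real.sqrt c, Real.sqrt_nonneg _⟩ with hK
    have hlipT : LipschitzWith K T := by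
      apply LipschitzWith.of_dist_le_mul
      intro w v
      rw [dist_eq_norm, dist_eq_norm]
      exact hcontr w v
    have hcw : ContractingWith K T := by
      refine ⟨?_, hlipT⟩
      have : Real.sqrt c < 1 := by
        rw [show (1:ℝ) = Real.sqrt 1 by simp]
        exact Real.sqrt_lt_sqrt hc0 hc1
      exact_mod_cast this
    obtain ⟨y, hy, -⟩ := hcw.exists_fixedPoint 0 (edist_ne_top _ _)
    refine ⟨y, ?_⟩
    have h0 : ρ • J (G y - f) = 0 := by
      have h := hy
      simp only [Function.IsFixedPt, hT] at h
      exact sub_eq_self.mp h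
    have h1 : J (G y - f) = 0 := by
      rcases smul_eq_zero.mp h0 with h | h
      · exact absurd h hρpos.ne'
      · exact h
    have h2 : G y - f = 0 := by
      have := (InnerProductSpace.toDual ℝ Z).symm.map_eq_zero_iff.mp h1
      exact this
    exact sub_eq_zero.mp h2
  refine ⟨⟨hinj, hsurj⟩, ?_⟩
  intro f g
  set w := Function.invFun G f
  set v := Function.invFun G g
  have hw : G w = f := Function.invFun_eq (hsurj f)
  have hv : G v = g := Function.invFun_eq (hsurj g)
  have hk := key w v
  rw [hw, hv] at hk
  rw [one_div, inv_mul_eq_div, le_div_iff₀ hm]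
  linarith
end

section
/- Let G : Z → Z' be Lipschitz continuous with constant L > 0 and strongly monotone with constant m > 0. Then G is bijective and its inverse G⁻¹ : Z' → Z is strongly monotone with constant m/L², i.e. (f − g)(G⁻¹ f − G⁻¹ g) ≥ (m/L²)·‖f − g‖_{Z'}² for all f, g ∈ Z'. -/
set_option maxHeartbeats 1000000


open NormedSpace

/-- A Lipschitz continuous and strongly monotone operator `G : Z → Z'` on a real
Hilbert space `Z` is bijective, with inverse that is strongly monotone with
constant `m/L²`. -/
theorem lipschitz_stronglyMonotone_inverse_stronglyMonotone
    {Z : Type*} [NormedAddCommGroup Z] [InnerProductSpace ℝ Z] [CompleteSpace Z]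
    (G : Z → StrongDual ℝ Z) (L m : ℝ) (hL : 0 < L) (hm : 0 < m)
    (hlip : ∀ w v : Z, ‖G w - G v‖ ≤ L * ‖w - v‖)
    (hmono : ∀ w v : Z, (G w - G v) (w - v) ≥ m * ‖w - v‖ ^ 2) :
    Function.Bijective G ∧
      ∀ f g : StrongDual ℝ Z,
        (f - g) (Function.invFun G f - Function.invFun G g) ≥ (m / L ^ 2) * ‖f - g‖ ^ 2 := by
  have hL2 : (0:ℝ) < L ^ 2 := by positivity
  rcases subsingleton_or_nontrivial Z with hs | hs
  · refine ⟨⟨fun a b _ => Subsingleton.elim a b, fun f => ⟨0, Subsingleton.elim _ _⟩⟩, ?_⟩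
    intro f g
    have : f = g := Subsingleton.elim f g
    subst this
    simp
  -- m ≤ L
  have hmL : m ≤ L := by
    rcases exists_ne (0 : Z) with ⟨w, hw⟩
    have h1 := hmono w 0
    have h2 : (G w - G 0) (w - 0) ≤ ‖G w - G 0‖ * ‖w - 0‖ :=
      (le_abs_self _).trans (by simpa [Real.norm_eq_abs] using (G w - G 0).le_opNorm (w - 0))
    have h3 := hlip w 0
    have hw0 : 0 < ‖w - 0‖ := by simpa [norm_pos_iff] using hw
    nlinarith [mul_le_mul_of_nonneg_right h3 hw0.le, mul_pos hw0 hw0]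
  have hinj : Function.Injective G := by
    intro w v h
    have h1 := hmono w v
    rw [h, sub_self] at h1
    simp only [ContinuousLinearMap.zero_apply] at h1
    have : ‖w - v‖ ^ 2 ≤ 0 := by nlinarith
    have : ‖w - v‖ = 0 := by nlinarith [sq_nonneg ‖w - v‖, norm_nonneg (w - v)]
    rwa [norm_sub_eq_zero_iff] at this
  set c : ℝ := m / L ^ 2 with hc
  have hc0 : 0 < c := div_pos hm hL2
  set J := (InnerProductSpace.toDual ℝ Z).symm with hJ
  have key : ∀ (f : StrongDual ℝ Z) (w v : Z),
      ‖(w - c • J (G w - f)) - (v - c • J (G v - f))‖ ^ 2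
        ≤ (1 - m ^ 2 / L ^ 2) * ‖w - v‖ ^ 2 := by
    intro f w v
    have hdiff : (w - c • J (G w - f)) - (v - c • J (G v - f))
        = (w - v) - c • J (G w - G v) := by
      simp only [hJ, map_sub, smul_sub]
      abel
    rw [hdiff]
    have hnormJ : ‖J (G w - G v)‖ = ‖G w - G v‖ :=
      (InnerProductSpace.toDual ℝ Z).symm.norm_map _
    have hinner : inner ℝ (w - v) (c • J (G w - G v)) = c * (G w - G v) (w - v) := by
      rw [real_inner_smul_right, real_inner_comm]
      rw [hJ, InnerProductSpace.toDual_symm_apply]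
    rw [norm_sub_sq_real, hinner, norm_smul, Real.norm_eq_abs, abs_of_pos hc0,
      hnormJ]
    have h1 := hmono w v
    have h2 := hlip w v
    have h3 : ‖G w - G v‖ ^ 2 ≤ L ^ 2 * ‖w - v‖ ^ 2 := by
      nlinarith [norm_nonneg (G w - G v), norm_nonneg (w - v)]
    have hcval : 1 - 2 * c * m + c ^ 2 * L ^ 2 = 1 - m ^ 2 / L ^ 2 := by
      rw [hc]
      field_simp
      ring
    nlinarith [sq_nonneg (‖w - v‖), mul_pos hc0 hc0]
  have hK2 : (0:ℝ) ≤ 1 - m ^ 2 / L ^ 2 := by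
    have : m ^ 2 ≤ L ^ 2 := by nlinarith
    have := div_le_one_of_le₀ this hL2.le
    linarith
  set K : ℝ := Real.sqrt (1 - m ^ 2 / L ^ 2) with hKdef
  have hKsq : K ^ 2 = 1 - m ^ 2 / L ^ 2 := Real.sq_sqrt hK2
  have hK1 : K < 1 := by
    rw [hKdef]
    have h4 : 1 - m ^ 2 / L ^ 2 < 1 := by
      have : 0 < m ^ 2 / L ^ 2 := by positivity
      linarith
    calc Real.sqrt (1 - m ^ 2 / L ^ 2) < Real.sqrt 1 := Real.sqrt_lt_sqrt hK2 h4
      _ = 1 := Real.sqrt_one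
  have hsurj : Function.Surjective G := by
    intro f
    set T : Z → Z := fun z => z - c • J (G z - f) with hT
    have hlipT : LipschitzWith (Real.toNNReal K) T := by
      apply LipschitzWith.of_dist_le_mul
      intro w v
      rw [dist_eq_norm, dist_eq_norm]
      have h := key f w v
      have hb : ‖T w - T v‖ ^ 2 ≤ (K * ‖w - v‖) ^ 2 := by
        rw [mul_pow, hKsq]; exact h
      have h5 := Real.sqrt_le_sqrt hb
      rw [Real.sqrt_sq (norm_nonneg _),
        Real.sqrt_sq (mul_nonneg (Real.sqrt_nonneg _) (norm_nonneg _))] at h5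
      simpa [Real.coe_toNNReal K (Real.sqrt_nonneg _)] using h5
    have hKlt : Real.toNNReal K < 1 := by
      rw [← NNReal.coe_lt_coe, Real.coe_toNNReal _ (Real.sqrt_nonneg _), NNReal.coe_one]
      exact hK1
    have hcontr : ContractingWith (Real.toNNReal K) T := ⟨hKlt, hlipT⟩
    have : Nonempty Z := ⟨0⟩
    refine ⟨hcontr.fixedPoint T, ?_⟩
    have hfix : T (hcontr.fixedPoint T) = hcontr.fixedPoint T := hcontr.fixedPoint_isFixedPt
    set z := hcontr.fixedPoint T
    have : c • J (G z - f) = 0 := by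
      have := hfix
      simp only [hT] at this
      have h6 : z - c • J (G z - f) - z = 0 := by rw [this]; simp
      simpa [sub_sub_cancel_left, neg_eq_zero] using h6
    have hJz : J (G z - f) = 0 := by
      rcases smul_eq_zero.mp this with h | h
      · exact absurd h hc0.ne'
      · exact h
    have : G z - f = 0 := by
      rwa [hJ, map_eq_zero_iff _ (InnerProductSpace.toDual ℝ Z).symm.injective] at hJz
    exact sub_eq_zero.mp this
  refine ⟨⟨hinj, hsurj⟩, ?_⟩
  intro f g
  set w := Function.invFun G f with hwdef
  set v := Function.invFun G g with hvdef
  have hw : G w = f := Function.rightInverse_invFun hsurj f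
  have hv : G v = g := Function.rightInverse_invFun hsurj g
  have h1 := hmono w v
  have h2 := hlip w v
  rw [hw, hv] at h1 h2
  have h3 : ‖f - g‖ ^ 2 ≤ L ^ 2 * ‖w - v‖ ^ 2 := by
    nlinarith [norm_nonneg (f - g), norm_nonneg (w - v)]
  have h4 : (m / L ^ 2) * ‖f - g‖ ^ 2 ≤ m * ‖w - v‖ ^ 2 := by
    rw [div_mul_eq_mul_div, div_le_iff₀ hL2]
    nlinarith
  linarith
end

section
/- Let G : Z → Z' be Lipschitz continuous with constant L > 0 and strongly monotone with constant m > 0, let Z⁰ ⊆ Z be a closed subspace, let u ∈ Z satisfy G u = 0, and let u⁰ ∈ Z⁰ satisfy the Galerkin equations (G u⁰)(v) = 0 for all v ∈ Z⁰. Then the Galerkin approximation is quasi-best: ‖u − u⁰‖_Z ≤ (1 + L/m)·inf_{z ∈ Z⁰} ‖u − z‖_Z. -/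
open NormedSpace

/-- Quasi-optimality of Galerkin approximations for Lipschitz continuous and
strongly monotone operators (Céa-type lemma). -/
theorem galerkin_quasi_best
    {Z : Type*} [NormedAddCommGroup Z] [InnerProductSpace ℝ Z] [CompleteSpace Z]
    (G : Z → StrongDual ℝ Z) (L m : ℝ) (hL : 0 < L) (hm : 0 < m)
    (hlip : ∀ w v : Z, ‖G w - G v‖ ≤ L * ‖w - v‖)
    (hmono : ∀ w v : Z, (G w - G v) (w - v) ≥ m * ‖w - v‖ ^ 2)
    (Z₀ : Submodule ℝ Z) (hZ₀ : IsClosed (Z₀ : Set Z))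
    (u : Z) (hu : G u = 0)
    (u₀ : Z) (hu₀ : u₀ ∈ Z₀) (hGal : ∀ v ∈ Z₀, (G u₀) v = 0) :
    ‖u - u₀‖ ≤ (1 + L / m) * ⨅ z : Z₀, ‖u - (z : Z)‖ := by
  have hc : (0:ℝ) < 1 + L / m := by positivity
  have key : ∀ z : Z₀, ‖u - u₀‖ ≤ (1 + L / m) * ‖u - (z : Z)‖ := by
    intro z
    rcases eq_or_ne u u₀ with h | h
    · simp only [h, sub_self, norm_zero]
      positivity
    · have hnorm : 0 < ‖u - u₀‖ := by
        rw [norm_pos_iff]; exact sub_ne_zero.mpr h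
      have hmem : (z : Z) - u₀ ∈ Z₀ := Z₀.sub_mem z.2 hu₀
      have hzero : (G u - G u₀) ((z : Z) - u₀) = 0 := by
        simp [hu, hGal _ hmem]
      have hsplit : (G u - G u₀) (u - u₀)
          = (G u - G u₀) (u - (z : Z)) := by
        have : u - u₀ = (u - (z : Z)) + ((z : Z) - u₀) := by abel
        rw [this, map_add, hzero, add_zero]
      have h1 : m * ‖u - u₀‖ ^ 2 ≤ (G u - G u₀) (u - (z : Z)) := by
        rw [← hsplit]; exact hmono u u₀
      have h2 : (G u - G u₀) (u - (z : Z)) ≤ L * ‖u - u₀‖ * ‖u - (z : Z)‖ := by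
        calc (G u - G u₀) (u - (z : Z)) ≤ ‖G u - G u₀‖ * ‖u - (z : Z)‖ :=
              le_trans (le_abs_self _) ((G u - G u₀).le_opNorm _)
          _ ≤ L * ‖u - u₀‖ * ‖u - (z : Z)‖ := by
              have := hlip u u₀
              exact mul_le_mul_of_nonneg_right this (norm_nonneg _)
      have h3 : m * ‖u - u₀‖ ^ 2 ≤ L * ‖u - u₀‖ * ‖u - (z : Z)‖ := h1.trans h2
      have h4 : ‖u - u₀‖ ≤ (L / m) * ‖u - (z : Z)‖ := by
        rw [div_mul_eq_mul_div, le_div_iff₀ hm]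
        nlinarith
      calc ‖u - u₀‖ ≤ (L / m) * ‖u - (z : Z)‖ := h4
        _ ≤ (1 + L / m) * ‖u - (z : Z)‖ := by nlinarith [norm_nonneg (u - (z : Z))]
  have hne : Nonempty Z₀ := ⟨0⟩
  have : ‖u - u₀‖ / (1 + L / m) ≤ ⨅ z : Z₀, ‖u - (z : Z)‖ := by
    apply le_ciInf
    intro z
    rw [div_le_iff₀ hc, mul_comm]
    exact key z
  calc ‖u - u₀‖ = (1 + L / m) * (‖u - u₀‖ / (1 + L / m)) := by
        field_simp
    _ ≤ (1 + L / m) * ⨅ z : Z₀, ‖u - (z : Z)‖ :=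
        mul_le_mul_of_nonneg_left this hc.le
end

section
/- For every (f, g) ∈ Y' × X', the Schur operator S : X → X' is Lipschitz continuous with constant L_S = max(1, L_A, 1/m_A), i.e. ‖S w − S z‖_{X'} ≤ L_S ‖w − z‖_X for all w, z ∈ X, and strongly monotone with constant m_S = min(1, m_A, m_A/L_A²), i.e. (S w − S z)(w − z) ≥ m_S ‖w − z‖_X² for all w, z ∈ X. -/
open NormedSpace

set_option maxHeartbeats 1000000 in
/-- The Schur operator `S : X → X'` is Lipschitz continuous with constant
`L_S = max(1, L_A, 1/m_A)` and strongly monotone with constant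
`m_S = min(1, m_A, m_A/L_A²)`. -/
theorem schur_lipschitz_stronglyMonotone
    {Y X H : Type*}
    [NormedAddCommGroup Y] [InnerProductSpace ℝ Y] [CompleteSpace Y]
    [NormedAddCommGroup X] [InnerProductSpace ℝ X] [CompleteSpace X]
    [NormedAddCommGroup H] [InnerProductSpace ℝ H] [CompleteSpace H]
    (E : X →L[ℝ] Y) (D : X →L[ℝ] StrongDual ℝ Y) (Γt : X →L[ℝ] H)
    (hnorm : ∀ x : X, ‖x‖ ^ 2 = ‖E x‖ ^ 2 + ‖D x‖ ^ 2 + ‖Γt x‖ ^ 2)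
    (A : Y → StrongDual ℝ Y) (LA mA : ℝ) (hLA : 0 < LA) (hmA : 0 < mA)
    (hAlip : ∀ w v : Y, ‖A w - A v‖ ≤ LA * ‖w - v‖)
    (hAmono : ∀ w v : Y, (A w - A v) (w - v) ≥ mA * ‖w - v‖ ^ 2)
    (Ainv : StrongDual ℝ Y → Y)
    (hAinv₁ : ∀ y : Y, Ainv (A y) = y) (hAinv₂ : ∀ f : StrongDual ℝ Y, A (Ainv f) = f)
    (f : StrongDual ℝ Y) (g : StrongDual ℝ X)
    (S : X → StrongDual ℝ X)
    (hS : ∀ z : X, S z =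
      (A (E z)).comp E + ((InnerProductSpace.toDual ℝ H (Γt z)).comp Γt) + g -
        D.flip (Ainv (f - D z))) :
    (∀ w z : X, ‖S w - S z‖ ≤ max 1 (max LA (1 / mA)) * ‖w - z‖) ∧
    (∀ w z : X,
      (S w - S z) (w - z) ≥ min 1 (min mA (mA / LA ^ 2)) * ‖w - z‖ ^ 2) := by
  -- pointwise formula for `S w - S z`
  have hSapp : ∀ w z x : X, (S w - S z) x =
      (A (E w) - A (E z)) (E x) + (inner ℝ (Γt w - Γt z) (Γt x) : ℝ) -
        (D x) (Ainv (f - D w) - Ainv (f - D z)) := by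
    intro w z x
    simp [hS, ContinuousLinearMap.sub_apply, ContinuousLinearMap.add_apply,
      ContinuousLinearMap.comp_apply, ContinuousLinearMap.flip_apply,
      InnerProductSpace.toDual_apply_apply, inner_sub_left, map_sub]
    ring
  -- `Ainv` is Lipschitz with constant `1/mA`
  have hAinvLip : ∀ p q : StrongDual ℝ Y, ‖Ainv p - Ainv q‖ ≤ (1 / mA) * ‖p - q‖ := by
    intro p q
    have h1 : mA * ‖Ainv p - Ainv q‖ ^ 2 ≤ (p - q) (Ainv p - Ainv q) := by
      have := hAmono (Ainv p) (Ainv q)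
      rwa [hAinv₂, hAinv₂] at this
    have h2 : (p - q) (Ainv p - Ainv q) ≤ ‖p - q‖ * ‖Ainv p - Ainv q‖ := by
      calc (p - q) (Ainv p - Ainv q) ≤ ‖(p - q) (Ainv p - Ainv q)‖ :=
            le_abs_self _
        _ ≤ ‖p - q‖ * ‖Ainv p - Ainv q‖ := (p - q).le_opNorm _
    rcases eq_or_lt_of_le (norm_nonneg (Ainv p - Ainv q)) with h | h
    · rw [← h]
      positivity
    · have h3 : mA * ‖Ainv p - Ainv q‖ ≤ ‖p - q‖ := by
        have := mul_le_mul_of_nonneg_right (le_refl (1 : ℝ)) h.le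
        nlinarith [h1, h2, h]
      rw [div_mul_eq_mul_div, le_div_iff₀ hmA]
      linarith [h3]
  -- lower Lipschitz bound through `A`
  have hAinvLow : ∀ p q : StrongDual ℝ Y, ‖p - q‖ ≤ LA * ‖Ainv p - Ainv q‖ := by
    intro p q
    have := hAlip (Ainv p) (Ainv q)
    rwa [hAinv₂, hAinv₂] at this
  constructor
  · -- Lipschitz continuity
    intro w z
    set M := max 1 (max LA (1 / mA)) with hM
    have hM1 : (1 : ℝ) ≤ M := le_max_left _ _
    have hMLA : LA ≤ M := le_trans (le_max_left _ _) (le_max_right _ _)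
    have hMmA : 1 / mA ≤ M := le_trans (le_max_right _ _) (le_max_right _ _)
    have hM0 : (0 : ℝ) ≤ M := by linarith
    apply ContinuousLinearMap.opNorm_le_bound _ (by positivity)
    intro x
    rw [hSapp]
    set u := w - z with hu
    -- bound each term
    have hEwz : E w - E z = E u := (map_sub E w z).symm
    have hGwz : Γt w - Γt z = Γt u := (map_sub Γt w z).symm
    have ht1 : ‖(A (E w) - A (E z)) (E x)‖ ≤ LA * ‖E u‖ * ‖E x‖ := by
      calc ‖(A (E w) - A (E z)) (E x)‖ ≤ ‖A (E w) - A (E z)‖ * ‖E x‖ :=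
            (A (E w) - A (E z)).le_opNorm _
        _ ≤ (LA * ‖E u‖) * ‖E x‖ := by
            apply mul_le_mul_of_nonneg_right _ (norm_nonneg _)
            have := hAlip (E w) (E z)
            rwa [hEwz] at this
        _ = LA * ‖E u‖ * ‖E x‖ := by ring
    have ht2 : ‖(inner ℝ (Γt w - Γt z) (Γt x) : ℝ)‖ ≤ ‖Γt u‖ * ‖Γt x‖ := by
      rw [hGwz]
      exact norm_inner_le_norm _ _
    have ht3 : ‖(D x) (Ainv (f - D w) - Ainv (f - D z))‖ ≤
        (1 / mA) * ‖D u‖ * ‖D x‖ := by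
      calc ‖(D x) (Ainv (f - D w) - Ainv (f - D z))‖ ≤
            ‖D x‖ * ‖Ainv (f - D w) - Ainv (f - D z)‖ := (D x).le_opNorm _
        _ ≤ ‖D x‖ * ((1 / mA) * ‖(f - D w) - (f - D z)‖) := by
            apply mul_le_mul_of_nonneg_left (hAinvLip _ _) (norm_nonneg _)
        _ = (1 / mA) * ‖(f - D w) - (f - D z)‖ * ‖D x‖ := by ring
        _ = (1 / mA) * ‖D u‖ * ‖D x‖ := by
            congr 2
            have : (f - D w) - (f - D z) = -(D u) := by
              rw [hu, map_sub]; abel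
            rw [this, norm_neg]
    -- Cauchy–Schwarz style inequality
    have key : ‖E u‖ * ‖E x‖ + ‖D u‖ * ‖D x‖ + ‖Γt u‖ * ‖Γt x‖ ≤ ‖u‖ * ‖x‖ := by
      have hu2 := hnorm u
      have hx2 := hnorm x
      have hr : (0 : ℝ) ≤ ‖E u‖ * ‖E x‖ + ‖D u‖ * ‖D x‖ + ‖Γt u‖ * ‖Γt x‖ := by
        positivity
      have hs : (0 : ℝ) ≤ ‖u‖ * ‖x‖ := by positivity
      have hsq : (‖E u‖ * ‖E x‖ + ‖D u‖ * ‖D x‖ + ‖Γt u‖ * ‖Γt x‖) ^ 2 ≤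
          (‖u‖ * ‖x‖) ^ 2 := by
        have expand : (‖u‖ * ‖x‖) ^ 2 =
            (‖E u‖ ^ 2 + ‖D u‖ ^ 2 + ‖Γt u‖ ^ 2) *
            (‖E x‖ ^ 2 + ‖D x‖ ^ 2 + ‖Γt x‖ ^ 2) := by
          rw [mul_pow, hu2, hx2]
        rw [expand]
        nlinarith [sq_nonneg (‖E u‖ * ‖D x‖ - ‖D u‖ * ‖E x‖),
          sq_nonneg (‖E u‖ * ‖Γt x‖ - ‖Γt u‖ * ‖E x‖),
          sq_nonneg (‖D u‖ * ‖Γt x‖ - ‖Γt u‖ * ‖D x‖)]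
      nlinarith [hsq, hr, hs]
    set t1 := (A (E w) - A (E z)) (E x) with ht1d
    set t2 := (inner ℝ (Γt w - Γt z) (Γt x) : ℝ) with ht2d
    set t3 := (D x) (Ainv (f - D w) - Ainv (f - D z)) with ht3d
    have habs : ‖t1 + t2 - t3‖ ≤
        LA * ‖E u‖ * ‖E x‖ + ‖Γt u‖ * ‖Γt x‖ + (1 / mA) * ‖D u‖ * ‖D x‖ := by
      have e1 : ‖t1 + t2 - t3‖ ≤ ‖t1 + t2‖ + ‖t3‖ := norm_sub_le _ _
      have e2 : ‖t1 + t2‖ ≤ ‖t1‖ + ‖t2‖ := norm_add_le _ _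
      linarith [ht1, ht2, ht3]
    refine le_trans habs ?_
    have step : LA * ‖E u‖ * ‖E x‖ + ‖Γt u‖ * ‖Γt x‖ + (1 / mA) * ‖D u‖ * ‖D x‖ ≤
        M * (‖E u‖ * ‖E x‖ + ‖D u‖ * ‖D x‖ + ‖Γt u‖ * ‖Γt x‖) := by
      have p1 : (0:ℝ) ≤ ‖E u‖ * ‖E x‖ := by positivity
      have p2 : (0:ℝ) ≤ ‖D u‖ * ‖D x‖ := by positivity
      have p3 : (0:ℝ) ≤ ‖Γt u‖ * ‖Γt x‖ := by positivity
      nlinarith [mul_le_mul_of_nonneg_right hMLA p1,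
        mul_le_mul_of_nonneg_right hMmA p2,
        mul_le_mul_of_nonneg_right hM1 p3]
    refine le_trans step ?_
    rw [mul_assoc]
    exact mul_le_mul_of_nonneg_left key hM0
  · -- strong monotonicity
    intro w z
    rw [hSapp]
    set u := w - z with hu
    set m := min 1 (min mA (mA / LA ^ 2)) with hm
    have hm1 : m ≤ 1 := min_le_left _ _
    have hmmA : m ≤ mA := le_trans (min_le_right _ _) (min_le_left _ _)
    have hmL : m ≤ mA / LA ^ 2 := le_trans (min_le_right _ _) (min_le_right _ _)
    have hEwz : E w - E z = E u := (map_sub E w z).symm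
    have hGwz : Γt w - Γt z = Γt u := (map_sub Γt w z).symm
    -- term 1
    have ht1 : (A (E w) - A (E z)) (E u) ≥ mA * ‖E u‖ ^ 2 := by
      have := hAmono (E w) (E z)
      rwa [hEwz] at this
    -- term 2
    have ht2 : (inner ℝ (Γt w - Γt z) (Γt u) : ℝ) = ‖Γt u‖ ^ 2 := by
      rw [hGwz, real_inner_self_eq_norm_sq]
    -- term 3
    set a := Ainv (f - D w) with ha
    set b := Ainv (f - D z) with hb
    have hpq : (f - D w) - (f - D z) = -(D u) := by
      rw [hu, map_sub]; abel
    have hmono3 : ((f - D w) - (f - D z)) (a - b) ≥ mA * ‖a - b‖ ^ 2 := by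
      have := hAmono a b
      rwa [ha, hb, hAinv₂, hAinv₂] at this
    have ht3 : -((D u) (a - b)) ≥ mA * ‖a - b‖ ^ 2 := by
      have : ((f - D w) - (f - D z)) (a - b) = -((D u) (a - b)) := by
        rw [hpq]; simp
      linarith [hmono3, this.symm.le, this.le]
    have hDu : ‖D u‖ ≤ LA * ‖a - b‖ := by
      have := hAinvLow (f - D w) (f - D z)
      rwa [← ha, ← hb, hpq, norm_neg] at this
    have ht3' : -((D u) (a - b)) ≥ (mA / LA ^ 2) * ‖D u‖ ^ 2 := by
      have h1 : ‖D u‖ ^ 2 ≤ LA ^ 2 * ‖a - b‖ ^ 2 := by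
        nlinarith [hDu, norm_nonneg (D u), norm_nonneg (a - b), hLA]
      have h2 : (mA / LA ^ 2) * ‖D u‖ ^ 2 ≤ mA * ‖a - b‖ ^ 2 := by
        rw [div_mul_eq_mul_div, div_le_iff₀ (by positivity)]
        nlinarith [h1, hmA]
      linarith [ht3]
    -- combine
    have hnu := hnorm u
    have p1 : (0:ℝ) ≤ ‖E u‖ ^ 2 := sq_nonneg _
    have p2 : (0:ℝ) ≤ ‖D u‖ ^ 2 := sq_nonneg _
    have p3 : (0:ℝ) ≤ ‖Γt u‖ ^ 2 := sq_nonneg _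
    rw [ht2]
    nlinarith [ht1, ht3', mul_le_mul_of_nonneg_right hmmA p1,
      mul_le_mul_of_nonneg_right hmL p2, mul_le_mul_of_nonneg_right hm1 p3]
end

section
/- Let (ℓ, u₀) ∈ Y' × H and suppose u ∈ X satisfies B_e u = (ℓ, u₀). Then the pair (E u, u) ∈ Y × X solves N(E u, u) = (ℓ, g), where g ∈ X' is given by g(v) := −ℓ(E v) − ⟨u₀, Γ_0 v⟩_H; moreover, (E u, u) is the unique solution in Y × X of this equation. -/
open NormedSpace
open scoped RealInnerProductSpace

/-- If `B_e u = (ℓ, u₀)`, then `(E u, u)` is the unique solution of the system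
`N(λ, u) = (ℓ, g)` with `g(v) = −ℓ(E v) − ⟨u₀, Γ₀ v⟩_H`. -/
theorem solution_of_system
    {Y X H : Type*}
    [NormedAddCommGroup Y] [InnerProductSpace ℝ Y] [CompleteSpace Y]
    [NormedAddCommGroup X] [InnerProductSpace ℝ X] [CompleteSpace X]
    [NormedAddCommGroup H] [InnerProductSpace ℝ H] [CompleteSpace H]
    (E : X →L[ℝ] Y) (D : X →L[ℝ] StrongDual ℝ Y) (Γt : X →L[ℝ] H)
    (hnorm : ∀ x : X, ‖x‖ ^ 2 = ‖E x‖ ^ 2 + ‖D x‖ ^ 2 + ‖Γt x‖ ^ 2)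
    (A : Y → StrongDual ℝ Y) (LA mA : ℝ) (hLA : 0 < LA) (hmA : 0 < mA)
    (hAlip : ∀ w v : Y, ‖A w - A v‖ ≤ LA * ‖w - v‖)
    (hAmono : ∀ w v : Y, (A w - A v) (w - v) ≥ mA * ‖w - v‖ ^ 2)
    (Γ0 : X →L[ℝ] H)
    (hIBP : ∀ u v : X,
      (D u) (E v) + (D v) (E u) + ⟪Γ0 u, Γ0 v⟫ = ⟪Γt u, Γt v⟫)
    (N : Y × X → StrongDual ℝ Y × StrongDual ℝ X)
    (hN : ∀ p : Y × X, N p =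
      (A p.1 + D p.2,
        D.flip p.1 - (A (E p.2)).comp E -
          ((InnerProductSpace.toDual ℝ H (Γt p.2)).comp Γt)))
    (ℓ : StrongDual ℝ Y) (u₀ : H) (u : X)
    (hBe : D u + A (E u) = ℓ ∧ Γ0 u = u₀)
    (g : StrongDual ℝ X)
    (hg : ∀ v : X, g v = -(ℓ (E v)) - ⟪u₀, Γ0 v⟫) :
    N (E u, u) = (ℓ, g) ∧ ∀ p : Y × X, N p = (ℓ, g) → p = (E u, u) := by

  obtain ⟨hBe1, hBe2⟩ := hBe
  have hAE2 : ∀ v : X, (A (E u)) (E v) + (D u) (E v) = ℓ (E v) := by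
    intro v
    have := congrArg (fun f : StrongDual ℝ Y => f (E v)) hBe1
    simp only [ContinuousLinearMap.add_apply] at this
    linarith
  have key2 : D.flip (E u) - (A (E u)).comp E -
      ((InnerProductSpace.toDual ℝ H (Γt u)).comp Γt) = g := by
    ext v
    have hibp := hIBP u v
    have h1 := hAE2 v
    have hgv := hg v
    simp only [ContinuousLinearMap.sub_apply, ContinuousLinearMap.coe_comp',
      Function.comp_apply, ContinuousLinearMap.flip_apply,
      InnerProductSpace.toDual_apply_apply]
    rw [hgv, ← hBe2]
    linarith
  constructor
  · rw [hN]
    refine Prod.ext ?_ ?_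
    · simpa [add_comm] using hBe1
    · simpa using key2
  · rintro ⟨lam, w⟩ hp
    rw [hN] at hp
    have h1 : A lam + D w = ℓ := congrArg Prod.fst hp
    have h2 : D.flip lam - (A (E w)).comp E -
        ((InnerProductSpace.toDual ℝ H (Γt w)).comp Γt) = g := congrArg Prod.snd hp
    -- difference of first equations
    have hdiff1 : ∀ v : Y, (A lam) v - (A (E u)) v = (D u) v - (D w) v := by
      intro v
      have ha := congrArg (fun f : StrongDual ℝ Y => f v) h1
      have hb := congrArg (fun f : StrongDual ℝ Y => f v) hBe1
      simp only [ContinuousLinearMap.add_apply] at ha hb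
      linarith
    -- difference of second equations
    have hdiff2 : ∀ v : X, (D v) lam - (D v) (E u) =
        ((A (E w)) (E v) - (A (E u)) (E v)) + (⟪Γt w, Γt v⟫ - ⟪Γt u, Γt v⟫) := by
      intro v
      have ha := congrArg (fun f : StrongDual ℝ X => f v) h2
      have hb := congrArg (fun f : StrongDual ℝ X => f v) key2
      simp only [ContinuousLinearMap.sub_apply, ContinuousLinearMap.coe_comp',
        Function.comp_apply, ContinuousLinearMap.flip_apply,
        InnerProductSpace.toDual_apply_apply] at ha hb
      linarith
    set d : X := w - u with hd
    set μ : Y := lam - E u with hμ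
    -- (A lam - A (E u)) μ = -(D d) μ
    have hA_mu : (A lam) μ - (A (E u)) μ = -((D d) μ) := by
      have := hdiff1 μ
      have hDd : (D d) μ = (D w) μ - (D u) μ := by
        simp only [hd, hμ, map_sub, ContinuousLinearMap.sub_apply]
        ring
      linarith
    -- (D d) μ = (A(E w))(E d) - (A(E u))(E d) + ‖Γt d‖²
    have hDd_mu : (D d) μ = ((A (E w)) (E d) - (A (E u)) (E d)) + ‖Γt d‖ ^ 2 := by
      have h2d := hdiff2 d
      have hμ' : (D d) μ = (D d) lam - (D d) (E u) := by rw [hμ, map_sub]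
      have hin : ⟪Γt w, Γt d⟫ - ⟪Γt u, Γt d⟫ = ‖Γt d‖ ^ 2 := by
        rw [← inner_sub_left, ← map_sub, ← hd, real_inner_self_eq_norm_sq]
      linarith
    have hmono1 : mA * ‖μ‖ ^ 2 ≤ (A lam) μ - (A (E u)) μ := by
      have := hAmono lam (E u)
      simpa [ContinuousLinearMap.sub_apply, hμ] using this
    have hEd : E d = E w - E u := by rw [hd, map_sub]
    have hmono2 : mA * ‖E d‖ ^ 2 ≤ (A (E w)) (E d) - (A (E u)) (E d) := by
      have := hAmono (E w) (E u)
      rw [hEd]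
      simpa [ContinuousLinearMap.sub_apply] using this
    have hsum : mA * ‖μ‖ ^ 2 + mA * ‖E d‖ ^ 2 + ‖Γt d‖ ^ 2 ≤ 0 := by linarith
    have hμ0 : μ = 0 := by
      have h1' : 0 ≤ mA * ‖μ‖ ^ 2 := by positivity
      have h2' : 0 ≤ mA * ‖E d‖ ^ 2 := by positivity
      have h3' : 0 ≤ ‖Γt d‖ ^ 2 := by positivity
      have : mA * ‖μ‖ ^ 2 = 0 := by linarith
      have : ‖μ‖ ^ 2 = 0 := by
        rcases mul_eq_zero.mp this with h | h
        · exact absurd h (ne_of_gt hmA)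
        · exact h
      simpa [pow_eq_zero_iff, norm_eq_zero] using this
    have hEd0 : ‖E d‖ ^ 2 = 0 := by
      have h1' : 0 ≤ mA * ‖μ‖ ^ 2 := by positivity
      have h2' : 0 ≤ mA * ‖E d‖ ^ 2 := by positivity
      have h3' : 0 ≤ ‖Γt d‖ ^ 2 := by positivity
      have : mA * ‖E d‖ ^ 2 = 0 := by linarith
      rcases mul_eq_zero.mp this with h | h
      · exact absurd h (ne_of_gt hmA)
      · exact h
    have hΓt0 : ‖Γt d‖ ^ 2 = 0 := by
      have h1' : 0 ≤ mA * ‖μ‖ ^ 2 := by positivity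
      have h2' : 0 ≤ mA * ‖E d‖ ^ 2 := by positivity
      have h3' : 0 ≤ ‖Γt d‖ ^ 2 := by positivity
      linarith
    have hlam : lam = E u := by
      have := hμ0
      rw [hμ] at this
      exact sub_eq_zero.mp this
    have hDd0 : D d = 0 := by
      ext v
      have := hdiff1 v
      rw [hlam] at this
      have hDdv : (D d) v = (D w) v - (D u) v := by
        simp only [hd, map_sub, ContinuousLinearMap.sub_apply]
      simp only [ContinuousLinearMap.zero_apply]
      linarith
    have hd0 : d = 0 := by
      have hn := hnorm d
      rw [hDd0] at hn
      simp only [norm_zero] at hn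
      have : ‖d‖ ^ 2 = 0 := by linarith
      simpa [pow_eq_zero_iff, norm_eq_zero] using this
    have hw : w = u := by
      have := hd0; rw [hd] at this; exact sub_eq_zero.mp this
    exact Prod.ext hlam hw
end

section
/- For every z ∈ X with E z ∈ Y^δ it holds that ‖Γ_0 z‖_H ≤ ‖z‖_{X,δ}. In particular, taking Y^δ = Y, every z ∈ X satisfies ‖Γ_0 z‖_H ≤ ‖z‖_X. -/
open NormedSpace
open scoped RealInnerProductSpace

lemma key_sq {H : Type*} [NormedAddCommGroup H] [InnerProductSpace ℝ H]
    {a b c g t : ℝ} (hkey : 2 * a + g ^ 2 = t ^ 2)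
    (habs : |a| ≤ c * b) : g ^ 2 ≤ b ^ 2 + c ^ 2 + t ^ 2 := by
  nlinarith [abs_nonneg a, neg_abs_le a, sq_nonneg (b - c)]

/-- For `z ∈ X` with `E z ∈ Y^δ` it holds that `‖Γ₀ z‖_H ≤ ‖z‖_{X,δ}`;
in particular (taking `Y^δ = Y`), `‖Γ₀ z‖_H ≤ ‖z‖_X` for all `z ∈ X`. -/
theorem initial_trace_bound
    {Y X H : Type*}
    [NormedAddCommGroup Y] [InnerProductSpace ℝ Y] [CompleteSpace Y]
    [NormedAddCommGroup X] [InnerProductSpace ℝ X] [CompleteSpace X]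
    [NormedAddCommGroup H] [InnerProductSpace ℝ H] [CompleteSpace H]
    (E : X →L[ℝ] Y) (D : X →L[ℝ] StrongDual ℝ Y) (Γt : X →L[ℝ] H)
    (hnorm : ∀ x : X, ‖x‖ ^ 2 = ‖E x‖ ^ 2 + ‖D x‖ ^ 2 + ‖Γt x‖ ^ 2)
    (Γ0 : X →L[ℝ] H)
    (hIBP : ∀ u v : X,
      (D u) (E v) + (D v) (E u) + ⟪Γ0 u, Γ0 v⟫ = ⟪Γt u, Γt v⟫)
    (Yδ : Submodule ℝ Y) (hYδ : IsClosed (Yδ : Set Y)) :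
    (∀ z : X, E z ∈ Yδ →
      ‖Γ0 z‖ ≤ Real.sqrt
        (‖E z‖ ^ 2 + ‖(D z).comp Yδ.subtypeL‖ ^ 2 + ‖Γt z‖ ^ 2)) ∧
    (∀ z : X, ‖Γ0 z‖ ≤ ‖z‖) := by
  have hkey : ∀ z : X, 2 * (D z) (E z) + ‖Γ0 z‖ ^ 2 = ‖Γt z‖ ^ 2 := by
    intro z
    have := hIBP z z
    rw [real_inner_self_eq_norm_sq, real_inner_self_eq_norm_sq] at this
    linarith
  constructor
  · intro z hz
    have habs : |(D z) (E z)| ≤ ‖(D z).comp Yδ.subtypeL‖ * ‖E z‖ := by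
      have : (D z) (E z) = ((D z).comp Yδ.subtypeL) ⟨E z, hz⟩ := rfl
      rw [this]
      calc |((D z).comp Yδ.subtypeL) ⟨E z, hz⟩|
          ≤ ‖(D z).comp Yδ.subtypeL‖ * ‖(⟨E z, hz⟩ : Yδ)‖ :=
            ((D z).comp Yδ.subtypeL).le_opNorm _
        _ = ‖(D z).comp Yδ.subtypeL‖ * ‖E z‖ := rfl
    have hsq : ‖Γ0 z‖ ^ 2 ≤ ‖E z‖ ^ 2 + ‖(D z).comp Yδ.subtypeL‖ ^ 2 + ‖Γt z‖ ^ 2 :=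
      key_sq (H := H) (hkey z) habs
    have h0 : (0:ℝ) ≤ ‖Γ0 z‖ := norm_nonneg _
    exact (Real.le_sqrt h0 (by positivity)).mpr hsq
  · intro z
    have habs : |(D z) (E z)| ≤ ‖D z‖ * ‖E z‖ := (D z).le_opNorm _
    have hsq : ‖Γ0 z‖ ^ 2 ≤ ‖E z‖ ^ 2 + ‖D z‖ ^ 2 + ‖Γt z‖ ^ 2 :=
      key_sq (H := H) (hkey z) habs
    rw [← hnorm z] at hsq
    nlinarith [norm_nonneg (Γ0 z), norm_nonneg z]
end

section
/- For every z ∈ X with E z ∈ Y^δ it holds that ‖z‖_{X,δ}² = ‖(D z + R_Y(E z))|_{Y^δ}‖_{(Y^δ)'}² + ‖Γ_0 z‖_H². -/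
open NormedSpace
open scoped RealInnerProductSpace

/-- The inf-sup identity: for `z ∈ X` with `E z ∈ Y^δ`,
`‖z‖_{X,δ}² = ‖(D z + R_Y (E z))|_{Y^δ}‖_{(Y^δ)'}² + ‖Γ₀ z‖_H²`. -/
theorem inf_sup_identity
    {Y X H : Type*}
    [NormedAddCommGroup Y] [InnerProductSpace ℝ Y] [CompleteSpace Y]
    [NormedAddCommGroup X] [InnerProductSpace ℝ X] [CompleteSpace X]
    [NormedAddCommGroup H] [InnerProductSpace ℝ H] [CompleteSpace H]
    (E : X →L[ℝ] Y) (D : X →L[ℝ] StrongDual ℝ Y) (Γt : X →L[ℝ] H)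
    (hnorm : ∀ x : X, ‖x‖ ^ 2 = ‖E x‖ ^ 2 + ‖D x‖ ^ 2 + ‖Γt x‖ ^ 2)
    (Γ0 : X →L[ℝ] H)
    (hIBP : ∀ u v : X,
      (D u) (E v) + (D v) (E u) + ⟪Γ0 u, Γ0 v⟫ = ⟪Γt u, Γt v⟫)
    (Yδ : Submodule ℝ Y) (hYδ : IsClosed (Yδ : Set Y)) :
    ∀ z : X, E z ∈ Yδ →
      ‖E z‖ ^ 2 + ‖(D z).comp Yδ.subtypeL‖ ^ 2 + ‖Γt z‖ ^ 2
        = ‖(D z + InnerProductSpace.toDual ℝ Y (E z)).comp Yδ.subtypeL‖ ^ 2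
          + ‖Γ0 z‖ ^ 2 := by
  intro z hz
  haveI : CompleteSpace Yδ := hYδ.completeSpace_coe
  set φ : StrongDual ℝ Yδ := (D z).comp Yδ.subtypeL with hφdef
  set ψ : StrongDual ℝ Yδ :=
    ((InnerProductSpace.toDual ℝ Y (E z) : StrongDual ℝ Y)).comp Yδ.subtypeL with hψdef
  have hcomp : (D z + InnerProductSpace.toDual ℝ Y (E z)).comp Yδ.subtypeL = φ + ψ := by
    ext w; simp [hφdef, hψdef]
  set T := InnerProductSpace.toDual ℝ Yδ with hT
  have hψeq : ψ = T ⟨E z, hz⟩ := by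
    ext w
    show ⟪E z, (w : Y)⟫ = ⟪(⟨E z, hz⟩ : Yδ), w⟫
    rfl
  have hψvec : T.symm ψ = ⟨E z, hz⟩ := by
    rw [hψeq, LinearIsometryEquiv.symm_apply_apply]
  have key : ⟪T.symm φ, T.symm ψ⟫ = (D z) (E z) := by
    rw [hψvec]
    exact InnerProductSpace.toDual_symm_apply (𝕜 := ℝ) (y := φ)
      (x := (⟨E z, hz⟩ : Yδ))
  have nφ : ‖φ‖ = ‖T.symm φ‖ := (T.symm.norm_map φ).symm
  have nψs : ‖T.symm ψ‖ = ‖E z‖ := by rw [hψvec]; rfl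
  have nsum : ‖φ + ψ‖ = ‖T.symm φ + T.symm ψ‖ := by
    rw [← map_add]; exact (T.symm.norm_map _).symm
  have expand : ‖T.symm φ + T.symm ψ‖ ^ 2
      = ‖T.symm φ‖ ^ 2 + 2 * ⟪T.symm φ, T.symm ψ⟫ + ‖T.symm ψ‖ ^ 2 := by
    have := norm_add_sq_real (T.symm φ) (T.symm ψ)
    linarith
  have hibp := hIBP z z
  rw [real_inner_self_eq_norm_sq, real_inner_self_eq_norm_sq] at hibp
  rw [hcomp, nsum, expand, key, nφ, nψs]
  linarith
end

section
/- If u, ũ ∈ X satisfy B_e u = (ℓ, u₀) and B_e ũ = (ℓ̃, ũ₀) for data (ℓ, u₀), (ℓ̃, ũ₀) ∈ Y' × H, then ‖u − ũ‖_X ≤ (1/m_S)·((1 + 1/m_A)·‖ℓ − ℓ̃‖_{Y'} + ‖u₀ − ũ₀‖_H). In particular, B_e is injective and its inverse is Lipschitz continuous with constant L_{B_e⁻¹} := (1/m_S)(1 + 1/m_A). -/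
open NormedSpace
open scoped RealInnerProductSpace

lemma le_of_sq_le_sq'' {a b : ℝ} (h : a^2 ≤ b^2) (hb : 0 ≤ b) : a ≤ b :=
  calc a ≤ |a| := le_abs_self a
  _ = Real.sqrt (a^2) := (Real.sqrt_sq_eq_abs a).symm
  _ ≤ Real.sqrt (b^2) := Real.sqrt_le_sqrt h
  _ = b := Real.sqrt_sq hb

set_option maxHeartbeats 1600000 in
lemma real_key (mA LA M dd ee hh q : ℝ) (hmA : 0 < mA)
    (hdd : 0 ≤ dd) (hee : 0 ≤ ee) (hhh : 0 ≤ hh) (hq : 0 ≤ q)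
    (hM1 : 1 ≤ M) (hM2 : 1 ≤ mA * M) (hM3 : LA^2 ≤ mA * M)
    (hq2 : q^2 ≤ (1 - 2*mA + LA^2) * ee^2)
    (hC1 : 2*mA*ee^2 ≤ 2*dd*ee + hh^2) :
    (dd + q)^2 + hh^2 ≤ (M * ((1 + 1/mA)*dd + hh))^2 := by
  set s := Real.sqrt (max 0 (1 - 2*mA + LA^2)) with hs_def
  have hs : 0 ≤ s := Real.sqrt_nonneg _
  have hs2 : s^2 = max 0 (1 - 2*mA + LA^2) := Real.sq_sqrt (le_max_left _ _)
  set r := Real.sqrt (2*mA) with hr_def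
  have hr : 0 ≤ r := Real.sqrt_nonneg _
  have hr2 : r^2 = 2*mA := Real.sq_sqrt (by positivity)
  have hB : s^2 ≤ 2*mA*(M^2 - 1) := by
    rw [hs2]
    apply max_le
    · nlinarith
    · nlinarith [mul_le_mul_of_nonneg_right hM2 (le_trans zero_le_one hM1),
        mul_le_mul_of_nonneg_right hM3 (le_trans zero_le_one hM1)]
  have hA : mA + s ≤ M*(mA+1) := by
    have hc : 0 ≤ M*(mA+1) - mA := by nlinarith
    have h2 : s^2 ≤ (M*(mA+1) - mA)^2 := by
      nlinarith [hB, sq_nonneg (mA*(M-1) - 1)]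
    have := le_of_sq_le_sq'' h2 hc
    linarith
  have hs_rM : s ≤ r*M := by
    refine le_of_sq_le_sq'' ?_ (by positivity)
    nlinarith [hB, hr2]
  have hq_se : q ≤ s * ee := by
    refine le_of_sq_le_sq'' ?_ (by positivity)
    calc q^2 ≤ (1 - 2*mA + LA^2) * ee^2 := hq2
    _ ≤ (max 0 (1 - 2*mA + LA^2)) * ee^2 := by
        apply mul_le_mul_of_nonneg_right (le_max_right _ _) (by positivity)
    _ = (s*ee)^2 := by rw [mul_pow, hs2]
  have hEe : 2*mA*ee ≤ 2*dd + r*hh := by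
    have h2 : (2*mA*ee - dd)^2 ≤ (dd + r*hh)^2 := by
      nlinarith [hC1, hr2, mul_nonneg (mul_nonneg hr hdd) hhh]
    have := le_of_sq_le_sq'' h2 (by positivity)
    linarith
  have hP : mA*q ≤ s*dd + (s*r/2)*hh := by
    nlinarith [mul_le_mul_of_nonneg_left hq_se hmA.le, mul_le_mul_of_nonneg_left hEe hs]
  have hPn : 0 ≤ s*dd + (s*r/2)*hh := by positivity
  have h1 : (mA*q)^2 ≤ (s*dd + (s*r/2)*hh)^2 := pow_le_pow_left₀ (by positivity) hP 2
  have h2 : 2*mA*dd*(mA*q) ≤ 2*mA*dd*(s*dd + (s*r/2)*hh) :=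
    mul_le_mul_of_nonneg_left hP (by positivity)
  have h3 : (mA+s)^2 ≤ (M*(mA+1))^2 := pow_le_pow_left₀ (by positivity) hA 2
  have h4 : (mA+s)*s ≤ (M*(mA+1))*(r*M) :=
    mul_le_mul hA hs_rM hs (by positivity)
  have h4' : (mA+s)*(s*r) ≤ 2*mA*(M^2*(mA+1)) := by
    calc (mA+s)*(s*r) = (mA+s)*s*r := by ring
    _ ≤ M*(mA+1)*(r*M)*r := mul_le_mul_of_nonneg_right h4 hr
    _ = M^2*(mA+1)*r^2 := by ring
    _ = 2*mA*(M^2*(mA+1)) := by rw [hr2]; ring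
  have hB' : (s*r/2)^2 ≤ mA^2*(M^2-1) := by
    calc (s*r/2)^2 = s^2 * r^2 / 4 := by ring
    _ ≤ (2*mA*(M^2-1)) * r^2 / 4 := by
        have : 0 ≤ r^2 := sq_nonneg r
        nlinarith [mul_le_mul_of_nonneg_right hB (sq_nonneg r)]
    _ = (2*mA*(M^2-1)) * (2*mA) / 4 := by rw [hr2]
    _ = mA^2*(M^2-1) := by ring
  have c1 := mul_le_mul_of_nonneg_right h3 (sq_nonneg dd)
  have c2 := mul_le_mul_of_nonneg_right h4' (mul_nonneg hdd hhh)
  have c3 := mul_le_mul_of_nonneg_right hB' (sq_nonneg hh)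
  have hgoal : ((dd+q)^2 + hh^2) * mA^2 ≤ (M*((mA+1)*dd + mA*hh))^2 := by
    nlinarith [h1, h2, c1, c2, c3]
  have hrw : M * ((1 + 1/mA)*dd + hh) = M*((mA+1)*dd + mA*hh) / mA := by
    rw [mul_div_assoc]
    congr 1
    rw [eq_div_iff hmA.ne']
    field_simp
  rw [hrw, div_pow, le_div_iff₀ (by positivity)]
  exact hgoal

set_option maxHeartbeats 1600000 in
/-- Lipschitz continuous dependence of the solution of the IVP on the data:
if `B_e u = (ℓ, u₀)` and `B_e u' = (ℓ', u₀')`, then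
`‖u − u'‖_X ≤ (1/m_S)·((1 + 1/m_A)·‖ℓ − ℓ'‖_{Y'} + ‖u₀ − u₀'‖_H)`. -/
theorem Be_inverse_lipschitz
    {Y X H : Type*}
    [NormedAddCommGroup Y] [InnerProductSpace ℝ Y] [CompleteSpace Y]
    [NormedAddCommGroup X] [InnerProductSpace ℝ X] [CompleteSpace X]
    [NormedAddCommGroup H] [InnerProductSpace ℝ H] [CompleteSpace H]
    (E : X →L[ℝ] Y) (D : X →L[ℝ] StrongDual ℝ Y) (Γt : X →L[ℝ] H)
    (hnorm : ∀ x : X, ‖x‖ ^ 2 = ‖E x‖ ^ 2 + ‖D x‖ ^ 2 + ‖Γt x‖ ^ 2)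
    (A : Y → StrongDual ℝ Y) (LA mA : ℝ) (hLA : 0 < LA) (hmA : 0 < mA)
    (hAlip : ∀ w v : Y, ‖A w - A v‖ ≤ LA * ‖w - v‖)
    (hAmono : ∀ w v : Y, (A w - A v) (w - v) ≥ mA * ‖w - v‖ ^ 2)
    (Γ0 : X →L[ℝ] H)
    (hIBP : ∀ u v : X,
      (D u) (E v) + (D v) (E u) + ⟪Γ0 u, Γ0 v⟫ = ⟪Γt u, Γt v⟫)
    (mS : ℝ) (hmS : mS = min 1 (min mA (mA / LA ^ 2)))
    (u u' : X) (ℓ ℓ' : StrongDual ℝ Y) (u₀ u₀' : H)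
    (hu : D u + A (E u) = ℓ ∧ Γ0 u = u₀)
    (hu2 : D u' + A (E u') = ℓ' ∧ Γ0 u' = u₀') :
    ‖u - u'‖ ≤ (1 / mS) * ((1 + 1 / mA) * ‖ℓ - ℓ'‖ + ‖u₀ - u₀'‖) := by
  obtain ⟨hu1, hu0⟩ := hu
  obtain ⟨hv1, hv0⟩ := hu2
  set z : X := u - u' with hz
  set δ : StrongDual ℝ Y := ℓ - ℓ' with hδ
  set a : StrongDual ℝ Y := A (E u) - A (E u') with ha
  have hEz : E u - E u' = E z := (map_sub E u u').symm
  have hDz : D z = δ - a := by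
    rw [hz, map_sub, eq_sub_of_add_eq hu1, eq_sub_of_add_eq hv1, hδ, ha]
    abel
  have hΓ0z : Γ0 z = u₀ - u₀' := by rw [hz, map_sub, hu0, hv0]
  have hmono : mA * ‖E z‖ ^ 2 ≤ a (E z) := by
    have h := hAmono (E u) (E u')
    rw [hEz] at h
    exact h
  have hlip : ‖a‖ ≤ LA * ‖E z‖ := by
    have h := hAlip (E u) (E u')
    rwa [hEz] at h
  have hDzE : (D z) (E z) = δ (E z) - a (E z) := by
    rw [hDz]; simp [ContinuousLinearMap.sub_apply]
  have hGt : ‖Γt z‖ ^ 2 = 2 * (D z) (E z) + ‖u₀ - u₀'‖ ^ 2 := by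
    have h := hIBP z z
    rw [hΓ0z, real_inner_self_eq_norm_sq, real_inner_self_eq_norm_sq] at h
    linarith
  set R := (InnerProductSpace.toDual ℝ Y).symm with hR
  have hRapp : ∀ (w : StrongDual ℝ Y) (v : Y), ⟪R w, v⟫ = w v := fun w v =>
    InnerProductSpace.toDual_symm_apply
  have hRnorm : ∀ w : StrongDual ℝ Y, ‖R w‖ = ‖w‖ := fun w =>
    LinearIsometryEquiv.norm_map _ w
  have hwnorm : ‖E z + R (D z)‖ ^ 2 = ‖E z‖ ^ 2 + 2 * (D z) (E z) + ‖D z‖ ^ 2 := by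
    rw [norm_add_sq_real, real_inner_comm, hRapp, hRnorm]
  have hznorm : ‖z‖ ^ 2 = ‖E z + R (D z)‖ ^ 2 + ‖u₀ - u₀'‖ ^ 2 := by
    have h := hnorm z
    linarith [hwnorm, hGt, h]
  have hsplit : E z + R (D z) = R δ + (E z - R a) := by
    rw [hDz, LinearIsometryEquiv.map_sub]
    abel
  have hqle : ‖E z + R (D z)‖ ≤ ‖δ‖ + ‖E z - R a‖ := by
    rw [hsplit]
    calc ‖R δ + (E z - R a)‖ ≤ ‖R δ‖ + ‖E z - R a‖ := norm_add_le _ _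
    _ = ‖δ‖ + ‖E z - R a‖ := by rw [hRnorm]
  have hq2 : ‖E z - R a‖ ^ 2 = ‖E z‖ ^ 2 - 2 * a (E z) + ‖a‖ ^ 2 := by
    rw [norm_sub_sq_real, real_inner_comm, hRapp, hRnorm]
  have hq2' : ‖E z - R a‖ ^ 2 ≤ (1 - 2 * mA + LA ^ 2) * ‖E z‖ ^ 2 := by
    nlinarith [hq2, hmono, hlip, norm_nonneg a, norm_nonneg (E z)]
  have hδb : δ (E z) ≤ ‖δ‖ * ‖E z‖ :=
    ((le_abs_self _).trans_eq (Real.norm_eq_abs _).symm).trans (δ.le_opNorm (E z))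
  have hC1 : 2 * mA * ‖E z‖ ^ 2 ≤ 2 * ‖δ‖ * ‖E z‖ + ‖u₀ - u₀'‖ ^ 2 := by
    have h0 : (0:ℝ) ≤ ‖Γt z‖ ^ 2 := sq_nonneg _
    nlinarith [hGt, hDzE, hmono, hδb]
  have hmS0 : 0 < mS := by
    rw [hmS]; exact lt_min one_pos (lt_min hmA (by positivity))
  have hmS1 : mS ≤ 1 := by rw [hmS]; exact min_le_left _ _
  have hmSmA : mS ≤ mA := by
    rw [hmS]; exact le_trans (min_le_right _ _) (min_le_left _ _)
  have hmSL : mS ≤ mA / LA ^ 2 := by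
    rw [hmS]; exact le_trans (min_le_right _ _) (min_le_right _ _)
  have hM1 : 1 ≤ 1 / mS := one_le_one_div hmS0 hmS1
  have hM2 : 1 ≤ mA * (1 / mS) := by
    rw [mul_one_div]
    exact (one_le_div hmS0).2 hmSmA
  have hM3 : LA ^ 2 ≤ mA * (1 / mS) := by
    rw [mul_one_div, le_div_iff₀ hmS0]
    have := (le_div_iff₀ (by positivity : (0:ℝ) < LA ^ 2)).1 hmSL
    linarith
  have hkey := real_key mA LA (1 / mS) ‖δ‖ ‖E z‖ ‖u₀ - u₀'‖ ‖E z - R a‖ hmA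
    (norm_nonneg _) (norm_nonneg _) (norm_nonneg _) (norm_nonneg _)
    hM1 hM2 hM3 hq2' hC1
  have h1 : ‖E z + R (D z)‖ ^ 2 ≤ (‖δ‖ + ‖E z - R a‖) ^ 2 :=
    pow_le_pow_left₀ (norm_nonneg _) hqle 2
  have hz2 : ‖z‖ ^ 2 ≤ (1 / mS * ((1 + 1 / mA) * ‖δ‖ + ‖u₀ - u₀'‖)) ^ 2 := by
    linarith [hznorm, hkey, h1]
  exact le_of_sq_le_sq'' hz2 (by positivity)
end

section
/- It holds that ‖λ^δ − E u^δ‖_Y + (√(1 + L_A²)/m_A)·‖u₀ − Γ_0 u^δ‖_H ≤ 2·C₁·(√(1 + L_A²)/m_A)·inf_{ū ∈ X^δ} ‖u − ū‖_X, where C₁ := 1 + (1/m_S)·(1 + √((1 + L_A²)(1 + 1/m_A²))). -/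
open NormedSpace
open scoped RealInnerProductSpace

private lemma sq_le_imp {a b : ℝ} (ha : 0 ≤ a) (hb : 0 ≤ b) (h : a^2 ≤ b^2) : a ≤ b := by
  nlinarith

private lemma cancel_mul {m n C : ℝ} (hm : 0 < m) (hn : 0 ≤ n) (hC : 0 ≤ C)
    (h : m * n^2 ≤ C * n) : m * n ≤ C := by
  rcases hn.eq_or_lt with h0 | h0
  · rw [← h0]; simpa using hC
  · have h1 : (m*n)*n ≤ C*n := by nlinarith
    exact le_of_mul_le_mul_right h1 h0

private lemma zarantonello {W : Type*} [NormedAddCommGroup W] [InnerProductSpace ℝ W]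
    [CompleteSpace W] (B : W → W) (LB mB : ℝ) (hmB : 0 < mB)
    (hlip : ∀ x y, ‖B x - B y‖ ≤ LB * ‖x - y‖)
    (hmono : ∀ x y, mB * ‖x - y‖^2 ≤ ⟪B x - B y, x - y⟫) (b : W) :
    ∃ x, B x = b := by
  rcases subsingleton_or_nontrivial W with hW | hW
  · exact ⟨b, Subsingleton.elim _ _⟩
  obtain ⟨x0, hx0⟩ := exists_ne (0 : W)
  have hx0n : 0 < ‖x0‖ := norm_pos_iff.mpr hx0
  have hmL : mB ≤ LB := by
    have h1 := hmono x0 0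
    have h2 := hlip x0 0
    have h3 : ⟪B x0 - B 0, x0 - 0⟫ ≤ ‖B x0 - B 0‖ * ‖x0 - 0‖ := real_inner_le_norm _ _
    simp only [sub_zero] at h1 h2 h3
    nlinarith [mul_le_mul_of_nonneg_right h2 (norm_nonneg x0), mul_pos hx0n hx0n]
  have hLB : 0 < LB := lt_of_lt_of_le hmB hmL
  set ρ := mB / LB^2 with hρ
  have hρpos : 0 < ρ := div_pos hmB (by positivity)
  set T : W → W := fun x => x - ρ • (B x - b) with hT
  set k := Real.sqrt (1 - mB^2/LB^2) with hk
  have hfrac : 0 < mB^2/LB^2 := by positivity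
  have hfrac1 : mB^2/LB^2 ≤ 1 := by
    rw [div_le_one (by positivity)]; nlinarith
  have hknn : 0 ≤ k := Real.sqrt_nonneg _
  have hk2 : k^2 = 1 - mB^2/LB^2 := Real.sq_sqrt (by linarith)
  have hk1 : k < 1 := by nlinarith
  have hcontr : ∀ x y : W, ‖T x - T y‖ ≤ k * ‖x - y‖ := by
    intro x y
    have hTsub : T x - T y = (x - y) - ρ • (B x - B y) := by
      simp only [hT, smul_sub]
      abel
    have hnsq : ‖T x - T y‖^2 ≤ (k * ‖x - y‖)^2 := by
      rw [hTsub, norm_sub_sq_real]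
      have hin : ⟪x - y, ρ • (B x - B y)⟫ = ρ * ⟪B x - B y, x - y⟫ := by
        rw [real_inner_smul_right, real_inner_comm]
      have hmono' := hmono x y
      have hnn : ‖ρ • (B x - B y)‖^2 ≤ ρ^2 * (LB * ‖x - y‖)^2 := by
        rw [norm_smul, Real.norm_eq_abs, abs_of_pos hρpos, mul_pow]
        have h9 := hlip x y
        have hsq : ‖B x - B y‖^2 ≤ (LB*‖x-y‖)^2 := by nlinarith [norm_nonneg (B x - B y)]
        exact mul_le_mul_of_nonneg_left hsq (sq_nonneg ρ)
      have hk2' : k^2 = 1 - 2*ρ*mB + ρ^2*LB^2 := by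
        rw [hk2, hρ]; field_simp; ring
      rw [mul_pow]
      nlinarith [norm_nonneg (x - y), sq_nonneg (‖x-y‖)]
    exact sq_le_imp (norm_nonneg _) (by positivity) hnsq
  set K : NNReal := ⟨k, hknn⟩ with hK
  have hcw : ContractingWith K T := by
    constructor
    · exact_mod_cast hk1
    · apply LipschitzWith.of_dist_le_mul
      intro x y
      rw [dist_eq_norm, dist_eq_norm]
      exact hcontr x y
  have hfix := ContractingWith.fixedPoint_isFixedPt hcw
  set x := ContractingWith.fixedPoint T hcw with hx
  refine ⟨x, ?_⟩
  have : x - ρ • (B x - b) = x := hfix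
  have h0 : ρ • (B x - b) = 0 := by
    have := sub_eq_self.mp this
    exact this
  rcases smul_eq_zero.mp h0 with h | h
  · exact absurd h (ne_of_gt hρpos)
  · exact sub_eq_zero.mp h

set_option maxHeartbeats 2000000 in
/-- Bound on `‖λ^δ − E u^δ‖_Y` plus the weighted initial trace error by the
best approximation error from `X^δ`. -/
theorem lambda_minus_u_bound
    {Y X H : Type*}
    [NormedAddCommGroup Y] [InnerProductSpace ℝ Y] [CompleteSpace Y]
    [NormedAddCommGroup X] [InnerProductSpace ℝ X] [CompleteSpace X]
    [NormedAddCommGroup H] [InnerProductSpace ℝ H] [CompleteSpace H]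
    (E : X →L[ℝ] Y) (D : X →L[ℝ] StrongDual ℝ Y) (Γt : X →L[ℝ] H)
    (hnorm : ∀ x : X, ‖x‖ ^ 2 = ‖E x‖ ^ 2 + ‖D x‖ ^ 2 + ‖Γt x‖ ^ 2)
    (A : Y → StrongDual ℝ Y) (LA mA : ℝ) (hLA : 0 < LA) (hmA : 0 < mA)
    (hAlip : ∀ w v : Y, ‖A w - A v‖ ≤ LA * ‖w - v‖)
    (hAmono : ∀ w v : Y, (A w - A v) (w - v) ≥ mA * ‖w - v‖ ^ 2)
    (Γ0 : X →L[ℝ] H)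
    (hIBP : ∀ u v : X,
      (D u) (E v) + (D v) (E u) + ⟪Γ0 u, Γ0 v⟫ = ⟪Γt u, Γt v⟫)
    (Yδ : Submodule ℝ Y) (hYδ : IsClosed (Yδ : Set Y))
    (Xδ : Submodule ℝ X) (hXδ : IsClosed (Xδ : Set X))
    (hEXδ : ∀ x ∈ Xδ, E x ∈ Yδ)
    (ℓ : StrongDual ℝ Y) (u₀ : H) (u : X)
    (hu : D u + A (E u) = ℓ ∧ Γ0 u = u₀)
    (lamδ : Y) (uδ : X) (hlamδ : lamδ ∈ Yδ) (huδ : uδ ∈ Xδ)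
    (hGal₁ : ∀ v ∈ Yδ, (A lamδ) v + (D uδ) v = ℓ v)
    (hGal₂ : ∀ w ∈ Xδ, (D w) lamδ - (A (E uδ)) (E w) - ⟪Γt uδ, Γt w⟫
        = -(ℓ (E w)) - ⟪u₀, Γ0 w⟫)
    (mS C₁ : ℝ)
    (hmS : mS = min 1 (min mA (mA / LA ^ 2)))
    (hC₁ : C₁ = 1 + (1 / mS) * (1 + Real.sqrt ((1 + LA ^ 2) * (1 + 1 / mA ^ 2)))) :
    ‖lamδ - E uδ‖ + (Real.sqrt (1 + LA ^ 2) / mA) * ‖u₀ - Γ0 uδ‖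
      ≤ 2 * C₁ * (Real.sqrt (1 + LA ^ 2) / mA) * ⨅ z : Xδ, ‖u - (z : X)‖ := by
  obtain ⟨hℓ, hu₀⟩ := hu
  haveI : CompleteSpace Yδ := hYδ.completeSpace_coe
  set α := Real.sqrt (1 + LA^2) with hα
  have hα2 : α^2 = 1 + LA^2 := Real.sq_sqrt (by positivity)
  have hαpos : 0 < α := Real.sqrt_pos.mpr (by positivity)
  set K := Real.sqrt ((1 + LA^2) * (1 + 1/mA^2)) with hKdef
  have hKnn : 0 ≤ K := Real.sqrt_nonneg _
  have hmSpos : 0 < mS := by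
    rw [hmS]; exact lt_min one_pos (lt_min hmA (by positivity))
  have hmS1 : mS ≤ 1 := by rw [hmS]; exact min_le_left _ _
  have hmSmA : mS ≤ mA := le_trans (by rw [hmS]; exact min_le_right _ _) (min_le_left _ _)
  have hmSLA : mS ≤ mA / LA^2 :=
    le_trans (by rw [hmS]; exact min_le_right _ _) (min_le_right _ _)
  have hC₁pos : 0 < C₁ := by
    rw [hC₁]; positivity
  have hcpos : 0 < α / mA := div_pos hαpos hmA
  have hTotPos : 0 < 2 * C₁ * (α/mA) := by positivity
  -- the Riesz map on the subspace
  set R : StrongDual ℝ Y → Yδ :=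
    fun f => (InnerProductSpace.toDual ℝ Yδ).symm (f.comp Yδ.subtypeL) with hR
  have hRapp : ∀ (f : StrongDual ℝ Y) (v : Yδ), ⟪R f, v⟫ = f (v : Y) := by
    intro f v
    simp [hR, InnerProductSpace.toDual_symm_apply]
  have hRnorm : ∀ f : StrongDual ℝ Y, ‖R f‖ ≤ ‖f‖ := by
    intro f
    have h1 : ‖R f‖ = ‖f.comp Yδ.subtypeL‖ :=
      (InnerProductSpace.toDual ℝ Yδ).symm.norm_map _
    rw [h1]
    refine ContinuousLinearMap.opNorm_le_bound _ (norm_nonneg f) ?_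
    intro v
    simpa using f.le_opNorm (v : Y)
  have hEvalAbs : ∀ (f : StrongDual ℝ Y) (y : Y), y ∈ Yδ → |f y| ≤ ‖R f‖ * ‖y‖ := by
    intro f y hy
    have h1 := hRapp f ⟨y, hy⟩
    have h2 := abs_real_inner_le_norm (R f) (⟨y, hy⟩ : Yδ)
    rw [h1] at h2
    exact h2
  have hRsub : ∀ f g : StrongDual ℝ Y, R f - R g = R (f - g) := by
    intro f g
    simp only [hR]
    rw [ContinuousLinearMap.sub_comp, map_sub]
  have happ : ∀ v : Y, ℓ v = D u v + A (E u) v := by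
    intro v; rw [← hℓ]; simp
  -- existence of a discrete lifted solution lb for datum ℓ - D ub, for each ub
  have key : ∀ w : Xδ, ‖lamδ - E uδ‖ + (α/mA) * ‖u₀ - Γ0 uδ‖
      ≤ 2*C₁*(α/mA) * ‖u - (w : X)‖ := by
    intro ub
    set z := u - (ub : X) with hz
    set φ := uδ - (ub : X) with hφdef
    have hφmem : φ ∈ Xδ := Xδ.sub_mem huδ ub.2
    have hEφmem : E φ ∈ Yδ := hEXδ φ hφmem
    have hEubmem : E (ub : X) ∈ Yδ := hEXδ _ ub.2
    have hEuδmem : E uδ ∈ Yδ := hEXδ uδ huδ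
    -- solve the discrete lifted problem
    set B : Yδ → Yδ := fun x => R (A (x : Y)) with hB
    have hBlip : ∀ x y : Yδ, ‖B x - B y‖ ≤ LA * ‖x - y‖ := by
      intro x y
      have h1 : B x - B y = R (A (x:Y) - A (y:Y)) := hRsub _ _
      rw [h1]
      refine le_trans (hRnorm _) (le_trans (hAlip _ _) ?_)
      have : ((x - y : Yδ) : Y) = (x:Y) - (y:Y) := rfl
      rw [show ‖x - y‖ = ‖(x:Y) - (y:Y)‖ from by rw [← this]; rfl]
    have hBmono : ∀ x y : Yδ, mA * ‖x - y‖^2 ≤ ⟪B x - B y, x - y⟫ := by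
      intro x y
      have h1 : B x - B y = R (A (x:Y) - A (y:Y)) := hRsub _ _
      rw [h1, hRapp]
      have h2 := hAmono (x:Y) (y:Y)
      have h3 : ((x - y : Yδ) : Y) = (x:Y) - (y:Y) := rfl
      rw [h3]
      have h4 : ‖x - y‖ = ‖(x:Y) - (y:Y)‖ := by rw [← h3]; rfl
      rw [h4]
      exact h2
    obtain ⟨lby, hlby⟩ := zarantonello B LA mA hmA hBlip hBmono (R (ℓ - D (ub:X)))
    set lb := (lby : Y) with hlbdef
    have hlbmem : lb ∈ Yδ := lby.2
    have hlbeq : ∀ v ∈ Yδ, A lb v = ℓ v - D (ub:X) v := by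
      intro v hv
      have h1 := hRapp (A lb) ⟨v, hv⟩
      have h2 := hRapp (ℓ - D (ub:X)) ⟨v, hv⟩
      have h3 : R (A lb) = R (ℓ - D (ub:X)) := hlby
      rw [h3, h2] at h1
      simpa using h1.symm
    -- scalar quantities
    set az := ‖E z‖ with haz
    set dz := ‖R (D z)‖ with hdzdef
    set Q := ‖E φ‖ with hQ
    set Dd := ‖R (D φ)‖ with hDddef
    set T := ‖Γt φ‖ with hT
    set G := ‖Γ0 φ‖ with hG
    set g0 := ‖Γ0 z‖ with hg0
    set ζ := ‖z‖ with hζ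
    set M := Real.sqrt (Q^2 + Dd^2 + T^2) with hM
    have hM2 : M^2 = Q^2 + Dd^2 + T^2 := Real.sq_sqrt (by positivity)
    have hMnn : 0 ≤ M := Real.sqrt_nonneg _
    have hζnn : 0 ≤ ζ := norm_nonneg _
    have hζ2 : ζ^2 = az^2 + ‖D z‖^2 + ‖Γt z‖^2 := hnorm z
    have hdz : dz ≤ ‖D z‖ := hRnorm _
    -- ‖Γ0 z‖ ≤ ‖z‖
    have hg0ζ : g0 ≤ ζ := by
      have hibp := hIBP z z
      rw [real_inner_self_eq_norm_sq, real_inner_self_eq_norm_sq] at hibp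
      have habs : |D z (E z)| ≤ ‖D z‖ * az := by
        rw [← Real.norm_eq_abs]
        exact (D z).le_opNorm _
      apply sq_le_imp (norm_nonneg _) hζnn
      have h5 := abs_le.mp habs
      linarith only [hibp, h5.1, hζ2, sq_nonneg (‖D z‖ - az)]
    -- ‖Γ0 φ‖ ≤ M
    have hDφEφ : |D φ (E φ)| ≤ Dd * Q := hEvalAbs (D φ) (E φ) hEφmem
    have hGM : G ≤ M := by
      have hibp := hIBP φ φ
      rw [real_inner_self_eq_norm_sq, real_inner_self_eq_norm_sq] at hibp
      apply sq_le_imp (norm_nonneg _) hMnn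
      have h5 := abs_le.mp hDφEφ
      linarith only [hibp, h5.1, hM2, sq_nonneg (Dd - Q)]
    have hadζ : Real.sqrt (az^2 + dz^2) ≤ ζ := by
      have h1 : az^2 + dz^2 ≤ ζ^2 := by
        have h2 : dz^2 ≤ ‖D z‖^2 := pow_le_pow_left₀ (norm_nonneg _) hdz 2
        linarith only [h2, hζ2, sq_nonneg (‖Γt z‖)]
      calc Real.sqrt (az^2+dz^2) ≤ Real.sqrt (ζ^2) := Real.sqrt_le_sqrt h1
        _ = ζ := Real.sqrt_sq hζnn
    -- bound on lifted auxiliary solution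
    set nψ := ‖lb - E (ub:X)‖ with hnψ
    have hψmem : lb - E (ub:X) ∈ Yδ := Yδ.sub_mem hlbmem hEubmem
    have hEzsub : E z = E u - E (ub:X) := by rw [hz, map_sub]
    have hψbound : mA * nψ ≤ dz + LA * az := by
      have hmono := hAmono lb (E (ub:X))
      have heq : A lb (lb - E (ub:X)) - A (E (ub:X)) (lb - E (ub:X))
          = D z (lb - E (ub:X)) + (A (E u) (lb - E (ub:X)) - A (E (ub:X)) (lb - E (ub:X))) := by
        have h1 := hlbeq (lb - E (ub:X)) hψmem
        have h2 := happ (lb - E (ub:X))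
        have h3 : D z (lb - E (ub:X)) = D u (lb - E (ub:X)) - D (ub:X) (lb - E (ub:X)) := by
          have hDz : D z = D u - D (ub:X) := by rw [hz, map_sub]
          rw [hDz, ContinuousLinearMap.sub_apply]
        linarith only [h1, h2, h3]
      have h4 : (A lb - A (E (ub:X))) (lb - E (ub:X))
          = A lb (lb - E (ub:X)) - A (E (ub:X)) (lb - E (ub:X)) := by simp
      have h5 := abs_le.mp (hEvalAbs (D z) (lb - E (ub:X)) hψmem)
      have h6 : |A (E u) (lb - E (ub:X)) - A (E (ub:X)) (lb - E (ub:X))| ≤ LA * az * nψ := by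
        have h7 : A (E u) (lb - E (ub:X)) - A (E (ub:X)) (lb - E (ub:X))
            = (A (E u) - A (E (ub:X))) (lb - E (ub:X)) := by simp
        rw [h7, ← Real.norm_eq_abs]
        refine le_trans ((A (E u) - A (E (ub:X))).le_opNorm _) ?_
        have h8 : ‖A (E u) - A (E (ub:X))‖ ≤ LA * az := by
          refine le_trans (hAlip _ _) ?_
          rw [← hEzsub]
        exact mul_le_mul_of_nonneg_right h8 (norm_nonneg _)
      apply cancel_mul hmA (norm_nonneg _) (by positivity)
      linarith only [hmono, h4, heq, h5.2, (abs_le.mp h6).2]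
    -- bound Dd by ‖lamδ - lb‖
    set nσ := ‖lamδ - lb‖ with hnσ
    have hσmem : lamδ - lb ∈ Yδ := Yδ.sub_mem hlamδ hlbmem
    have hE4 : ∀ v ∈ Yδ, A lamδ v - A lb v = - D φ v := by
      intro v hv
      have h1 := hGal₁ v hv
      have h2 := hlbeq v hv
      have h3 : D φ v = D uδ v - D (ub:X) v := by
        rw [hφdef, map_sub]
        simp only [ContinuousLinearMap.sub_apply]
      linarith only [h1, h2, h3]
    have hDdσ : Dd ≤ LA * nσ := by
      have h1 := hE4 ((R (D φ)) : Y) (R (D φ)).2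
      have h2 : D φ ((R (D φ) : Yδ) : Y) = Dd^2 := by
        have h3 := hRapp (D φ) (R (D φ))
        rw [real_inner_self_eq_norm_sq] at h3
        exact h3.symm
      have h4 : |A lamδ ((R (D φ) : Yδ) : Y) - A lb ((R (D φ) : Yδ) : Y)| ≤ LA * nσ * Dd := by
        have h5 : A lamδ ((R (D φ) : Yδ) : Y) - A lb ((R (D φ) : Yδ) : Y)
            = (A lamδ - A lb) ((R (D φ) : Yδ) : Y) := by simp
        rw [h5, ← Real.norm_eq_abs]
        refine le_trans ((A lamδ - A lb).le_opNorm _) ?_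
        exact mul_le_mul (hAlip _ _) (le_of_eq rfl) (norm_nonneg _) (by positivity)
      have h6 : (1:ℝ) * Dd ≤ LA * nσ := by
        apply cancel_mul one_pos (norm_nonneg _) (by positivity)
        rw [h1] at h4
        have h8 := (abs_le.mp h4).1
        linarith only [h8, h2]
      linarith only [h6]
    have hDφσ : D φ (lamδ - lb) ≤ -((mA/LA^2) * Dd^2) := by
      have h1 := hE4 (lamδ - lb) hσmem
      have h2 := hAmono lamδ lb
      have h3 : (A lamδ - A lb) (lamδ - lb) = A lamδ (lamδ - lb) - A lb (lamδ - lb) := by simp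
      have h4 : D φ (lamδ - lb) ≤ -(mA * nσ^2) := by
        rw [h3, h1] at h2
        linarith only [h2]
      have h5 : Dd^2 ≤ LA^2 * nσ^2 := by
        calc Dd^2 ≤ (LA*nσ)^2 := pow_le_pow_left₀ (norm_nonneg _) hDdσ 2
          _ = LA^2*nσ^2 := by ring
      have h6 : (mA/LA^2) * Dd^2 ≤ mA * nσ^2 := by
        rw [div_mul_eq_mul_div, div_le_iff₀ (by positivity)]
        linarith only [mul_le_mul_of_nonneg_left h5 (le_of_lt hmA)]
      linarith only [h4, h6]
    -- E2 identity
    have hE2 : D φ lamδ - D φ (E u)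
        = A (E uδ) (E φ) - A (E u) (E φ) + (⟪Γt uδ, Γt φ⟫ - ⟪Γt u, Γt φ⟫) := by
      have h1 := hGal₂ φ hφmem
      have h2 := happ (E φ)
      have h3 := hIBP u φ
      rw [hu₀] at h3
      linarith only [h1, h2, h3]
    have htdecomp : ⟪Γt uδ, Γt φ⟫ - ⟪Γt u, Γt φ⟫ = T^2 - ⟪Γt z, Γt φ⟫ := by
      have h1 : (⟪Γt uδ, Γt φ⟫ : ℝ) - ⟪Γt u, Γt φ⟫ = ⟪Γt uδ - Γt u, Γt φ⟫ :=
        (inner_sub_left _ _ _).symm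
      have h2 : Γt uδ - Γt u = Γt φ - Γt z := by
        rw [← map_sub, ← map_sub]
        congr 1
        rw [hφdef, hz]
        abel
      rw [h1, h2, inner_sub_left, real_inner_self_eq_norm_sq, real_inner_comm]
    have hsplit : D φ lamδ - D φ (E u)
        = D φ (lamδ - lb) + D φ (lb - E (ub:X)) - D φ (E z) := by
      simp only [map_sub, hEzsub]
      ring
    have hibpφz := hIBP φ z
    -- the A-monotone split
    have hEφsub : E φ = E uδ - E (ub:X) := by rw [hφdef, map_sub]
    have hAsplit : mA * Q^2 - (A (E u) (E φ) - A (E (ub:X)) (E φ))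
        ≤ A (E uδ) (E φ) - A (E u) (E φ) := by
      have h1 := hAmono (E uδ) (E (ub:X))
      rw [← hEφsub] at h1
      have h3 : (A (E uδ) - A (E (ub:X))) (E φ) = A (E uδ) (E φ) - A (E (ub:X)) (E φ) := by simp
      rw [h3] at h1
      linarith only [h1]
    have habsA : |A (E u) (E φ) - A (E (ub:X)) (E φ)| ≤ LA * az * Q := by
      have h7 : A (E u) (E φ) - A (E (ub:X)) (E φ) = (A (E u) - A (E (ub:X))) (E φ) := by simp
      rw [h7, ← Real.norm_eq_abs]
      refine le_trans ((A (E u) - A (E (ub:X))).le_opNorm _) ?_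
      have h8 : ‖A (E u) - A (E (ub:X))‖ ≤ LA * az := by
        refine le_trans (hAlip _ _) ?_
        rw [← hEzsub]
      exact mul_le_mul_of_nonneg_right h8 (norm_nonneg _)
    -- MAIN inequality
    have hMAIN : mA*Q^2 + (mA/LA^2)*Dd^2 + T^2 ≤ LA*az*Q + dz*Q + nψ*Dd + g0*G := by
      have h1 : A (E uδ) (E φ) - A (E u) (E φ) + T^2
          = D φ (lamδ - lb) + D φ (lb - E (ub:X)) + ⟪Γ0 φ, Γ0 z⟫ + D z (E φ) := by
        have h2 : D φ (E z) = ⟪Γt φ, Γt z⟫ - ⟪Γ0 φ, Γ0 z⟫ - D z (E φ) := by linarith only [hibpφz]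
        have h3 : (⟪Γt φ, Γt z⟫ : ℝ) = ⟪Γt z, Γt φ⟫ := real_inner_comm _ _
        linarith only [hE2, htdecomp, hsplit, h2, h3]
      have h4 := abs_le.mp (hEvalAbs (D φ) (lb - E (ub:X)) hψmem)
      have h5 := abs_le.mp (hEvalAbs (D z) (E φ) hEφmem)
      have h6 : (⟪Γ0 φ, Γ0 z⟫ : ℝ) ≤ G * g0 := real_inner_le_norm _ _
      have h7 := abs_le.mp habsA
      linarith only [hDφσ, hAsplit, h1, h4.2, h5.2, h6, h7.2]
    -- Cauchy-Schwarz for coefficients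
    have hcs1 : LA*az + dz ≤ α * Real.sqrt (az^2 + dz^2) := by
      apply sq_le_imp (by positivity) (by positivity)
      rw [mul_pow, hα2, Real.sq_sqrt (by positivity)]
      linarith only [sq_nonneg (LA*dz - az)]
    have hcs1' : LA*az + dz ≤ α * ζ :=
      le_trans hcs1 (mul_le_mul_of_nonneg_left hadζ (le_of_lt hαpos))
    -- quasi-optimality bound on M
    have hMbound : M ≤ (1+K)/mS * ζ := by
      set β := Real.sqrt (1 + 1/mA^2) with hβ
      have hβ2 : β^2 = 1 + 1/mA^2 := Real.sq_sqrt (by positivity)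
      have hβnn : 0 ≤ β := Real.sqrt_nonneg _
      have hnψ2 : nψ ≤ (dz + LA*az)/mA := by
        rw [le_div_iff₀ hmA]
        linarith only [hψbound]
      have hcs2 : Q + Dd/mA ≤ β * Real.sqrt (Q^2 + Dd^2) := by
        apply sq_le_imp (by positivity) (by positivity)
        rw [mul_pow, hβ2, Real.sq_sqrt (by positivity)]
        have hmA' : mA ≠ 0 := ne_of_gt hmA
        have hkey : (Q + Dd/mA)^2 * mA^2 ≤ ((1 + 1/mA^2) * (Q^2 + Dd^2)) * mA^2 := by
          have e1 : (Q + Dd/mA)^2 * mA^2 = (Q*mA + Dd)^2 := by field_simp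
          have e2 : ((1 + 1/mA^2) * (Q^2 + Dd^2)) * mA^2 = (mA^2+1)*(Q^2+Dd^2) := by field_simp
          rw [e1, e2]
          nlinarith only [sq_nonneg (Q - mA*Dd)]
        exact le_of_mul_le_mul_right hkey (by positivity)
      have hQD : Real.sqrt (Q^2 + Dd^2) ≤ M := by
        apply Real.sqrt_le_sqrt
        linarith only [sq_nonneg T]
      have hKαβ : K = α * β := by
        rw [hKdef, hα, hβ, ← Real.sqrt_mul (by positivity)]
      have hchain : mS * M^2 ≤ ((1+K)*ζ) * M := by
        have hL : mS*M^2 ≤ mA*Q^2 + (mA/LA^2)*Dd^2 + T^2 := by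
          rw [hM2]
          linarith only [mul_le_mul_of_nonneg_right hmSmA (sq_nonneg Q),
            mul_le_mul_of_nonneg_right hmSLA (sq_nonneg Dd),
            mul_le_mul_of_nonneg_right hmS1 (sq_nonneg T)]
        have hb1 : nψ*Dd ≤ ((dz + LA*az)/mA)*Dd :=
          mul_le_mul_of_nonneg_right hnψ2 (norm_nonneg _)
        have hb2 : g0*G ≤ ζ*M :=
          mul_le_mul hg0ζ hGM (norm_nonneg _) hζnn
        have hR1 : LA*az*Q + dz*Q + ((dz+LA*az)/mA)*Dd = (LA*az+dz)*(Q + Dd/mA) := by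
          field_simp; ring
        have hR2 : (LA*az+dz)*(Q+Dd/mA) ≤ (α*Real.sqrt (az^2+dz^2))*(β*Real.sqrt (Q^2+Dd^2)) := by
          apply mul_le_mul hcs1 hcs2 (by positivity) (by positivity)
        have hR3 : (α*Real.sqrt (az^2+dz^2))*(β*Real.sqrt (Q^2+Dd^2))
            = K * (Real.sqrt (az^2+dz^2) * Real.sqrt (Q^2+Dd^2)) := by
          rw [hKαβ]; ring
        have hR4 : Real.sqrt (az^2+dz^2) * Real.sqrt (Q^2+Dd^2) ≤ ζ*M :=
          mul_le_mul hadζ hQD (Real.sqrt_nonneg _) hζnn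
        have hR5 : K * (Real.sqrt (az^2+dz^2) * Real.sqrt (Q^2+Dd^2)) ≤ K * (ζ*M) :=
          mul_le_mul_of_nonneg_left hR4 hKnn
        linarith only [hL, hMAIN, hb1, hb2, hR1, hR2, hR3, hR5]
      have h9 : mS * M ≤ (1+K)*ζ := by
        apply cancel_mul hmSpos hMnn (by positivity)
        exact hchain
      rw [div_mul_eq_mul_div, le_div_iff₀ hmSpos]
      linarith only [h9]
    -- bound on ‖lamδ - E uδ‖
    have hgmem : lamδ - E uδ ∈ Yδ := Yδ.sub_mem hlamδ hEuδmem
    have hE1 : ∀ v ∈ Yδ, A lamδ v - A (E u) v = D z v - D φ v := by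
      intro v hv
      have h1 := hGal₁ v hv
      have h2 := happ v
      have h3 : D z v - D φ v = D u v - D uδ v := by
        rw [hz, hφdef, map_sub, map_sub]
        simp only [ContinuousLinearMap.sub_apply]
        ring
      linarith only [h1, h2, h3]
    have hgb : mA * ‖lamδ - E uδ‖ ≤ α*ζ + α*M := by
      apply cancel_mul hmA (norm_nonneg _) (by positivity)
      have h1 := hAmono lamδ (E uδ)
      have h2 : (A lamδ - A (E uδ)) (lamδ - E uδ)
          = A lamδ (lamδ - E uδ) - A (E uδ) (lamδ - E uδ) := by simp
      have h3 := hE1 (lamδ - E uδ) hgmem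
      have h4 := abs_le.mp (hEvalAbs (D z) (lamδ - E uδ) hgmem)
      have h5 := abs_le.mp (hEvalAbs (D φ) (lamδ - E uδ) hgmem)
      have h6 : |A (E u) (lamδ - E uδ) - A (E uδ) (lamδ - E uδ)| ≤ LA*(az+Q)*‖lamδ - E uδ‖ := by
        have h7 : A (E u) (lamδ - E uδ) - A (E uδ) (lamδ - E uδ)
            = (A (E u) - A (E uδ)) (lamδ - E uδ) := by simp
        rw [h7, ← Real.norm_eq_abs]
        refine le_trans ((A (E u) - A (E uδ)).le_opNorm _) ?_
        have h8 : ‖A (E u) - A (E uδ)‖ ≤ LA * (az + Q) := by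
          refine le_trans (hAlip _ _) ?_
          have h9 : E u - E uδ = E z - E φ := by
            rw [← map_sub, ← map_sub]
            congr 1
            rw [hz, hφdef]; abel
          rw [h9]
          exact mul_le_mul_of_nonneg_left (norm_sub_le (E z) (E φ)) (le_of_lt hLA)
        exact mul_le_mul_of_nonneg_right h8 (norm_nonneg _)
      have hcs3 : Dd + LA*Q ≤ α*M := by
        apply sq_le_imp (by positivity) (by positivity)
        rw [mul_pow, hα2, hM2]
        linarith only [sq_nonneg (Q - LA*Dd), sq_nonneg T, mul_nonneg (sq_nonneg LA) (sq_nonneg T)]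
      have h10 := abs_le.mp h6
      have h11 := mul_le_mul_of_nonneg_right (add_le_add hcs1' hcs3) (norm_nonneg (lamδ - E uδ))
      linarith only [h1, h2, h3, h4.2, h5.1, h10.2, h11]
    have hgb' : ‖lamδ - E uδ‖ ≤ (α/mA)*(ζ+M) := by
      rw [div_mul_eq_mul_div, le_div_iff₀ hmA]
      linarith only [hgb]
    -- bound on ‖u₀ - Γ0 uδ‖
    have hΓ0 : ‖u₀ - Γ0 uδ‖ ≤ ζ + M := by
      have h1 : u₀ - Γ0 uδ = Γ0 z - Γ0 φ := by
        rw [← hu₀, ← map_sub, ← map_sub]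
        congr 1
        rw [hz, hφdef]; abel
      rw [h1]
      calc ‖Γ0 z - Γ0 φ‖ ≤ g0 + G := norm_sub_le _ _
        _ ≤ ζ + M := add_le_add hg0ζ hGM
    -- put together
    have hfinal : ‖lamδ - E uδ‖ + (α/mA) * ‖u₀ - Γ0 uδ‖ ≤ 2*(α/mA)*(ζ+M) := by
      have h2 : (α/mA) * ‖u₀ - Γ0 uδ‖ ≤ (α/mA)*(ζ+M) :=
        mul_le_mul_of_nonneg_left hΓ0 (le_of_lt hcpos)
      linarith only [hgb', h2]
    refine le_trans hfinal ?_
    rw [hC₁]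
    have hMb' : (α/mA) * M ≤ (α/mA) * ((1+K)/mS * ζ) :=
      mul_le_mul_of_nonneg_left hMbound (le_of_lt hcpos)
    have hexp : 2*(1 + 1/mS*(1+K))*(α/mA)*ζ = 2*(α/mA)*ζ + 2*((α/mA)*((1+K)/mS*ζ)) := by
      ring
    rw [hexp]
    linarith only [hMb']
  -- conclude via the infimum
  haveI hne : Nonempty Xδ := ⟨0⟩
  have h1 : (‖lamδ - E uδ‖ + (α/mA) * ‖u₀ - Γ0 uδ‖) / (2*C₁*(α/mA)) ≤ ⨅ z : Xδ, ‖u - (z : X)‖ := by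
    apply le_ciInf
    intro w
    rw [div_le_iff₀ hTotPos]
    exact (key w).trans (le_of_eq (mul_comm _ _))
  have h2 := (div_le_iff₀ hTotPos).mp h1
  calc ‖lamδ - E uδ‖ + α/mA * ‖u₀ - Γ0 uδ‖
      ≤ (⨅ z : Xδ, ‖u - (z : X)‖) * (2*C₁*(α/mA)) := h2
    _ = 2*C₁*(α/mA) * ⨅ z : Xδ, ‖u - (z : X)‖ := mul_comm _ _
end

section
/- Let ϱ > 0, set λ_δ := A⁻¹(ℓ − D u^δ) ∈ Y, and suppose the a posteriori condition ‖λ_δ − λ^δ‖_Y ≤ ϱ·(‖λ^δ − E u^δ‖_Y + (√(1 + L_A²)/m_A)·‖u₀ − Γ_0 u^δ‖_H) holds. Then the error estimator η := √(‖λ^δ − E u^δ‖_Y² + ‖u₀ − Γ_0 u^δ‖_H²) is efficient and reliable: (m_A/√(1 + L_A² + m_A²))·η ≤ ‖u − u^δ‖_X ≤ (1/m_S)·(1 + 1/m_A)·√(L_A²·ϱ² + (L_A·ϱ·√(1 + L_A²)/m_A + 1)²)·η. -/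
open NormedSpace
open scoped RealInnerProductSpace

set_option maxHeartbeats 1000000

section AuxScalar

variable {mA LA θ s1 w K ϱ : ℝ}

private lemma est_zbound {mA LA w z d b : ℝ} (hLA : 0 ≤ LA) (hw : w^2 = 2*mA)
    (hwpos : 0 < w) (hz : 0 ≤ z) (hd : 0 ≤ d) (hb : 0 ≤ b)
    (h : 2*mA*z^2 ≤ 2*LA*z*d + b^2) :
    2*mA*z ≤ 2*LA*d + w*b := by
  rcases le_or_gt (w*z) b with hc | hc
  · nlinarith [mul_le_mul_of_nonneg_left hc (le_of_lt hwpos)]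
  · have hzpos : 0 < z := by
      by_contra hz0
      push_neg at hz0
      have : z = 0 := le_antisymm hz0 hz
      rw [this] at hc; simp at hc; nlinarith
    nlinarith [mul_pos hwpos hzpos, mul_nonneg hb (le_of_lt hzpos)]

private lemma est_K0a {mA LA : ℝ} (h0 : 0 < mA) (h1 : mA ≤ LA) (h2 : LA ≤ 1) :
    4*mA^4 + (2*mA^2*LA^2 + 2*mA^3)*(1 + LA^2 - 2*mA) + 4*mA^3*LA^2 ≤ 2*(mA+1)^2 := by
  have hm1 : mA ≤ 1 := le_trans h1 h2
  have hL2 : LA^2 ≤ 1 := by nlinarith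
  have t1 : 0 ≤ mA^2*((2-2*mA)*(1-LA^2)) :=
    mul_nonneg (sq_nonneg _) (mul_nonneg (by linarith) (by linarith))
  have t2 : 0 ≤ mA^2*(LA^2*(1-LA^2)) :=
    mul_nonneg (sq_nonneg _) (mul_nonneg (sq_nonneg _) (by linarith))
  have t3 : 0 ≤ mA^3*(1-LA^2) := mul_nonneg (by positivity) (by linarith)
  have t4 : 0 ≤ (2*mA+1)*((1-mA)*(1+mA)) :=
    mul_nonneg (by linarith) (mul_nonneg (by linarith) (by linarith))
  nlinarith [t1, t2, t3, t4]

private lemma est_K0b {mA LA : ℝ} (h0 : 0 < mA) (h1 : mA ≤ LA) (h2 : 1 ≤ LA) :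
    4*mA^4 + (2*mA^2*LA^2 + 2*mA^3)*(1 + LA^2 - 2*mA) + 4*mA^3*LA^2 ≤ 2*(mA+1)^2*LA^4 := by
  have hL0 : 0 < LA := lt_of_lt_of_le h0 h1
  have hsq : mA^2 ≤ LA^2 := by nlinarith
  have hL21 : 1 ≤ LA^2 := by nlinarith
  have hL24 : LA^2 ≤ LA^4 := by nlinarith [mul_nonneg (sq_nonneg LA) (sub_nonneg.2 hL21)]
  have t1 : 0 ≤ mA*(LA^4 - mA^2) := mul_nonneg h0.le (by linarith)
  have t2 : 0 ≤ LA^2*(LA^2 - mA^2) := mul_nonneg (sq_nonneg _) (by linarith)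
  have t3 : 0 ≤ mA*LA^2*(LA^2 - mA^2) := mul_nonneg (by positivity) (by linarith)
  nlinarith [t1, t2, t3]

private lemma est_K1a_low {mA LA : ℝ} (h0 : 0 < mA) (h1 : mA ≤ LA) (h2 : LA ≤ 1) :
    2*mA^5 + 2*mA^4*LA^2 + (2*mA^4 + 2*mA^3*LA^2)*(1 + LA^2 - 2*mA) ≤ (mA+1)^2*LA := by
  have hm1 : mA ≤ 1 := le_trans h1 h2
  have hL2 : LA^2 ≤ 1 := by nlinarith
  have hcube : mA^3 ≤ mA := by
    nlinarith [mul_nonneg (mul_nonneg h0.le h0.le) (sub_nonneg.2 hm1),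
      mul_nonneg h0.le (sub_nonneg.2 hm1)]
  have t1 : 0 ≤ mA^4*(1-LA^2) := mul_nonneg (by positivity) (by linarith)
  have t2 : 0 ≤ mA^3*((2-2*mA)*(1-LA^2)) :=
    mul_nonneg (by positivity) (mul_nonneg (by linarith) (by linarith))
  have t3 : 0 ≤ mA^3*(LA^2*(1-LA^2)) :=
    mul_nonneg (by positivity) (mul_nonneg (sq_nonneg _) (by linarith))
  have t5 : 0 ≤ mA*((1-mA)*(-2*mA^3+3*mA+1)) :=
    mul_nonneg h0.le (mul_nonneg (by linarith) (by nlinarith))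
  have t6 : (mA+1)^2*mA ≤ (mA+1)^2*LA := by
    nlinarith [mul_nonneg (sq_nonneg (mA+1)) (sub_nonneg.2 h1)]
  nlinarith [t1, t2, t3, t5, t6]

private lemma est_K1a_high {mA LA : ℝ} (h0 : 0 < mA) (h1 : mA ≤ LA) (h2 : 1 ≤ LA) :
    2*mA^5 + 2*mA^4*LA^2 + (2*mA^4 + 2*mA^3*LA^2)*(1 + LA^2 - 2*mA) ≤ (mA+1)^2*LA^6 := by
  have hL0 : 0 < LA := lt_of_lt_of_le h0 h1
  have hsq : mA^2 ≤ LA^2 := by nlinarith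
  have hL21 : 1 ≤ LA^2 := by nlinarith
  have hL24 : LA^2 ≤ LA^4 := by nlinarith [mul_nonneg (sq_nonneg LA) (sub_nonneg.2 hL21)]
  have hL46 : LA^4 ≤ LA^6 := by
    nlinarith [mul_nonneg (mul_nonneg (sq_nonneg LA) (sq_nonneg LA)) (sub_nonneg.2 hL21)]
  have t1 : 0 ≤ mA*LA^4*(LA^2 - mA^2) := mul_nonneg (by positivity) (by linarith)
  have t2 : 0 ≤ mA^2*(LA^6 - LA^4) := mul_nonneg (sq_nonneg _) (by linarith)
  have t3 : 3*mA^4 ≤ LA^6 + 2*mA^5 := by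
    rcases le_or_gt mA 1 with hc | hc
    · have h16 : 1 ≤ LA^6 := by
        nlinarith [mul_nonneg (mul_nonneg (sq_nonneg LA) (sq_nonneg LA)) (sub_nonneg.2 hL21)]
      have hm4 : mA^4 ≤ mA := by
        nlinarith [mul_nonneg (mul_nonneg (mul_nonneg h0.le h0.le) h0.le) (sub_nonneg.2 hc),
          mul_nonneg (mul_nonneg h0.le h0.le) (sub_nonneg.2 hc),
          mul_nonneg h0.le (sub_nonneg.2 hc)]
      have hq : 0 ≤ (1-mA)*(-2*mA^4+mA^3+mA^2+mA+1) := by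
        apply mul_nonneg (by linarith)
        nlinarith [hm4, mul_nonneg (mul_nonneg h0.le h0.le) h0.le, sq_nonneg mA]
      nlinarith [hq, h16]
    · have hm45 : mA^4 ≤ mA^5 := by
        nlinarith [pow_pos h0 4, mul_nonneg (pow_nonneg h0.le 4) (sub_nonneg.2 hc.le)]
      have h46 : mA^4 ≤ LA^6 := by
        nlinarith [sq_nonneg (mA^2), mul_self_nonneg (LA^2 - mA^2),
          mul_nonneg (sub_nonneg.2 hsq) (add_nonneg (sq_nonneg mA) (sq_nonneg LA))]
      linarith
  have t4 : 2*mA^3*LA^2 ≤ mA^4 + mA^2*LA^4 := by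
    nlinarith [mul_nonneg (sq_nonneg mA) (sq_nonneg (mA - LA^2))]
  nlinarith [t1, t2, t3, t4]

private lemma est_K1b_low {mA LA : ℝ} (h0 : 0 < mA) (h1 : mA ≤ LA) (h2 : LA ≤ 1) :
    mA^4*LA^2 + mA^3*LA^4 + (mA^2*LA^4 + mA^3*LA^2 + 2*mA^3)*(1 + LA^2 - 2*mA)
      ≤ 2*LA^2*(mA+1)^2 := by
  have hm1 : mA ≤ 1 := le_trans h1 h2
  have hL0 : 0 < LA := lt_of_lt_of_le h0 h1
  have hL2 : LA^2 ≤ 1 := by nlinarith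
  have hsq : mA^2 ≤ LA^2 := by nlinarith
  have hT0 : 0 ≤ 1 + LA^2 - 2*mA := by nlinarith [sq_nonneg (LA-1)]
  have hT : 1 + LA^2 - 2*mA ≤ (1 - mA) + (LA^2 - mA^2) + (mA - mA^2) := by nlinarith
  nlinarith [hT0, hsq, mul_nonneg (mul_nonneg h0.le h0.le) (sub_nonneg.2 hm1),
    mul_nonneg (mul_nonneg (mul_nonneg h0.le h0.le) h0.le) (sub_nonneg.2 hm1),
    mul_nonneg (mul_nonneg h0.le h0.le) (sub_nonneg.2 hsq),
    mul_nonneg (mul_nonneg (mul_nonneg h0.le h0.le) h0.le) (sub_nonneg.2 hL2),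
    mul_nonneg (mul_nonneg h0.le h0.le) (sub_nonneg.2 hL2),
    mul_nonneg (sq_nonneg (mA*LA)) (sub_nonneg.2 hL2),
    mul_nonneg (mul_nonneg (sq_nonneg mA) (sq_nonneg LA)) (sub_nonneg.2 hm1),
    sq_nonneg (mA - LA), mul_pos h0 hL0, mul_pos (mul_pos h0 h0) hL0]

private lemma est_C2a {mA LA θ : ℝ} (h0 : 0 < mA) (h1 : mA ≤ LA) (h2 : LA ≤ 1) (hθ : 0 ≤ θ)
    (hθ2 : θ^2 = 1 + LA^2 - 2*mA) :
    mA^2 + θ*LA*mA ≤ (mA+1)*LA := by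
  nlinarith [sq_nonneg (θ - 1), sq_nonneg (θ*mA - 1), mul_pos h0 h0, sq_nonneg (LA - mA),
    mul_nonneg hθ h0.le, sq_nonneg (1-mA), mul_nonneg (mul_nonneg hθ h0.le) h0.le]

private lemma est_C2b {mA LA θ : ℝ} (h0 : 0 < mA) (h1 : mA ≤ LA) (h2 : 1 ≤ LA) (hθ : 0 ≤ θ)
    (hθ2 : θ^2 = 1 + LA^2 - 2*mA) :
    mA^2 + θ*LA*mA ≤ (mA+1)*LA^3 := by
  have hLA0 : 0 < LA := lt_of_lt_of_le h0 h1
  have ham : θ*LA*mA ≤ (θ^2 + (LA*mA)^2)/2 := by nlinarith [sq_nonneg (θ - LA*mA)]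
  have key : 2*mA^2 + 1 + LA^2 - 2*mA + LA^2*mA^2 ≤ 2*(mA+1)*LA^3 := by
    nlinarith [sq_nonneg (LA-1), sq_nonneg (mA-1), sq_nonneg (LA-mA),
      mul_nonneg (sub_nonneg.2 h1) (sub_nonneg.2 h2), mul_pos h0 hLA0,
      mul_nonneg (mul_nonneg h0.le h0.le) (sub_nonneg.2 h2),
      mul_nonneg (sub_nonneg.2 h2) (sub_nonneg.2 h2),
      mul_nonneg (mul_nonneg hLA0.le hLA0.le) (sub_nonneg.2 h2)]
  nlinarith

private lemma est_Jtwo (h0 : 0 < mA) (h1 : mA ≤ LA) (hθ : 0 ≤ θ)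
    (hθ2 : θ^2 = 1 + LA^2 - 2*mA) (hG : (mA+1)*(max 1 (LA^2)) ≤ K*mA^2) :
    (mA+θ*LA)/mA ≤ K*LA := by
  have hLA0 : 0 < LA := lt_of_lt_of_le h0 h1
  have core : mA^2 + θ*LA*mA ≤ (mA+1)*(max 1 (LA^2))*LA := by
    rcases le_or_gt LA 1 with hL | hL
    · rw [max_eq_left (by nlinarith : LA^2 ≤ 1)]
      have := est_C2a h0 h1 hL hθ hθ2; linarith
    · rw [max_eq_right (by nlinarith : (1:ℝ) ≤ LA^2)]
      have h5 := est_C2b h0 h1 hL.le hθ hθ2; nlinarith [h5]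
  rw [div_le_iff₀ h0]
  nlinarith [core, mul_le_mul_of_nonneg_right hG hLA0.le, h0]

private lemma est_Jzero (h0 : 0 < mA) (h1 : mA ≤ LA) (hθ : 0 ≤ θ)
    (hθ2 : θ^2 = 1 + LA^2 - 2*mA) (hw : 0 < w) (hw2 : w^2 = 2*mA)
    (hG : (mA+1)*(max 1 (LA^2)) ≤ K*mA^2) :
    ((mA+θ*LA)/mA)^2 + (θ/w)^2 + 1 ≤ K^2 := by
  have ham : 4*mA^3*LA*θ ≤ mA^3*θ^2 + 4*mA^3*LA^2 := by
    nlinarith [mul_nonneg (pow_nonneg h0.le 3) (sq_nonneg (θ - 2*LA))]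
  have hKsq : ((mA+1)*(max 1 (LA^2)))^2 ≤ (K*mA^2)^2 := by
    have hGpos : (0:ℝ) ≤ (mA+1)*(max 1 (LA^2)) := by positivity
    nlinarith [mul_self_le_mul_self hGpos hG]
  have core0 : 2*mA^2*(mA+θ*LA)^2 + mA^3*θ^2 + 2*mA^4 ≤ 2*((mA+1)*(max 1 (LA^2)))^2 := by
    rcases le_or_gt LA 1 with hL | hL
    · rw [max_eq_left (by nlinarith : LA^2 ≤ 1)]
      have h5 := est_K0a h0 h1 hL; nlinarith [ham, h5]
    · rw [max_eq_right (by nlinarith : (1:ℝ) ≤ LA^2)]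
      have h5 := est_K0b h0 h1 hL.le; nlinarith [ham, h5]
  have e1 : (((mA+θ*LA)/mA)^2 + (θ/w)^2 + 1)*(2*mA^4)
      = 2*mA^2*(mA+θ*LA)^2 + mA^3*θ^2 + 2*mA^4 := by
    have hm : mA ≠ 0 := ne_of_gt h0
    have hwne : w ≠ 0 := ne_of_gt hw
    field_simp
    rw [hw2]; ring
  have h6 : (((mA+θ*LA)/mA)^2 + (θ/w)^2 + 1)*(2*mA^4) ≤ K^2*(2*mA^4) := by
    rw [e1]; nlinarith [core0, hKsq]
  exact le_of_mul_le_mul_right h6 (by positivity)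

private lemma est_Jonea (h0 : 0 < mA) (h1 : mA ≤ LA) (hθ : 0 ≤ θ)
    (hθ2 : θ^2 = 1 + LA^2 - 2*mA) (hs1 : 0 ≤ s1) (hs12 : s1^2 = 1 + LA^2)
    (hG : (mA+1)*(max 1 (LA^2)) ≤ K*mA^2) :
    2*((mA+θ*LA)/mA)^2 ≤ K^2*LA*(s1/mA) := by
  have hLA0 : 0 < LA := lt_of_lt_of_le h0 h1
  have hs1ge1 : 1 ≤ s1 := by nlinarith
  have hs1geLA : LA ≤ s1 := by nlinarith
  have ham : 4*mA^4*LA*θ ≤ 2*mA^4*θ^2 + 2*mA^4*LA^2 := by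
    nlinarith [mul_nonneg (pow_nonneg h0.le 4) (sq_nonneg (θ - LA))]
  have hKsq : ((mA+1)*(max 1 (LA^2)))^2 ≤ (K*mA^2)^2 := by
    have hGpos : (0:ℝ) ≤ (mA+1)*(max 1 (LA^2)) := by positivity
    nlinarith [mul_self_le_mul_self hGpos hG]
  have core1 : 2*mA^3*(mA+θ*LA)^2 ≤ ((mA+1)*(max 1 (LA^2)))^2*LA*s1 := by
    rcases le_or_gt LA 1 with hL | hL
    · rw [max_eq_left (by nlinarith : LA^2 ≤ 1)]
      have hcc := est_K1a_low h0 h1 hL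
      have eq1 : mA^4*θ^2 = mA^4*(1+LA^2-2*mA) := by rw [hθ2]
      have eq2 : mA^3*LA^2*θ^2 = mA^3*LA^2*(1+LA^2-2*mA) := by rw [hθ2]
      have h6 : 2*mA^3*(mA+θ*LA)^2 ≤ (mA+1)^2*LA := by nlinarith [ham, hcc, eq1, eq2]
      nlinarith [h6, mul_nonneg (mul_nonneg (sq_nonneg (mA+1)) hLA0.le) (sub_nonneg.2 hs1ge1)]
    · rw [max_eq_right (by nlinarith : (1:ℝ) ≤ LA^2)]
      have hcc := est_K1a_high h0 h1 hL.le
      have eq1 : mA^4*θ^2 = mA^4*(1+LA^2-2*mA) := by rw [hθ2]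
      have eq2 : mA^3*LA^2*θ^2 = mA^3*LA^2*(1+LA^2-2*mA) := by rw [hθ2]
      have h6 : 2*mA^3*(mA+θ*LA)^2 ≤ (mA+1)^2*LA^6 := by nlinarith [ham, hcc, eq1, eq2]
      have h7 : (mA+1)^2*LA^6 ≤ ((mA+1)*LA^2)^2*LA*s1 := by
        nlinarith [mul_nonneg (mul_nonneg (sq_nonneg (mA+1)) (pow_nonneg hLA0.le 5))
          (sub_nonneg.2 hs1geLA)]
      linarith
  have h8 : ((mA+1)*(max 1 (LA^2)))^2*LA*s1 ≤ K^2*mA^4*LA*s1 := by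
    nlinarith [mul_nonneg (mul_nonneg hLA0.le hs1) (sub_nonneg.2 hKsq)]
  have h10 : 2*(mA+θ*LA)^2 ≤ K^2*LA*s1*mA := by
    have h9 : (2*(mA+θ*LA)^2)*mA^3 ≤ (K^2*LA*s1*mA)*mA^3 := by nlinarith [core1, h8]
    exact le_of_mul_le_mul_right h9 (by positivity)
  have eL : 2*((mA+θ*LA)/mA)^2 = (2*(mA+θ*LA)^2)/(mA^2) := by rw [div_pow]; ring
  have eR : K^2*LA*(s1/mA) = (K^2*LA*s1)/mA := by ring
  rw [eL, eR, div_le_div_iff₀ (by positivity) h0]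
  nlinarith [h10, h0, mul_le_mul_of_nonneg_right h10 h0.le]

private lemma est_Joneb (h0 : 0 < mA) (h1 : mA ≤ LA) (hθ : 0 ≤ θ)
    (hθ2 : θ^2 = 1 + LA^2 - 2*mA) (hw : 0 < w) (hw2 : w^2 = 2*mA)
    (hG : (mA+1)*(max 1 (LA^2)) ≤ K*mA^2) :
    2*((mA+θ*LA)/mA)*(θ/w) ≤ K^2*LA := by
  have hLA0 : 0 < LA := lt_of_lt_of_le h0 h1
  have hKsq : ((mA+1)*(max 1 (LA^2)))^2 ≤ (K*mA^2)^2 := by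
    have hGpos : (0:ℝ) ≤ (mA+1)*(max 1 (LA^2)) := by positivity
    nlinarith [mul_self_le_mul_self hGpos hG]
  have hA10 : 0 ≤ (mA+θ*LA)/mA := by positivity
  have hB10 : 0 ≤ θ/w := by positivity
  rcases le_or_gt LA 1 with hL | hL
  · have step : 4*LA*(((mA+θ*LA)/mA)*(θ/w)) ≤ LA^2*((mA+θ*LA)/mA)^2 + 4*(θ/w)^2 := by
      nlinarith [sq_nonneg (LA*((mA+θ*LA)/mA) - 2*(θ/w))]
    have hamb : 2*mA^3*LA^3*θ ≤ mA^3*LA^2*θ^2 + mA^3*LA^4 := by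
      nlinarith [mul_nonneg (mul_nonneg (pow_nonneg h0.le 3) (sq_nonneg LA)) (sq_nonneg (θ - LA))]
    have core2 : LA^2*(mA+θ*LA)^2*mA^2 + 2*mA^3*θ^2 ≤ 2*LA^2*((mA+1)*1)^2 := by
      have h5 := est_K1b_low h0 h1 hL
      have eq1 : mA^3*LA^2*θ^2 = mA^3*LA^2*(1+LA^2-2*mA) := by rw [hθ2]
      have eq2 : mA^2*LA^4*θ^2 = mA^2*LA^4*(1+LA^2-2*mA) := by rw [hθ2]
      have eq3 : mA^3*θ^2 = mA^3*(1+LA^2-2*mA) := by rw [hθ2]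
      nlinarith [hamb, h5, eq1, eq2, eq3]
    have hGeq : max 1 (LA^2) = 1 := max_eq_left (by nlinarith : LA^2 ≤ 1)
    have hx : LA^2*((mA+θ*LA)/mA)^2 + 4*(θ/w)^2 ≤ 2*K^2*LA^2 := by
      have e1 : (LA^2*((mA+θ*LA)/mA)^2 + 4*(θ/w)^2)*(mA^4)
          = LA^2*(mA+θ*LA)^2*mA^2 + 2*mA^3*θ^2 := by
        have hm : mA ≠ 0 := ne_of_gt h0
        have hwne : w ≠ 0 := ne_of_gt hw
        field_simp
        rw [hw2]; ring
      have e2 : 2*LA^2*((mA+1)*1)^2 ≤ (2*K^2*LA^2)*mA^4 := by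
        rw [hGeq] at hKsq
        nlinarith [mul_nonneg (sq_nonneg LA) (sub_nonneg.2 hKsq)]
      have h6 : (LA^2*((mA+θ*LA)/mA)^2 + 4*(θ/w)^2)*(mA^4) ≤ (2*K^2*LA^2)*(mA^4) := by
        rw [e1]; linarith [core2, e2]
      exact le_of_mul_le_mul_right h6 (by positivity)
    nlinarith [step, hx, hLA0, mul_pos hLA0 hLA0]
  · have hJ0 := est_Jzero h0 h1 hθ hθ2 hw hw2 hG
    nlinarith [hJ0, sq_nonneg ((mA+θ*LA)/mA - θ/w), mul_nonneg (sq_nonneg K) (sub_nonneg.2 hL.le)]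

private lemma est_Jassemble {A1 B1 c K LA ϱ : ℝ} (hA10 : 0 ≤ A1) (hB10 : 0 ≤ B1) (hc0 : 0 ≤ c)
    (hϱ : 0 ≤ ϱ)
    (hJ2 : A1 ≤ K*LA) (hJ1a : 2*A1^2 ≤ K^2*LA*c) (hJ1b : 2*A1*B1 ≤ K^2*LA)
    (hJ0 : A1^2 + B1^2 + 1 ≤ K^2) :
    (A1*(1+ϱ))^2 + (A1*(ϱ*c) + B1)^2 + 1 ≤ K^2*(LA^2*ϱ^2 + (LA*ϱ*c + 1)^2) := by
  have bracket2 : A1^2 ≤ K^2*LA^2 := by nlinarith [mul_self_le_mul_self hA10 hJ2]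
  have hq2 : A1^2*(1+c^2)*ϱ^2 ≤ K^2*LA^2*(1+c^2)*ϱ^2 := by
    apply mul_le_mul_of_nonneg_right _ (sq_nonneg ϱ)
    exact mul_le_mul_of_nonneg_right bracket2 (by positivity)
  have hq1 : (2*A1^2 + 2*A1*B1*c)*ϱ ≤ (2*(K^2*LA*c))*ϱ := by
    apply mul_le_mul_of_nonneg_right _ hϱ
    nlinarith [hJ1a, mul_le_mul_of_nonneg_right hJ1b hc0]
  nlinarith [hq2, hq1, hJ0]

/-- The assembled scalar inequality for the reliability bound. -/
private lemma est_scal (h0 : 0 < mA) (h1 : mA ≤ LA) (hθ : 0 ≤ θ)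
    (hθ2 : θ^2 = 1 + LA^2 - 2*mA) (hs1 : 0 ≤ s1) (hs12 : s1^2 = 1 + LA^2)
    (hw : 0 < w) (hw2 : w^2 = 2*mA) (hϱ : 0 ≤ ϱ)
    (hG : (mA+1)*(max 1 (LA^2)) ≤ K*mA^2) :
    ((mA+θ*LA)/mA*(1+ϱ))^2 + ((mA+θ*LA)/mA*(ϱ*(s1/mA)) + θ/w)^2 + 1
      ≤ K^2*(LA^2*ϱ^2 + (LA*ϱ*(s1/mA) + 1)^2) :=
  est_Jassemble (div_nonneg (by nlinarith [mul_nonneg hθ (lt_of_lt_of_le h0 h1).le]) h0.le)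
    (div_nonneg hθ hw.le) (div_nonneg hs1 h0.le) hϱ
    (est_Jtwo h0 h1 hθ hθ2 hG) (est_Jonea h0 h1 hθ hθ2 hs1 hs12 hG)
    (est_Joneb h0 h1 hθ hθ2 hw hw2 hG) (est_Jzero h0 h1 hθ hθ2 hw hw2 hG)

end AuxScalar

private lemma est_sqmono {x y : ℝ} (hx : 0 ≤ x) (h : x ≤ y) : x^2 ≤ y^2 := by
  nlinarith [mul_self_le_mul_self hx h]

private lemma est_sqrt_le {x y : ℝ} (hx : 0 ≤ x) (hy : 0 ≤ y) (h : x^2 ≤ y^2) : x ≤ y := by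
  have h1 := Real.sqrt_le_sqrt h
  rwa [Real.sqrt_sq hx, Real.sqrt_sq hy] at h1

private lemma est_cs {α β a b : ℝ} :
    (α*a + β*b)^2 + b^2 ≤ (α^2 + β^2 + 1)*(a^2 + b^2) := by
  nlinarith [sq_nonneg (α*b - β*a), sq_nonneg a]

/-- Stability estimate in the Hilbert space `Y`. -/
private lemma est_stab {Y : Type*} [NormedAddCommGroup Y] [InnerProductSpace ℝ Y]
    (ν ζ Dv : Y) {mA LA θ b g n : ℝ}
    (hmono : mA*‖ζ‖^2 ≤ ⟪ν, ζ⟫) (hlip : ‖ν‖ ≤ LA*‖ζ‖)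
    (hθ0 : 0 ≤ θ) (hθ2 : θ^2 = 1 + LA^2 - 2*mA)
    (hg2 : g^2 = b^2 + 2*⟪ν, Dv - ζ⟫)
    (hn : n = ‖Dv - ζ‖^2 + ‖ν‖^2 + g^2) :
    n ≤ (‖Dv‖ + θ*‖ζ‖)^2 + b^2 ∧ 2*mA*‖ζ‖^2 ≤ 2*LA*‖ζ‖*‖Dv‖ + b^2 := by
  have hsub1 : ‖Dv - ζ‖^2 = ‖Dv‖^2 - 2*⟪Dv, ζ⟫ + ‖ζ‖^2 := norm_sub_sq_real Dv ζ
  have hsub2 : ‖ν - ζ‖^2 = ‖ν‖^2 - 2*⟪ν, ζ⟫ + ‖ζ‖^2 := norm_sub_sq_real ν ζ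
  have hin1 : ⟪ν, Dv - ζ⟫ = ⟪ν, Dv⟫ - ⟪ν, ζ⟫ := inner_sub_right ν Dv ζ
  have hin2 : ⟪ν - ζ, Dv⟫ = ⟪ν, Dv⟫ - ⟪ζ, Dv⟫ := inner_sub_left ν ζ Dv
  have hin3 : ⟪Dv, ζ⟫ = ⟪ζ, Dv⟫ := real_inner_comm _ _
  have h2 : ⟪ν, Dv⟫ ≤ ‖ν‖*‖Dv‖ := real_inner_le_norm _ _
  have h3 : ‖ν‖*‖Dv‖ ≤ (LA*‖ζ‖)*‖Dv‖ := mul_le_mul_of_nonneg_right hlip (norm_nonneg _)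
  constructor
  · have hkey : n = ‖Dv‖^2 + b^2 + ‖ν - ζ‖^2 + 2*⟪ν - ζ, Dv⟫ := by
      rw [hn, hsub1, hg2, hin1, hsub2, hin2, hin3]; ring
    have hρsq : ‖ν - ζ‖^2 ≤ (θ*‖ζ‖)^2 := by
      have hν2 : ‖ν‖*‖ν‖ ≤ (LA*‖ζ‖)*(LA*‖ζ‖) := mul_self_le_mul_self (norm_nonneg ν) hlip
      nlinarith [hsub2, hmono, hν2]
    have hρ : ‖ν - ζ‖ ≤ θ*‖ζ‖ :=
      est_sqrt_le (norm_nonneg _) (by positivity) hρsq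
    have hip : ⟪ν - ζ, Dv⟫ ≤ ‖ν - ζ‖*‖Dv‖ := real_inner_le_norm _ _
    have h1 : ‖ν - ζ‖*‖Dv‖ ≤ (θ*‖ζ‖)*‖Dv‖ := mul_le_mul_of_nonneg_right hρ (norm_nonneg _)
    nlinarith [hkey, hρsq, hip, h1]
  · nlinarith [hmono, hin1, sq_nonneg g, h2, h3, hg2]

/-- Efficiency: scalar combination. -/
private lemma est_eff {a b r x g n mA LA S η ip nrm : ℝ}
    (hmA : 0 < mA) (hLA : 0 < LA) (ha0 : 0 ≤ a) (hr : 0 ≤ r) (hx : 0 ≤ x)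
    (hn : n = x^2 + r^2 + g^2)
    (hg2 : g^2 = b^2 + 2*ip) (hip : |ip| ≤ r*x)
    (hq : mA*a^2 ≤ (r + LA*x)*a)
    (hη0 : 0 ≤ η) (hη2 : η^2 = a^2 + b^2)
    (hnrm0 : 0 ≤ nrm) (hnrm2 : nrm^2 = n)
    (hS0 : 0 < S) (hS2 : S^2 = 1 + LA^2 + mA^2) :
    mA*η ≤ nrm*S := by
  have hstep : mA*a ≤ r + LA*x := by
    rcases eq_or_lt_of_le ha0 with h | h
    · rw [← h]; simpa using by positivity
    · have h3 : (mA*a)*a ≤ (r + LA*x)*a := by nlinarith [hq]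
      exact le_of_mul_le_mul_right h3 h
  have hb2 : b^2 ≤ n := by
    have := abs_le.1 hip
    nlinarith [sq_nonneg (r - x)]
  have h1 : mA^2*a^2 ≤ (1+LA^2)*(r^2+x^2) := by
    have hsq := mul_self_le_mul_self (mul_nonneg hmA.le ha0) hstep
    nlinarith [sq_nonneg (LA*r - x), hsq]
  have hcomb : mA^2*(a^2+b^2) ≤ (1+LA^2+mA^2)*n := by
    have hrx : r^2 + x^2 ≤ n := by nlinarith [sq_nonneg g]
    have h4 : (1+LA^2)*(r^2+x^2) ≤ (1+LA^2)*n :=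
      mul_le_mul_of_nonneg_left hrx (by positivity)
    have h5 : mA^2*b^2 ≤ mA^2*n := mul_le_mul_of_nonneg_left hb2 (sq_nonneg mA)
    nlinarith [h1, h4, h5]
  have hXY : (mA*η)^2 ≤ (nrm*S)^2 := by
    have e1 : (mA*η)^2 = mA^2*(a^2+b^2) := by rw [mul_pow, hη2]
    have e2 : (nrm*S)^2 = (1+LA^2+mA^2)*n := by rw [mul_pow, hnrm2, hS2]; ring
    rw [e1, e2]; exact hcomb
  exact est_sqrt_le (mul_nonneg hmA.le hη0) (mul_nonneg hnrm0 hS0.le) hXY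

/-- Reliability: scalar combination. -/
private lemma est_rel {mA LA θ w s1 K ϱ a b t d z nrm η : ℝ}
    (hmA : 0 < mA) (hML : mA ≤ LA)
    (hθ0 : 0 ≤ θ) (hθ2 : θ^2 = 1 + LA^2 - 2*mA)
    (hs10 : 0 ≤ s1) (hs12 : s1^2 = 1 + LA^2)
    (hw0 : 0 < w) (hw2 : w^2 = 2*mA)
    (hϱ : 0 ≤ ϱ) (hK0 : 0 < K) (hKb : (mA+1)*(max 1 (LA^2)) ≤ K*mA^2)
    (ha0 : 0 ≤ a) (hb0 : 0 ≤ b) (hd0 : 0 ≤ d) (hz0 : 0 ≤ z)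
    (hnrm0 : 0 ≤ nrm) (hη0 : 0 ≤ η) (hη2 : η^2 = a^2+b^2)
    (hup : nrm^2 ≤ (d + θ*z)^2 + b^2)
    (hzc : 2*mA*z^2 ≤ 2*LA*z*d + b^2)
    (hdta : d ≤ t + a)
    (hcnd : t ≤ ϱ*(a + s1/mA*b)) :
    nrm ≤ K * Real.sqrt (LA^2*ϱ^2 + (LA*ϱ*s1/mA + 1)^2) * η := by
  have hLA0 : 0 < LA := lt_of_lt_of_le hmA hML
  have hzb : 2*mA*z ≤ 2*LA*d + w*b := est_zbound hLA0.le hw2 hw0 hz0 hd0 hb0 hzc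
  have hmne : mA ≠ 0 := ne_of_gt hmA
  have hwne : w ≠ 0 := ne_of_gt hw0
  have hA10 : 0 ≤ (mA+θ*LA)/mA :=
    div_nonneg (by nlinarith [mul_nonneg hθ0 hLA0.le]) hmA.le
  have hB10 : 0 ≤ θ/w := div_nonneg hθ0 hw0.le
  have hzle : z ≤ LA*d/mA + b/w := by
    have h1 : z ≤ (2*LA*d + w*b)/(2*mA) := by
      rw [le_div_iff₀ (by positivity)]; linarith [hzb]
    have h2 : (2*LA*d + w*b)/(2*mA) = LA*d/mA + b/w := by
      field_simp
      linear_combination b*hw2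
    linarith [h1, h2.le, h2.ge]
  have hchain : d + θ*z ≤ (mA+θ*LA)/mA*d + θ/w*b := by
    have h3 : θ*z ≤ θ*(LA*d/mA + b/w) := mul_le_mul_of_nonneg_left hzle hθ0
    have h4 : d + θ*(LA*d/mA + b/w) = (mA+θ*LA)/mA*d + θ/w*b := by
      field_simp; ring
    linarith [h3, h4.le, h4.ge]
  have hchain2 : (mA+θ*LA)/mA*d + θ/w*b
      ≤ ((mA+θ*LA)/mA*(1+ϱ))*a + ((mA+θ*LA)/mA*(ϱ*(s1/mA)) + θ/w)*b := by
    have h5 : d ≤ ϱ*(a + s1/mA*b) + a := le_trans hdta (by linarith [hcnd])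
    have h6 : (mA+θ*LA)/mA*d ≤ (mA+θ*LA)/mA*(ϱ*(a + s1/mA*b) + a) :=
      mul_le_mul_of_nonneg_left h5 hA10
    have h7 : (mA+θ*LA)/mA*(ϱ*(a + s1/mA*b) + a)
        = ((mA+θ*LA)/mA*(1+ϱ))*a + ((mA+θ*LA)/mA*(ϱ*(s1/mA)))*b := by ring
    linarith [h6, h7.le, h7.ge]
  have hβ0 : 0 ≤ (mA+θ*LA)/mA*(ϱ*(s1/mA)) + θ/w := by
    have h8 : 0 ≤ (mA+θ*LA)/mA*(ϱ*(s1/mA)) :=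
      mul_nonneg hA10 (mul_nonneg hϱ (div_nonneg hs10 hmA.le))
    linarith [hB10]
  have hα0 : 0 ≤ (mA+θ*LA)/mA*(1+ϱ) := mul_nonneg hA10 (by linarith)
  have hle : d + θ*z ≤ ((mA+θ*LA)/mA*(1+ϱ))*a + ((mA+θ*LA)/mA*(ϱ*(s1/mA)) + θ/w)*b :=
    le_trans hchain hchain2
  have hsq : (d + θ*z)^2
      ≤ (((mA+θ*LA)/mA*(1+ϱ))*a + ((mA+θ*LA)/mA*(ϱ*(s1/mA)) + θ/w)*b)^2 :=
    est_sqmono (by positivity) hle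
  have hCS := est_cs (α := (mA+θ*LA)/mA*(1+ϱ)) (β := (mA+θ*LA)/mA*(ϱ*(s1/mA)) + θ/w)
    (a := a) (b := b)
  have hscal := est_scal hmA hML hθ0 hθ2 hs10 hs12 hw0 hw2 hϱ hKb
  have hmul : (((mA+θ*LA)/mA*(1+ϱ))^2 + ((mA+θ*LA)/mA*(ϱ*(s1/mA)) + θ/w)^2 + 1)*(a^2+b^2)
      ≤ (K^2*(LA^2*ϱ^2 + (LA*ϱ*(s1/mA) + 1)^2))*(a^2+b^2) :=
    mul_le_mul_of_nonneg_right hscal (by positivity)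
  have hR0 : (0:ℝ) ≤ LA^2*ϱ^2 + (LA*ϱ*s1/mA + 1)^2 := by positivity
  have hSR0 : 0 ≤ Real.sqrt (LA^2*ϱ^2 + (LA*ϱ*s1/mA + 1)^2) := Real.sqrt_nonneg _
  have hSR2 : (Real.sqrt (LA^2*ϱ^2 + (LA*ϱ*s1/mA + 1)^2))^2
      = LA^2*ϱ^2 + (LA*ϱ*s1/mA + 1)^2 := Real.sq_sqrt hR0
  have hfin : nrm^2 ≤ (K * Real.sqrt (LA^2*ϱ^2 + (LA*ϱ*s1/mA + 1)^2) * η)^2 := by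
    have e1 : (K * Real.sqrt (LA^2*ϱ^2 + (LA*ϱ*s1/mA + 1)^2) * η)^2
        = K^2*(LA^2*ϱ^2 + (LA*ϱ*(s1/mA) + 1)^2)*(a^2+b^2) := by
      rw [mul_pow, mul_pow, hSR2, hη2]
      ring
    rw [e1]
    linarith [hup, hsq, hCS, hmul]
  exact est_sqrt_le hnrm0 (mul_nonneg (mul_nonneg hK0.le hSR0) hη0) hfin


/-- Efficiency and reliability of the a posteriori error estimator
`η = √(‖λ^δ − E u^δ‖_Y² + ‖u₀ − Γ₀ u^δ‖_H²)` under the a posteriori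
condition. -/
theorem estimator_efficient_reliable
    {Y X H : Type*}
    [NormedAddCommGroup Y] [InnerProductSpace ℝ Y] [CompleteSpace Y]
    [NormedAddCommGroup X] [InnerProductSpace ℝ X] [CompleteSpace X]
    [NormedAddCommGroup H] [InnerProductSpace ℝ H] [CompleteSpace H]
    (E : X →L[ℝ] Y) (D : X →L[ℝ] StrongDual ℝ Y) (Γt : X →L[ℝ] H)
    (hnorm : ∀ x : X, ‖x‖ ^ 2 = ‖E x‖ ^ 2 + ‖D x‖ ^ 2 + ‖Γt x‖ ^ 2)
    (A : Y → StrongDual ℝ Y) (LA mA : ℝ) (hLA : 0 < LA) (hmA : 0 < mA)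
    (hAlip : ∀ w v : Y, ‖A w - A v‖ ≤ LA * ‖w - v‖)
    (hAmono : ∀ w v : Y, (A w - A v) (w - v) ≥ mA * ‖w - v‖ ^ 2)
    (Γ0 : X →L[ℝ] H)
    (hIBP : ∀ u v : X,
      (D u) (E v) + (D v) (E u) + ⟪Γ0 u, Γ0 v⟫ = ⟪Γt u, Γt v⟫)
    (Yδ : Submodule ℝ Y) (hYδ : IsClosed (Yδ : Set Y))
    (Xδ : Submodule ℝ X) (hXδ : IsClosed (Xδ : Set X))
    (hEXδ : ∀ x ∈ Xδ, E x ∈ Yδ)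
    (ℓ : StrongDual ℝ Y) (u₀ : H) (u : X)
    (hu : D u + A (E u) = ℓ ∧ Γ0 u = u₀)
    (lamδ : Y) (uδ : X) (hlamδ : lamδ ∈ Yδ) (huδ : uδ ∈ Xδ)
    (hGal₁ : ∀ v ∈ Yδ, (A lamδ) v + (D uδ) v = ℓ v)
    (hGal₂ : ∀ w ∈ Xδ, (D w) lamδ - (A (E uδ)) (E w) - ⟪Γt uδ, Γt w⟫
        = -(ℓ (E w)) - ⟪u₀, Γ0 w⟫)
    (Ainv : StrongDual ℝ Y → Y)
    (hAinv₁ : ∀ y : Y, Ainv (A y) = y) (hAinv₂ : ∀ f : StrongDual ℝ Y, A (Ainv f) = f)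
    (ϱ : ℝ) (hϱ : 0 < ϱ)
    (hcond : ‖Ainv (ℓ - D uδ) - lamδ‖
      ≤ ϱ * (‖lamδ - E uδ‖ + (Real.sqrt (1 + LA ^ 2) / mA) * ‖u₀ - Γ0 uδ‖))
    (mS η : ℝ)
    (hmS : mS = min 1 (min mA (mA / LA ^ 2)))
    (hη : η = Real.sqrt (‖lamδ - E uδ‖ ^ 2 + ‖u₀ - Γ0 uδ‖ ^ 2)) :
    (mA / Real.sqrt (1 + LA ^ 2 + mA ^ 2)) * η ≤ ‖u - uδ‖ ∧
    ‖u - uδ‖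
      ≤ (1 / mS) * (1 + 1 / mA)
        * Real.sqrt (LA ^ 2 * ϱ ^ 2
            + (LA * ϱ * Real.sqrt (1 + LA ^ 2) / mA + 1) ^ 2) * η := by
  obtain ⟨hu1, hu2⟩ := hu
  have ha0 : 0 ≤ ‖lamδ - E uδ‖ := norm_nonneg _
  have hb0 : 0 ≤ ‖u₀ - Γ0 uδ‖ := norm_nonneg _
  have hη0 : 0 ≤ η := by rw [hη]; exact Real.sqrt_nonneg _
  have hη2 : η^2 = ‖lamδ - E uδ‖^2 + ‖u₀ - Γ0 uδ‖^2 := by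
    rw [hη]; exact Real.sq_sqrt (by positivity)
  have hΓ0e : Γ0 (u - uδ) = u₀ - Γ0 uδ := by rw [map_sub, hu2]
  have hnorme : ‖u - uδ‖^2 = ‖E (u - uδ)‖^2 + ‖D (u - uδ)‖^2 + ‖Γt (u - uδ)‖^2 := hnorm _
  have hg2 : ‖Γt (u - uδ)‖^2 = ‖u₀ - Γ0 uδ‖^2 + 2*(D (u - uδ) (E (u - uδ))) := by
    have h := hIBP (u - uδ) (u - uδ)
    rw [real_inner_self_eq_norm_sq, real_inner_self_eq_norm_sq, hΓ0e] at h
    linarith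
  constructor
  · -- EFFICIENCY
    have hv : lamδ - E uδ ∈ Yδ := Submodule.sub_mem Yδ hlamδ (hEXδ uδ huδ)
    have hG1 := hGal₁ _ hv
    have hmono := hAmono lamδ (E uδ)
    have hu1v : D u (lamδ - E uδ) + A (E u) (lamδ - E uδ) = ℓ (lamδ - E uδ) := by
      have h := congrArg (fun f : StrongDual ℝ Y => f (lamδ - E uδ)) hu1
      simpa using h
    have happ : (A lamδ - A (E uδ)) (lamδ - E uδ)
        = (D (u - uδ)) (lamδ - E uδ) + (A (E u) - A (E uδ)) (lamδ - E uδ) := by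
      have hDsub : D (u - uδ) = D u - D uδ := map_sub D u uδ
      rw [hDsub]
      simp only [ContinuousLinearMap.sub_apply]
      linarith [hG1, hu1v]
    have hDev : (D (u - uδ)) (lamδ - E uδ) ≤ ‖D (u - uδ)‖ * ‖lamδ - E uδ‖ := by
      calc (D (u - uδ)) (lamδ - E uδ) ≤ |(D (u - uδ)) (lamδ - E uδ)| := le_abs_self _
      _ = ‖(D (u - uδ)) (lamδ - E uδ)‖ := (Real.norm_eq_abs _).symm
      _ ≤ ‖D (u - uδ)‖ * ‖lamδ - E uδ‖ := (D (u - uδ)).le_opNorm _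
    have hAv : (A (E u) - A (E uδ)) (lamδ - E uδ) ≤ LA * ‖E (u - uδ)‖ * ‖lamδ - E uδ‖ := by
      calc (A (E u) - A (E uδ)) (lamδ - E uδ)
          ≤ |(A (E u) - A (E uδ)) (lamδ - E uδ)| := le_abs_self _
      _ = ‖(A (E u) - A (E uδ)) (lamδ - E uδ)‖ := (Real.norm_eq_abs _).symm
      _ ≤ ‖A (E u) - A (E uδ)‖ * ‖lamδ - E uδ‖ := (A (E u) - A (E uδ)).le_opNorm _
      _ ≤ (LA * ‖E u - E uδ‖) * ‖lamδ - E uδ‖ :=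
          mul_le_mul_of_nonneg_right (hAlip _ _) ha0
      _ = LA * ‖E (u - uδ)‖ * ‖lamδ - E uδ‖ := by rw [map_sub]
    have hq : mA*‖lamδ - E uδ‖^2 ≤ (‖D (u - uδ)‖ + LA*‖E (u - uδ)‖)*‖lamδ - E uδ‖ := by
      have h := hmono
      rw [happ] at h
      nlinarith [hDev, hAv, h]
    have hipabs : |D (u - uδ) (E (u - uδ))| ≤ ‖D (u - uδ)‖ * ‖E (u - uδ)‖ := by
      rw [← Real.norm_eq_abs]
      exact (D (u - uδ)).le_opNorm _
    have hS0 : (0:ℝ) < Real.sqrt (1 + LA^2 + mA^2) := Real.sqrt_pos.2 (by positivity)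
    have hS2 : (Real.sqrt (1 + LA^2 + mA^2))^2 = 1 + LA^2 + mA^2 :=
      Real.sq_sqrt (by positivity)
    have heff : mA*η ≤ ‖u - uδ‖*Real.sqrt (1 + LA^2 + mA^2) :=
      est_eff hmA hLA ha0 (norm_nonneg _) (norm_nonneg _) hnorme hg2 hipabs hq
        hη0 hη2 (norm_nonneg _) rfl hS0 hS2
    rw [div_mul_eq_mul_div, div_le_iff₀ hS0]
    exact heff
  · -- RELIABILITY
    have hmS0 : 0 < mS := by
      rw [hmS]; exact lt_min one_pos (lt_min hmA (by positivity))
    have hK0 : 0 < 1/mS*(1+1/mA) := by positivity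
    have hKb : (mA+1)*(max 1 (LA^2)) ≤ (1/mS*(1+1/mA))*mA^2 := by
      have hinv : max 1 (LA^2)/mA ≤ 1/mS := by
        rcases le_total (LA^2) 1 with hL | hL
        · rw [max_eq_left hL]
          have h1 : mS ≤ mA := by
            rw [hmS]; exact le_trans (min_le_right _ _) (min_le_left _ _)
          exact one_div_le_one_div_of_le hmS0 h1
        · rw [max_eq_right hL]
          have h1 : mS ≤ mA/LA^2 := by
            rw [hmS]; exact le_trans (min_le_right _ _) (min_le_right _ _)
          have h2 : (1:ℝ)/(mA/LA^2) ≤ 1/mS := one_div_le_one_div_of_le hmS0 h1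
          rwa [one_div_div] at h2
      have e1 : (mA+1)*(max 1 (LA^2)) = ((max 1 (LA^2))/mA * ((mA+1)/mA)) * mA^2 := by
        field_simp
      have e2 : (1:ℝ) + 1/mA = (mA+1)/mA := by field_simp
      rw [e1, e2]
      apply mul_le_mul_of_nonneg_right _ (sq_nonneg mA)
      exact mul_le_mul_of_nonneg_right hinv (by positivity)
    rcases le_or_gt mA LA with hML | hML
    · -- main branch
      have hθarg : (0:ℝ) ≤ 1 + LA^2 - 2*mA := by nlinarith [sq_nonneg (LA-1)]
      have hθ0 : 0 ≤ Real.sqrt (1 + LA^2 - 2*mA) := Real.sqrt_nonneg _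
      have hθ2 : (Real.sqrt (1 + LA^2 - 2*mA))^2 = 1 + LA^2 - 2*mA := Real.sq_sqrt hθarg
      have hw0 : 0 < Real.sqrt (2*mA) := Real.sqrt_pos.2 (by linarith)
      have hw2 : (Real.sqrt (2*mA))^2 = 2*mA := Real.sq_sqrt (by linarith)
      have hs10 : 0 ≤ Real.sqrt (1 + LA^2) := Real.sqrt_nonneg _
      have hs12 : (Real.sqrt (1 + LA^2))^2 = 1 + LA^2 := Real.sq_sqrt (by positivity)
      -- lambda-bar identities
      have hAlb : A (Ainv (ℓ - D uδ)) = ℓ - D uδ := hAinv₂ _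
      have hDe : D (u - uδ) = A (Ainv (ℓ - D uδ)) - A (E u) := by
        rw [map_sub, hAlb]
        have hDu : D u = ℓ - A (E u) := eq_sub_of_add_eq hu1
        rw [hDu]; abel
      have hνip : ∀ y : Y, ⟪(InnerProductSpace.toDual ℝ Y).symm (D (u - uδ)), y⟫
          = D (u - uδ) y := fun y => InnerProductSpace.toDual_symm_apply
      have hνn : ‖(InnerProductSpace.toDual ℝ Y).symm (D (u - uδ))‖ = ‖D (u - uδ)‖ :=
        LinearIsometryEquiv.norm_map _ _
      have hDvζ : (Ainv (ℓ - D uδ) - E uδ) - (Ainv (ℓ - D uδ) - E u) = E (u - uδ) := by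
        rw [map_sub]; abel
      -- hypotheses of est_stab
      have hmono' : mA*‖Ainv (ℓ - D uδ) - E u‖^2
          ≤ ⟪(InnerProductSpace.toDual ℝ Y).symm (D (u - uδ)), Ainv (ℓ - D uδ) - E u⟫ := by
        have h := hAmono (Ainv (ℓ - D uδ)) (E u)
        rw [← hDe] at h
        rw [hνip]
        exact h
      have hlip' : ‖(InnerProductSpace.toDual ℝ Y).symm (D (u - uδ))‖
          ≤ LA*‖Ainv (ℓ - D uδ) - E u‖ := by
        rw [hνn, hDe]
        exact hAlip _ _
      have hg2' : ‖Γt (u - uδ)‖^2 = ‖u₀ - Γ0 uδ‖^2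
          + 2*⟪(InnerProductSpace.toDual ℝ Y).symm (D (u - uδ)),
              (Ainv (ℓ - D uδ) - E uδ) - (Ainv (ℓ - D uδ) - E u)⟫ := by
        rw [hνip, hDvζ]
        exact hg2
      have hn' : ‖u - uδ‖^2 = ‖(Ainv (ℓ - D uδ) - E uδ) - (Ainv (ℓ - D uδ) - E u)‖^2
          + ‖(InnerProductSpace.toDual ℝ Y).symm (D (u - uδ))‖^2 + ‖Γt (u - uδ)‖^2 := by
        rw [hDvζ, hνn]
        exact hnorme
      obtain ⟨hup, hzc⟩ := est_stab ((InnerProductSpace.toDual ℝ Y).symm (D (u - uδ)))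
        (Ainv (ℓ - D uδ) - E u) (Ainv (ℓ - D uδ) - E uδ)
        hmono' hlip' hθ0 hθ2 hg2' hn'
      have hdta : ‖Ainv (ℓ - D uδ) - E uδ‖ ≤ ‖Ainv (ℓ - D uδ) - lamδ‖ + ‖lamδ - E uδ‖ := by
        calc ‖Ainv (ℓ - D uδ) - E uδ‖
            = ‖(Ainv (ℓ - D uδ) - lamδ) + (lamδ - E uδ)‖ := by rw [sub_add_sub_cancel]
        _ ≤ ‖Ainv (ℓ - D uδ) - lamδ‖ + ‖lamδ - E uδ‖ := norm_add_le _ _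
      exact est_rel hmA hML hθ0 hθ2 hs10 hs12 hw0 hw2 hϱ.le hK0 hKb
        ha0 hb0 (norm_nonneg _) (norm_nonneg _) (norm_nonneg _) hη0 hη2
        hup hzc hdta hcond
    · -- degenerate branch : LA < mA forces Y ≃ 0
      have hY0 : ∀ y : Y, y = 0 := by
        intro y
        have h1 := hAmono y 0
        have h2 := hAlip y 0
        have h3 : (A y - A 0) (y - 0) ≤ ‖A y - A 0‖*‖y - 0‖ := by
          calc (A y - A 0) (y - 0) ≤ |(A y - A 0) (y - 0)| := le_abs_self _
          _ = ‖(A y - A 0) (y - 0)‖ := (Real.norm_eq_abs _).symm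
          _ ≤ ‖A y - A 0‖*‖y - 0‖ := (A y - A 0).le_opNorm _
        have h4 : ‖A y - A 0‖*‖y - 0‖ ≤ (LA*‖y - 0‖)*‖y - 0‖ :=
          mul_le_mul_of_nonneg_right h2 (norm_nonneg _)
        have h5 : mA*‖y - 0‖^2 ≤ LA*‖y - 0‖^2 := by nlinarith [h1, h3, h4]
        have h6 : ‖y - 0‖^2 ≤ 0 := by nlinarith [h5]
        have h7 : ‖y - 0‖ = 0 := by nlinarith [norm_nonneg (y - 0), sq_nonneg ‖y - 0‖, h6]
        have := norm_eq_zero.1 h7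
        simpa [sub_eq_zero] using this
      have haz : ‖lamδ - E uδ‖ = 0 := by rw [hY0 (lamδ - E uδ), norm_zero]
      have hE0 : E (u - uδ) = 0 := hY0 _
      have hD0 : D (u - uδ) = 0 := by
        ext y
        rw [hY0 y, map_zero]
        rfl
      have hnb : ‖u - uδ‖^2 = ‖u₀ - Γ0 uδ‖^2 := by
        rw [hnorme, hE0, hD0, hg2, hD0]
        simp
      have hnrmb : ‖u - uδ‖ = ‖u₀ - Γ0 uδ‖ := by
        have h1 := Real.sqrt_le_sqrt hnb.le
        have h2 := Real.sqrt_le_sqrt hnb.ge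
        rw [Real.sqrt_sq (norm_nonneg _), Real.sqrt_sq (norm_nonneg _)] at h1 h2
        linarith
      have hηb : η = ‖u₀ - Γ0 uδ‖ := by
        rw [hη, haz]
        simp [Real.sqrt_sq hb0]
      have hmS0' : mS ≤ 1 := by rw [hmS]; exact min_le_left _ _
      have hK1 : (1:ℝ) ≤ 1/mS*(1+1/mA) := by
        have h1 : (1:ℝ) ≤ 1/mS := by
          rw [le_div_iff₀ hmS0]; simpa using hmS0'
        have h2 : (1:ℝ) ≤ 1 + 1/mA := by
          have h3 : (0:ℝ) ≤ 1/mA := by positivity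
          linarith
        calc (1:ℝ) = 1*1 := by ring
        _ ≤ (1/mS)*(1+1/mA) := mul_le_mul h1 h2 zero_le_one (le_trans zero_le_one h1)
      have hq0 : (0:ℝ) ≤ LA * ϱ * Real.sqrt (1 + LA ^ 2) / mA := by positivity
      have hR1 : (1:ℝ) ≤ LA ^ 2 * ϱ ^ 2
          + (LA * ϱ * Real.sqrt (1 + LA ^ 2) / mA + 1) ^ 2 := by
        linarith [hq0, sq_nonneg (LA*ϱ), sq_nonneg (LA * ϱ * Real.sqrt (1 + LA ^ 2) / mA)]
      have hSR1 : (1:ℝ) ≤ Real.sqrt (LA ^ 2 * ϱ ^ 2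
          + (LA * ϱ * Real.sqrt (1 + LA ^ 2) / mA + 1) ^ 2) := by
        have h9 := Real.sqrt_le_sqrt hR1
        rwa [Real.sqrt_one] at h9
      rw [hnrmb, ← hηb]
      have hfac : (1:ℝ) ≤ 1/mS*(1+1/mA)*Real.sqrt (LA ^ 2 * ϱ ^ 2
          + (LA * ϱ * Real.sqrt (1 + LA ^ 2) / mA + 1) ^ 2) := by
        calc (1:ℝ) = 1*1 := by ring
        _ ≤ (1/mS*(1+1/mA))*Real.sqrt (LA ^ 2 * ϱ ^ 2
            + (LA * ϱ * Real.sqrt (1 + LA ^ 2) / mA + 1) ^ 2) :=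
          mul_le_mul hK1 hSR1 zero_le_one (le_trans zero_le_one hK1)
      have hlast := mul_le_mul_of_nonneg_right hfac hη0
      rw [one_mul] at hlast
      exact hlast
end

section
/- Let (λ°, u°) ∈ Y × X satisfy N(λ°, u°) = (f, g). Let σ̂_S ∈ (σ_S, 1), C₃ := (1/σ̂_S)·((σ̂_S − σ_S)/θ_S* + 1/m_A), and let L ∈ ℕ satisfy σ_A^L·(C₃ + 1/m_A) ≤ (σ̂_S − σ_S)/θ_S*. Given any (λ⁽⁰⁾, u⁽⁰⁾) ∈ Y × X, define recursively the inexact Uzawa iterates: λ⁽ᵏ⁺¹⁾ := Φ_k^L(λ⁽ᵏ⁾), where Φ_k(ξ) := ξ − θ_A*·R_Y⁻¹(A ξ − (f − D u⁽ᵏ⁾)) and Φ_k^L denotes the L-fold composition of Φ_k, and u⁽ᵏ⁺¹⁾ := u⁽ᵏ⁾ − θ_S*·R_X⁻¹(E'(A(E u⁽ᵏ⁾)) + Γ_T'(Γ_T u⁽ᵏ⁾) + g − D^⋆ λ⁽ᵏ⁺¹⁾). Then with C₄ := max((1/C₃)·‖λ° − λ⁽⁰⁾‖_Y, ‖u° −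 u⁽⁰⁾‖_X), for every k ∈ ℕ it holds that (1/C₃)·‖λ° − λ⁽ᵏ⁾‖_Y ≤ σ̂_S^k·C₄ and ‖u° − u⁽ᵏ⁾‖_X ≤ σ̂_S^k·C₄. -/
open NormedSpace
open scoped RealInnerProductSpace

lemma cauchy3 (a1 a2 a3 b1 b2 b3 N M : ℝ) (hN : 0 ≤ N) (hM : 0 ≤ M)
    (h1 : N ^ 2 = a1 ^ 2 + a2 ^ 2 + a3 ^ 2) (h2 : M ^ 2 = b1 ^ 2 + b2 ^ 2 + b3 ^ 2) :
    a1 * b1 + a2 * b2 + a3 * b3 ≤ N * M := by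
  rcases eq_or_lt_of_le hN with he | hN'
  · have ha1 : a1 = 0 := by nlinarith
    have ha2 : a2 = 0 := by nlinarith
    have ha3 : a3 = 0 := by nlinarith
    simp [ha1, ha2, ha3]
    positivity
  rcases eq_or_lt_of_le hM with he | hM'
  · have hb1 : b1 = 0 := by nlinarith
    have hb2 : b2 = 0 := by nlinarith
    have hb3 : b3 = 0 := by nlinarith
    simp [hb1, hb2, hb3]
    positivity
  nlinarith [sq_nonneg (a1 * M - b1 * N), sq_nonneg (a2 * M - b2 * N),
    sq_nonneg (a3 * M - b3 * N), mul_pos hN' hM']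

lemma mono_inv {Y : Type*} [NormedAddCommGroup Y] [InnerProductSpace ℝ Y]
    (A : Y → StrongDual ℝ Y) (m : ℝ) (hm : 0 < m)
    (hmono : ∀ w v : Y, (A w - A v) (w - v) ≥ m * ‖w - v‖ ^ 2) (w v : Y) :
    ‖w - v‖ ≤ (1 / m) * ‖A w - A v‖ := by
  have h := hmono w v
  have h2 : (A w - A v) (w - v) ≤ ‖A w - A v‖ * ‖w - v‖ := by
    calc (A w - A v) (w - v) ≤ ‖(A w - A v) (w - v)‖ := le_abs_self _
    _ ≤ ‖A w - A v‖ * ‖w - v‖ := (A w - A v).le_opNorm _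
  rcases eq_or_lt_of_le (norm_nonneg (w - v)) with he | hlt
  · rw [← he]; positivity
  · have key : m * ‖w - v‖ ≤ ‖A w - A v‖ := by nlinarith
    calc ‖w - v‖ = (1 / m) * (m * ‖w - v‖) := by field_simp
    _ ≤ (1 / m) * ‖A w - A v‖ := by
        apply mul_le_mul_of_nonneg_left key; positivity

lemma zar_contract {Y : Type*} [NormedAddCommGroup Y] [InnerProductSpace ℝ Y] [CompleteSpace Y]
    (T : Y → StrongDual ℝ Y) (L m : ℝ) (hL : 0 < L) (hm : 0 < m)
    (hlip : ∀ w v : Y, ‖T w - T v‖ ≤ L * ‖w - v‖)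
    (hmono : ∀ w v : Y, (T w - T v) (w - v) ≥ m * ‖w - v‖ ^ 2) (w v : Y) :
    ‖(w - (m / L ^ 2) • (InnerProductSpace.toDual ℝ Y).symm (T w)) -
      (v - (m / L ^ 2) • (InnerProductSpace.toDual ℝ Y).symm (T v))‖ ≤
      Real.sqrt (1 - m ^ 2 / L ^ 2) * ‖w - v‖ := by
  set θ : ℝ := m / L ^ 2 with hθ
  set d : Y := w - v with hd
  set r : Y := (InnerProductSpace.toDual ℝ Y).symm (T w - T v) with hr
  have hvec : (w - θ • (InnerProductSpace.toDual ℝ Y).symm (T w)) -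
      (v - θ • (InnerProductSpace.toDual ℝ Y).symm (T v)) = d - θ • r := by
    rw [hr, map_sub, smul_sub, hd]; abel
  rw [hvec]
  have hinner : ⟪r, d⟫ = (T w - T v) d := InnerProductSpace.toDual_symm_apply
  have hrnorm : ‖r‖ = ‖T w - T v‖ := LinearIsometryEquiv.norm_map _ _
  have hsq : ‖d - θ • r‖ ^ 2 = ‖d‖ ^ 2 - 2 * θ * ⟪r, d⟫ + θ ^ 2 * ‖r‖ ^ 2 := by
    rw [norm_sub_sq_real, real_inner_smul_right, norm_smul, real_inner_comm]
    simp [mul_pow, sq_abs]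
    ring
  have hmono' : ⟪r, d⟫ ≥ m * ‖d‖ ^ 2 := by rw [hinner]; exact hmono w v
  have hlip' : ‖r‖ ≤ L * ‖d‖ := by rw [hrnorm]; exact hlip w v
  have hθpos : 0 < θ := by positivity
  have hbound : ‖d - θ • r‖ ^ 2 ≤ (1 - m ^ 2 / L ^ 2) * ‖d‖ ^ 2 := by
    have hr2 : ‖r‖ ^ 2 ≤ L ^ 2 * ‖d‖ ^ 2 := by nlinarith [norm_nonneg r, norm_nonneg d]
    have h5 : ‖d - θ • r‖ ^ 2 ≤ ‖d‖ ^ 2 - 2 * θ * m * ‖d‖ ^ 2 + θ ^ 2 * L ^ 2 * ‖d‖ ^ 2 := by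
      rw [hsq]; nlinarith [sq_nonneg θ]
    have heq : ‖d‖ ^ 2 - 2 * θ * m * ‖d‖ ^ 2 + θ ^ 2 * L ^ 2 * ‖d‖ ^ 2
        = (1 - m ^ 2 / L ^ 2) * ‖d‖ ^ 2 := by
      rw [hθ]; field_simp; ring
    linarith [heq ▸ h5]
  rcases le_or_gt 0 (1 - m ^ 2 / L ^ 2) with hc | hc
  · have h1 : (Real.sqrt (1 - m ^ 2 / L ^ 2)) ^ 2 = 1 - m ^ 2 / L ^ 2 := Real.sq_sqrt hc
    nlinarith [norm_nonneg (d - θ • r), norm_nonneg d, Real.sqrt_nonneg (1 - m ^ 2 / L ^ 2),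
      mul_nonneg (Real.sqrt_nonneg (1 - m ^ 2 / L ^ 2)) (norm_nonneg d)]
  · have h0 : Real.sqrt (1 - m ^ 2 / L ^ 2) = 0 := Real.sqrt_eq_zero'.mpr (le_of_lt hc)
    rw [h0, zero_mul]
    nlinarith [norm_nonneg (d - θ • r), sq_nonneg (‖d‖)]

lemma iter_contract {Y : Type*} [NormedAddCommGroup Y] (Φ : Y → Y) (σ : ℝ) (hσ : 0 ≤ σ)
    (hc : ∀ x y : Y, ‖Φ x - Φ y‖ ≤ σ * ‖x - y‖) (p : Y) (hp : Φ p = p) (x : Y) (L : ℕ) :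
    ‖Φ^[L] x - p‖ ≤ σ ^ L * ‖x - p‖ := by
  induction L with
  | zero => simp
  | succ n ih =>
    rw [Function.iterate_succ_apply']
    calc ‖Φ (Φ^[n] x) - p‖ = ‖Φ (Φ^[n] x) - Φ p‖ := by rw [hp]
    _ ≤ σ * ‖Φ^[n] x - p‖ := hc _ _
    _ ≤ σ * (σ ^ n * ‖x - p‖) := by apply mul_le_mul_of_nonneg_left ih hσ
    _ = σ ^ (n + 1) * ‖x - p‖ := by ring

lemma exists_inverse {Y : Type*} [NormedAddCommGroup Y] [InnerProductSpace ℝ Y] [CompleteSpace Y]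
    (A : Y → StrongDual ℝ Y) (L m : ℝ) (hL : 0 < L) (hm : 0 < m)
    (hlip : ∀ w v : Y, ‖A w - A v‖ ≤ L * ‖w - v‖)
    (hmono : ∀ w v : Y, (A w - A v) (w - v) ≥ m * ‖w - v‖ ^ 2) (c : StrongDual ℝ Y) :
    ∃ p : Y, A p = c := by
  set σ : ℝ := Real.sqrt (1 - m ^ 2 / L ^ 2) with hσ
  have hσ0 : 0 ≤ σ := Real.sqrt_nonneg _
  have hσ1 : σ < 1 := by
    rcases le_or_gt (1 - m ^ 2 / L ^ 2) 0 with h | h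
    · rw [hσ, Real.sqrt_eq_zero'.mpr h]; norm_num
    · have h2 : σ ^ 2 = 1 - m ^ 2 / L ^ 2 := Real.sq_sqrt h.le
      have : m ^ 2 / L ^ 2 > 0 := by positivity
      nlinarith
  set Φ : Y → Y := fun ξ => ξ - (m / L ^ 2) • (InnerProductSpace.toDual ℝ Y).symm (A ξ - c)
    with hΦ
  have hcontr : ∀ x y : Y, ‖Φ x - Φ y‖ ≤ σ * ‖x - y‖ := by
    intro x y
    have := zar_contract (fun ξ => A ξ - c) L m hL hm
      (fun w v => by simpa [sub_sub_sub_cancel_right] using hlip w v)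
      (fun w v => by simpa [sub_sub_sub_cancel_right] using hmono w v) x y
    simpa [hΦ] using this
  haveI : Nonempty Y := ⟨0⟩
  have hlipW : LipschitzWith σ.toNNReal Φ :=
    LipschitzWith.of_dist_le_mul (fun x y => by
      rw [dist_eq_norm, dist_eq_norm, Real.coe_toNNReal _ hσ0]; exact hcontr x y)
  have hcw : ContractingWith σ.toNNReal Φ := by
    refine ⟨?_, hlipW⟩
    rw [← NNReal.coe_lt_coe, Real.coe_toNNReal _ hσ0]
    exact_mod_cast hσ1
  set p := hcw.fixedPoint Φ with hpdef
  have hfix : Φ p = p := hcw.fixedPoint_isFixedPt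
  have hz : (m / L ^ 2) • (InnerProductSpace.toDual ℝ Y).symm (A p - c) = 0 :=
    sub_eq_self.mp hfix
  rcases smul_eq_zero.mp hz with h | h
  · exfalso
    have hpos : (0:ℝ) < m / L ^ 2 := by positivity
    rw [h] at hpos; exact lt_irrefl _ hpos
  · have : A p - c = 0 := by
      have := congrArg (InnerProductSpace.toDual ℝ Y) h
      simpa using this
    exact ⟨p, sub_eq_zero.mp this⟩


lemma cauchy3' (a1 a2 a3 b1 b2 b3 N M : ℝ) (hN : 0 ≤ N) (hM : 0 ≤ M)
    (h1 : N ^ 2 = a1 ^ 2 + a2 ^ 2 + a3 ^ 2) (h2 : M ^ 2 = b1 ^ 2 + b2 ^ 2 + b3 ^ 2) :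
    a1 * b1 + a2 * b2 + a3 * b3 ≤ N * M := by
  rcases eq_or_lt_of_le hN with he | hN'
  · have ha1 : a1 = 0 := by nlinarith
    have ha2 : a2 = 0 := by nlinarith
    have ha3 : a3 = 0 := by nlinarith
    simp [ha1, ha2, ha3]
    positivity
  rcases eq_or_lt_of_le hM with he | hM'
  · have hb1 : b1 = 0 := by nlinarith
    have hb2 : b2 = 0 := by nlinarith
    have hb3 : b3 = 0 := by nlinarith
    simp [hb1, hb2, hb3]
    positivity
  nlinarith [sq_nonneg (a1 * M - b1 * N), sq_nonneg (a2 * M - b2 * N),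
    sq_nonneg (a3 * M - b3 * N), mul_pos hN' hM']

lemma schur_lip {Y X H : Type*}
    [NormedAddCommGroup Y] [InnerProductSpace ℝ Y] [CompleteSpace Y]
    [NormedAddCommGroup X] [InnerProductSpace ℝ X] [CompleteSpace X]
    [NormedAddCommGroup H] [InnerProductSpace ℝ H] [CompleteSpace H]
    (E : X →L[ℝ] Y) (D : X →L[ℝ] StrongDual ℝ Y) (Γt : X →L[ℝ] H)
    (hnorm : ∀ x : X, ‖x‖ ^ 2 = ‖E x‖ ^ 2 + ‖D x‖ ^ 2 + ‖Γt x‖ ^ 2)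
    (A : Y → StrongDual ℝ Y) (LA mA : ℝ) (hmA : 0 < mA)
    (hAlip : ∀ w v : Y, ‖A w - A v‖ ≤ LA * ‖w - v‖)
    (lamst : X → Y)
    (hAdiff : ∀ u v : X, ‖A (lamst u) - A (lamst v)‖ = ‖D (u - v)‖)
    (hlamstInv : ∀ u v : X, ‖lamst u - lamst v‖ ≤ (1 / mA) * ‖A (lamst u) - A (lamst v)‖)
    (LS : ℝ) (hLALS : LA ≤ LS) (hLS1 : 1 ≤ LS) (hmALS : 1 / mA ≤ LS)
    (u v : X) :
    ‖((A (E u)).comp E + ((InnerProductSpace.toDual ℝ H) (Γt u)).comp Γt - D.flip (lamst u))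
     - ((A (E v)).comp E + ((InnerProductSpace.toDual ℝ H) (Γt v)).comp Γt
        - D.flip (lamst v))‖ ≤ LS * ‖u - v‖ := by
  have hLSpos : (0:ℝ) < LS := lt_of_lt_of_le one_pos hLS1
  refine ContinuousLinearMap.opNorm_le_bound _ (by positivity) fun w => ?_
  have happ : (((A (E u)).comp E + ((InnerProductSpace.toDual ℝ H) (Γt u)).comp Γt
      - D.flip (lamst u)) - ((A (E v)).comp E
      + ((InnerProductSpace.toDual ℝ H) (Γt v)).comp Γt - D.flip (lamst v))) w =
      (A (E u) - A (E v)) (E w) + ⟪Γt u - Γt v, Γt w⟫ - (D w) (lamst u - lamst v) := by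
    simp only [ContinuousLinearMap.sub_apply, ContinuousLinearMap.add_apply,
      ContinuousLinearMap.coe_comp', Function.comp_apply, ContinuousLinearMap.flip_apply,
      InnerProductSpace.toDual_apply_apply, inner_sub_left, map_sub]
    ring
  rw [happ, Real.norm_eq_abs]
  have e1 : |(A (E u) - A (E v)) (E w)| ≤ LA * (‖E (u - v)‖ * ‖E w‖) := by
    calc |(A (E u) - A (E v)) (E w)| ≤ ‖A (E u) - A (E v)‖ * ‖E w‖ := by
          rw [← Real.norm_eq_abs]; exact (A (E u) - A (E v)).le_opNorm (E w)
    _ ≤ (LA * ‖E u - E v‖) * ‖E w‖ :=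
        mul_le_mul_of_nonneg_right (hAlip _ _) (norm_nonneg _)
    _ = LA * (‖E (u - v)‖ * ‖E w‖) := by rw [map_sub]; ring
  have e2 : |⟪Γt u - Γt v, Γt w⟫| ≤ ‖Γt (u - v)‖ * ‖Γt w‖ := by
    rw [← map_sub]; exact abs_real_inner_le_norm _ _
  have e3 : |(D w) (lamst u - lamst v)| ≤ (1 / mA) * (‖D (u - v)‖ * ‖D w‖) := by
    calc |(D w) (lamst u - lamst v)| ≤ ‖D w‖ * ‖lamst u - lamst v‖ := by
          rw [← Real.norm_eq_abs]; exact (D w).le_opNorm _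
    _ ≤ ‖D w‖ * ((1 / mA) * ‖A (lamst u) - A (lamst v)‖) :=
        mul_le_mul_of_nonneg_left (hlamstInv _ _) (norm_nonneg _)
    _ = (1 / mA) * (‖D (u - v)‖ * ‖D w‖) := by rw [hAdiff]; ring
  have key : ‖E (u - v)‖ * ‖E w‖ + ‖Γt (u - v)‖ * ‖Γt w‖ + ‖D (u - v)‖ * ‖D w‖
      ≤ ‖u - v‖ * ‖w‖ := by
    apply cauchy3' _ _ _ _ _ _ _ _ (norm_nonneg _) (norm_nonneg _)
    · rw [hnorm (u - v)]; ring
    · rw [hnorm w]; ring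
  have habs : |(A (E u) - A (E v)) (E w) + ⟪Γt u - Γt v, Γt w⟫ -
      (D w) (lamst u - lamst v)| ≤ LA * (‖E (u - v)‖ * ‖E w‖) +
      ‖Γt (u - v)‖ * ‖Γt w‖ + (1 / mA) * (‖D (u - v)‖ * ‖D w‖) := by
    calc |(A (E u) - A (E v)) (E w) + ⟪Γt u - Γt v, Γt w⟫ - (D w) (lamst u - lamst v)|
        ≤ |(A (E u) - A (E v)) (E w) + ⟪Γt u - Γt v, Γt w⟫| +
          |(D w) (lamst u - lamst v)| := abs_sub _ _
    _ ≤ |(A (E u) - A (E v)) (E w)| + |⟪Γt u - Γt v, Γt w⟫| +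
          |(D w) (lamst u - lamst v)| := by
        have := abs_add_le ((A (E u) - A (E v)) (E w)) (⟪Γt u - Γt v, Γt w⟫)
        linarith
    _ ≤ _ := by linarith
  have hEE : (0:ℝ) ≤ ‖E (u - v)‖ * ‖E w‖ := by positivity
  have hGG : (0:ℝ) ≤ ‖Γt (u - v)‖ * ‖Γt w‖ := by positivity
  have hDD : (0:ℝ) ≤ ‖D (u - v)‖ * ‖D w‖ := by positivity
  have b1 := mul_le_mul_of_nonneg_right hLALS hEE
  have b2 := mul_le_mul_of_nonneg_right hLS1 hGG
  have b3 := mul_le_mul_of_nonneg_right hmALS hDD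
  have bsum := mul_le_mul_of_nonneg_left key (le_of_lt hLSpos)
  calc |(A (E u) - A (E v)) (E w) + ⟪Γt u - Γt v, Γt w⟫ - (D w) (lamst u - lamst v)|
      ≤ LA * (‖E (u - v)‖ * ‖E w‖) + ‖Γt (u - v)‖ * ‖Γt w‖ +
        (1 / mA) * (‖D (u - v)‖ * ‖D w‖) := habs
  _ ≤ LS * ‖u - v‖ * ‖w‖ := by nlinarith


lemma schur_mono {Y X H : Type*}
    [NormedAddCommGroup Y] [InnerProductSpace ℝ Y] [CompleteSpace Y]
    [NormedAddCommGroup X] [InnerProductSpace ℝ X] [CompleteSpace X]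
    [NormedAddCommGroup H] [InnerProductSpace ℝ H] [CompleteSpace H]
    (E : X →L[ℝ] Y) (D : X →L[ℝ] StrongDual ℝ Y) (Γt : X →L[ℝ] H)
    (hnorm : ∀ x : X, ‖x‖ ^ 2 = ‖E x‖ ^ 2 + ‖D x‖ ^ 2 + ‖Γt x‖ ^ 2)
    (A : Y → StrongDual ℝ Y) (LA mA : ℝ) (hLA : 0 < LA) (hmA : 0 < mA)
    (hAlip : ∀ w v : Y, ‖A w - A v‖ ≤ LA * ‖w - v‖)
    (hAmono : ∀ w v : Y, (A w - A v) (w - v) ≥ mA * ‖w - v‖ ^ 2)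
    (lamst : X → Y)
    (hAdiff : ∀ u v : X, ‖A (lamst u) - A (lamst v)‖ = ‖D (u - v)‖)
    (h5 : ∀ u v : X, A (lamst u) - A (lamst v) = -(D (u - v)))
    (mS : ℝ) (hmS1 : mS ≤ 1) (hmSmA : mS ≤ mA) (hmSq : mS ≤ mA / LA ^ 2)
    (u v : X) :
    (((A (E u)).comp E + ((InnerProductSpace.toDual ℝ H) (Γt u)).comp Γt - D.flip (lamst u))
     - ((A (E v)).comp E + ((InnerProductSpace.toDual ℝ H) (Γt v)).comp Γt
        - D.flip (lamst v))) (u - v) ≥ mS * ‖u - v‖ ^ 2 := by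
  have happ : (((A (E u)).comp E + ((InnerProductSpace.toDual ℝ H) (Γt u)).comp Γt
      - D.flip (lamst u)) - ((A (E v)).comp E
      + ((InnerProductSpace.toDual ℝ H) (Γt v)).comp Γt - D.flip (lamst v))) (u - v) =
      (A (E u) - A (E v)) (E (u - v)) + ⟪Γt u - Γt v, Γt (u - v)⟫
        - (D (u - v)) (lamst u - lamst v) := by
    simp only [ContinuousLinearMap.sub_apply, ContinuousLinearMap.add_apply,
      ContinuousLinearMap.coe_comp', Function.comp_apply, ContinuousLinearMap.flip_apply,
      InnerProductSpace.toDual_apply_apply, inner_sub_left, inner_sub_right, map_sub]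
    ring
  rw [happ]
  have t1 : (A (E u) - A (E v)) (E (u - v)) ≥ mA * ‖E (u - v)‖ ^ 2 := by
    rw [map_sub]
    exact hAmono (E u) (E v)
  have t2 : ⟪Γt u - Γt v, Γt (u - v)⟫ = ‖Γt (u - v)‖ ^ 2 := by
    rw [← map_sub]
    exact real_inner_self_eq_norm_sq _
  have t3 : -((D (u - v)) (lamst u - lamst v)) ≥ (mA / LA ^ 2) * ‖D (u - v)‖ ^ 2 := by
    have h4 : (A (lamst u) - A (lamst v)) (lamst u - lamst v) ≥
        mA * ‖lamst u - lamst v‖ ^ 2 := hAmono _ _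
    have h6 : ‖D (u - v)‖ ≤ LA * ‖lamst u - lamst v‖ := by
      rw [← hAdiff u v]; exact hAlip _ _
    have h7 : -((D (u - v)) (lamst u - lamst v)) ≥ mA * ‖lamst u - lamst v‖ ^ 2 := by
      rw [show -((D (u - v)) (lamst u - lamst v)) =
        (-(D (u - v))) (lamst u - lamst v) by simp, ← h5 u v]
      exact h4
    have h8 : ‖D (u - v)‖ ^ 2 ≤ (LA * ‖lamst u - lamst v‖) ^ 2 :=
      pow_le_pow_left₀ (norm_nonneg _) h6 2
    have h8' : ‖D (u - v)‖ ^ 2 ≤ LA ^ 2 * ‖lamst u - lamst v‖ ^ 2 := by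
      rw [mul_pow] at h8; exact h8
    have hLA2 : (0:ℝ) < LA ^ 2 := by positivity
    rw [ge_iff_le, div_mul_eq_mul_div, div_le_iff₀ hLA2]
    have h9 : mA * ‖D (u - v)‖ ^ 2 ≤ mA * (LA ^ 2 * ‖lamst u - lamst v‖ ^ 2) :=
      mul_le_mul_of_nonneg_left h8' hmA.le
    have h10 : (mA * ‖lamst u - lamst v‖ ^ 2) * LA ^ 2 ≤
        (-((D (u - v)) (lamst u - lamst v))) * LA ^ 2 :=
      mul_le_mul_of_nonneg_right h7 hLA2.le
    nlinarith
  have hsum : mS * ‖u - v‖ ^ 2 = mS * ‖E (u - v)‖ ^ 2 + mS * ‖D (u - v)‖ ^ 2 +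
      mS * ‖Γt (u - v)‖ ^ 2 := by rw [hnorm (u - v)]; ring
  rw [ge_iff_le, hsum, t2]
  have c1 : mS * ‖E (u - v)‖ ^ 2 ≤ mA * ‖E (u - v)‖ ^ 2 :=
    mul_le_mul_of_nonneg_right hmSmA (sq_nonneg _)
  have c2 : mS * ‖Γt (u - v)‖ ^ 2 ≤ ‖Γt (u - v)‖ ^ 2 := by
    nlinarith [sq_nonneg ‖Γt (u - v)‖]
  have c3 : mS * ‖D (u - v)‖ ^ 2 ≤ (mA / LA ^ 2) * ‖D (u - v)‖ ^ 2 :=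
    mul_le_mul_of_nonneg_right hmSq (sq_nonneg _)
  linarith

set_option maxHeartbeats 1000000 in
/-- R-linear convergence of the inexact Uzawa iteration with inner and outer
Zarantonello iterations. -/
theorem inexact_uzawa_convergence
    {Y X H : Type*}
    [NormedAddCommGroup Y] [InnerProductSpace ℝ Y] [CompleteSpace Y]
    [NormedAddCommGroup X] [InnerProductSpace ℝ X] [CompleteSpace X]
    [NormedAddCommGroup H] [InnerProductSpace ℝ H] [CompleteSpace H]
    (E : X →L[ℝ] Y) (D : X →L[ℝ] StrongDual ℝ Y) (Γt : X →L[ℝ] H)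
    (hnorm : ∀ x : X, ‖x‖ ^ 2 = ‖E x‖ ^ 2 + ‖D x‖ ^ 2 + ‖Γt x‖ ^ 2)
    (A : Y → StrongDual ℝ Y) (LA mA : ℝ) (hLA : 0 < LA) (hmA : 0 < mA)
    (hAlip : ∀ w v : Y, ‖A w - A v‖ ≤ LA * ‖w - v‖)
    (hAmono : ∀ w v : Y, (A w - A v) (w - v) ≥ mA * ‖w - v‖ ^ 2)
    (f : StrongDual ℝ Y) (g : StrongDual ℝ X)
    -- the exact solution of the saddle point system
    (lamo : Y) (uo : X)
    (hsol₁ : A lamo + D uo = f)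
    (hsol₂ : D.flip lamo - (A (E uo)).comp E -
        (InnerProductSpace.toDual ℝ H (Γt uo)).comp Γt = g)
    -- the constants
    (LS mS θA σA θS σS : ℝ)
    (hLS : LS = max 1 (max LA (1 / mA)))
    (hmS : mS = min 1 (min mA (mA / LA ^ 2)))
    (hθA : θA = mA / LA ^ 2) (hσA : σA = Real.sqrt (1 - mA ^ 2 / LA ^ 2))
    (hθS : θS = mS / LS ^ 2) (hσS : σS = Real.sqrt (1 - mS ^ 2 / LS ^ 2))
    (σS' C₃ : ℝ) (hσS' : σS < σS' ∧ σS' < 1)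
    (hC₃ : C₃ = (1 / σS') * ((σS' - σS) / θS + 1 / mA))
    (L : ℕ) (hL : σA ^ L * (C₃ + 1 / mA) ≤ (σS' - σS) / θS)
    -- the inexact Uzawa iterates (with arbitrary initial values `lam 0`, `us 0`)
    (lam : ℕ → Y) (us : ℕ → X)
    (hlamrec : ∀ k : ℕ, lam (k + 1) =
      (fun ξ : Y => ξ - θA • (InnerProductSpace.toDual ℝ Y).symm
        (A ξ - (f - D (us k))))^[L] (lam k))
    (husrec : ∀ k : ℕ, us (k + 1) =
      us k - θS • (InnerProductSpace.toDual ℝ X).symm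
        ((A (E (us k))).comp E + (InnerProductSpace.toDual ℝ H (Γt (us k))).comp Γt
          + g - D.flip (lam (k + 1))))
    (C₄ : ℝ)
    (hC₄ : C₄ = max ((1 / C₃) * ‖lamo - lam 0‖) ‖uo - us 0‖) :
    ∀ k : ℕ,
      (1 / C₃) * ‖lamo - lam k‖ ≤ σS' ^ k * C₄ ∧
      ‖uo - us k‖ ≤ σS' ^ k * C₄ := by
  obtain ⟨hσS'l, hσS'u⟩ := hσS'
  -- positivity facts
  have hLS1 : (1:ℝ) ≤ LS := by rw [hLS]; exact le_max_left _ _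
  have hLSpos : (0:ℝ) < LS := lt_of_lt_of_le one_pos hLS1
  have hmSpos : (0:ℝ) < mS := by
    rw [hmS]; exact lt_min one_pos (lt_min hmA (by positivity))
  have hθSpos : (0:ℝ) < θS := by rw [hθS]; positivity
  have hσSnn : (0:ℝ) ≤ σS := hσS ▸ Real.sqrt_nonneg _
  have hσAnn : (0:ℝ) ≤ σA := hσA ▸ Real.sqrt_nonneg _
  have hσS'pos : (0:ℝ) < σS' := lt_of_le_of_lt hσSnn hσS'l
  have hgap : (0:ℝ) < σS' - σS := sub_pos.mpr hσS'l
  have hC₃pos : (0:ℝ) < C₃ := by rw [hC₃]; positivity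
  have hC₄nn : (0:ℝ) ≤ C₄ := by
    rw [hC₄]
    exact le_trans (by positivity) (le_max_left _ ‖uo - us 0‖)
  -- norm bounds for E, D, Γt and D.flip
  have hDle : ∀ x : X, ‖D x‖ ≤ ‖x‖ := fun x => by
    nlinarith [hnorm x, norm_nonneg (D x), norm_nonneg x, sq_nonneg ‖E x‖, sq_nonneg ‖Γt x‖]
  have hDflip : ∀ μ : Y, ‖D.flip μ‖ ≤ ‖μ‖ := by
    intro μ
    refine ContinuousLinearMap.opNorm_le_bound _ (norm_nonneg μ) fun v => ?_
    rw [ContinuousLinearMap.flip_apply]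
    calc ‖(D v) μ‖ ≤ ‖D v‖ * ‖μ‖ := (D v).le_opNorm μ
    _ ≤ ‖v‖ * ‖μ‖ := mul_le_mul_of_nonneg_right (hDle v) (norm_nonneg μ)
    _ = ‖μ‖ * ‖v‖ := mul_comm _ _
  -- the exact inner solution map
  have hex : ∀ u : X, ∃ q : Y, A q = f - D u := fun u =>
    exists_inverse A LA mA hLA hmA hAlip hAmono (f - D u)
  choose lamst hlamst using hex
  have hAlamo : A lamo = f - D uo := by rw [← hsol₁]; abel
  have hAdiff : ∀ u v : X, ‖A (lamst u) - A (lamst v)‖ = ‖D (u - v)‖ := by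
    intro u v
    rw [hlamst, hlamst]
    rw [show f - D u - (f - D v) = -(D u - D v) by abel, norm_neg, ← map_sub]
  have hlamstLip : ∀ u v : X, ‖lamst u - lamst v‖ ≤ (1 / mA) * ‖u - v‖ := by
    intro u v
    calc ‖lamst u - lamst v‖ ≤ (1 / mA) * ‖A (lamst u) - A (lamst v)‖ :=
        mono_inv A mA hmA hAmono _ _
    _ = (1 / mA) * ‖D (u - v)‖ := by rw [hAdiff]
    _ ≤ (1 / mA) * ‖u - v‖ :=
        mul_le_mul_of_nonneg_left (hDle _) (by positivity)
  have hlamsto : lamst uo = lamo := by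
    have h1 : ‖lamst uo - lamo‖ ≤ (1 / mA) * ‖A (lamst uo) - A lamo‖ :=
      mono_inv A mA hmA hAmono _ _
    rw [hlamst uo, hAlamo, sub_self, norm_zero, mul_zero] at h1
    have h2 := norm_le_zero_iff.mp h1
    rwa [sub_eq_zero] at h2
  -- the Schur operator
  set T : X → StrongDual ℝ X := fun u => (A (E u)).comp E +
    ((InnerProductSpace.toDual ℝ H) (Γt u)).comp Γt - D.flip (lamst u) with hTdef
  have hTuo : T uo = -g := by
    simp only [hTdef]
    rw [hlamsto, ← hsol₂]
    abel
  have hLALS : LA ≤ LS := by rw [hLS]; exact le_trans (le_max_left _ _) (le_max_right _ _)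
  have hmALS : 1 / mA ≤ LS := by
    rw [hLS]; exact le_trans (le_max_right LA _) (le_max_right _ _)
  have hmS1 : mS ≤ 1 := by rw [hmS]; exact min_le_left _ _
  have hmSmA : mS ≤ mA := by rw [hmS]; exact le_trans (min_le_right _ _) (min_le_left _ _)
  have hmSq : mS ≤ mA / LA ^ 2 := by
    rw [hmS]; exact le_trans (min_le_right _ _) (min_le_right _ _)
  have h5diff : ∀ u v : X, A (lamst u) - A (lamst v) = -(D (u - v)) := by
    intro u v; rw [hlamst, hlamst, map_sub]; abel
  have hTlip : ∀ u v : X, ‖T u - T v‖ ≤ LS * ‖u - v‖ := fun u v => by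
    simp only [hTdef]
    exact schur_lip E D Γt hnorm A LA mA hmA hAlip lamst hAdiff
      (fun a b => mono_inv A mA hmA hAmono _ _) LS hLALS hLS1 hmALS u v
  have hTmono : ∀ u v : X, (T u - T v) (u - v) ≥ mS * ‖u - v‖ ^ 2 := fun u v => by
    simp only [hTdef]
    exact schur_mono E D Γt hnorm A LA mA hLA hmA hAlip hAmono lamst hAdiff h5diff
      mS hmS1 hmSmA hmSq u v
  -- main induction
  intro k
  induction k with
  | zero =>
    rw [pow_zero, one_mul, hC₄]
    exact ⟨le_max_left _ _, le_max_right _ _⟩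
  | succ k ih =>
    obtain ⟨ihl, ihu⟩ := ih
    have ihl' : ‖lamo - lam k‖ ≤ C₃ * (σS' ^ k * C₄) := by
      calc ‖lamo - lam k‖ = C₃ * ((1 / C₃) * ‖lamo - lam k‖) := by
            field_simp
      _ ≤ C₃ * (σS' ^ k * C₄) := mul_le_mul_of_nonneg_left ihl hC₃pos.le
    set p := lamst (us k) with hpdef
    have hσknn : (0:ℝ) ≤ σS' ^ k * C₄ := by positivity
    -- the inner Zarantonello iteration
    have hfix : (fun ξ : Y => ξ - θA • (InnerProductSpace.toDual ℝ Y).symm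
        (A ξ - (f - D (us k)))) p = p := by
      simp only
      rw [hlamst (us k), sub_self, map_zero, smul_zero, sub_zero]
    have hcontr : ∀ x y : Y,
        ‖(fun ξ : Y => ξ - θA • (InnerProductSpace.toDual ℝ Y).symm
          (A ξ - (f - D (us k)))) x -
         (fun ξ : Y => ξ - θA • (InnerProductSpace.toDual ℝ Y).symm
          (A ξ - (f - D (us k)))) y‖ ≤ σA * ‖x - y‖ := by
      intro x y
      rw [hθA, hσA]
      have := zar_contract (fun ξ => A ξ - (f - D (us k))) LA mA hLA hmA
        (fun w v => by simpa [sub_sub_sub_cancel_right] using hAlip w v)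
        (fun w v => by simpa [sub_sub_sub_cancel_right] using hAmono w v) x y
      simpa using this
    have hinner : ‖lam (k + 1) - p‖ ≤ σA ^ L * ‖lam k - p‖ := by
      rw [hlamrec k]
      exact iter_contract _ _ hσAnn hcontr p hfix (lam k) L
    have hpo : ‖lamo - p‖ ≤ (1 / mA) * ‖uo - us k‖ := by
      rw [hpdef, ← hlamsto]
      exact hlamstLip uo (us k)
    have hpo' : ‖lamo - p‖ ≤ (1 / mA) * (σS' ^ k * C₄) :=
      le_trans hpo (mul_le_mul_of_nonneg_left ihu (by positivity))
    have hσALnn : (0:ℝ) ≤ σA ^ L := pow_nonneg hσAnn L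
    have hinner2 : ‖lam (k + 1) - p‖ ≤ ((σS' - σS) / θS) * (σS' ^ k * C₄) := by
      have htri : ‖lam k - p‖ ≤ C₃ * (σS' ^ k * C₄) + (1 / mA) * (σS' ^ k * C₄) := by
        calc ‖lam k - p‖ = ‖(lam k - lamo) + (lamo - p)‖ := by congr 1; abel
        _ ≤ ‖lam k - lamo‖ + ‖lamo - p‖ := norm_add_le _ _
        _ = ‖lamo - lam k‖ + ‖lamo - p‖ := by rw [norm_sub_rev]
        _ ≤ _ := add_le_add ihl' hpo'
      calc ‖lam (k + 1) - p‖ ≤ σA ^ L * ‖lam k - p‖ := hinner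
      _ ≤ σA ^ L * ((C₃ + 1 / mA) * (σS' ^ k * C₄)) := by
          apply mul_le_mul_of_nonneg_left _ hσALnn
          have hre : (C₃ + 1 / mA) * (σS' ^ k * C₄) =
            C₃ * (σS' ^ k * C₄) + (1 / mA) * (σS' ^ k * C₄) := by ring
          rw [hre]; exact htri
      _ = (σA ^ L * (C₃ + 1 / mA)) * (σS' ^ k * C₄) := by ring
      _ ≤ ((σS' - σS) / θS) * (σS' ^ k * C₄) := mul_le_mul_of_nonneg_right hL hσknn
    have hlgoal : (1 / C₃) * ‖lamo - lam (k + 1)‖ ≤ σS' ^ (k + 1) * C₄ := by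
      have h9 : ‖lamo - lam (k + 1)‖ ≤ (1 / mA + (σS' - σS) / θS) * (σS' ^ k * C₄) := by
        calc ‖lamo - lam (k + 1)‖ = ‖(lamo - p) + (p - lam (k + 1))‖ := by congr 1; abel
        _ ≤ ‖lamo - p‖ + ‖p - lam (k + 1)‖ := norm_add_le _ _
        _ = ‖lamo - p‖ + ‖lam (k + 1) - p‖ := by rw [norm_sub_rev p]
        _ ≤ (1 / mA) * (σS' ^ k * C₄) + ((σS' - σS) / θS) * (σS' ^ k * C₄) :=
            add_le_add hpo' hinner2
        _ = _ := by ring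
      have hCeq : 1 / mA + (σS' - σS) / θS = C₃ * σS' := by
        have hne1 : σS' ≠ 0 := ne_of_gt hσS'pos
        have hne2 : θS ≠ 0 := ne_of_gt hθSpos
        have hne3 : mA ≠ 0 := ne_of_gt hmA
        rw [hC₃]
        field_simp
        ring
      rw [hCeq] at h9
      have h11 : (1 / C₃) * ‖lamo - lam (k + 1)‖ ≤ (1 / C₃) * (C₃ * σS' * (σS' ^ k * C₄)) :=
        mul_le_mul_of_nonneg_left h9 (by positivity)
      have hC3ne : C₃ ≠ 0 := ne_of_gt hC₃pos
      have h12 : (1 / C₃) * (C₃ * σS' * (σS' ^ k * C₄)) = σS' ^ (k + 1) * C₄ := by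
        field_simp
        ring
      rw [h12] at h11
      exact h11
    refine ⟨hlgoal, ?_⟩
    -- the u-update
    have hTus : T (us k) = (A (E (us k))).comp E +
        ((InnerProductSpace.toDual ℝ H) (Γt (us k))).comp Γt - D.flip p := by
      simp only [hTdef, hpdef]
    have hres : (A (E (us k))).comp E + (InnerProductSpace.toDual ℝ H (Γt (us k))).comp Γt
        + g - D.flip (lam (k + 1)) = (T (us k) - T uo) + D.flip (p - lam (k + 1)) := by
      rw [hTus, hTuo, map_sub]
      abel
    have hustep : uo - us (k + 1) =
        -((us k - θS • (InnerProductSpace.toDual ℝ X).symm (T (us k))) -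
          (uo - θS • (InnerProductSpace.toDual ℝ X).symm (T uo))) +
        θS • (InnerProductSpace.toDual ℝ X).symm (D.flip (p - lam (k + 1))) := by
      rw [husrec k, hres, map_add, map_sub, smul_add, smul_sub]
      abel
    have hcontrS : ‖(us k - θS • (InnerProductSpace.toDual ℝ X).symm (T (us k))) -
        (uo - θS • (InnerProductSpace.toDual ℝ X).symm (T uo))‖ ≤ σS * ‖us k - uo‖ := by
      rw [hθS, hσS]
      exact zar_contract T LS mS hLSpos hmSpos hTlip hTmono (us k) uo
    have hD2 : ‖θS • (InnerProductSpace.toDual ℝ X).symm (D.flip (p - lam (k + 1)))‖ ≤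
        θS * (((σS' - σS) / θS) * (σS' ^ k * C₄)) := by
      rw [norm_smul, Real.norm_eq_abs, abs_of_pos hθSpos]
      apply mul_le_mul_of_nonneg_left _ hθSpos.le
      calc ‖(InnerProductSpace.toDual ℝ X).symm (D.flip (p - lam (k + 1)))‖
          = ‖D.flip (p - lam (k + 1))‖ := LinearIsometryEquiv.norm_map _ _
      _ ≤ ‖p - lam (k + 1)‖ := hDflip _
      _ = ‖lam (k + 1) - p‖ := norm_sub_rev _ _
      _ ≤ _ := hinner2
    have husk : ‖us k - uo‖ ≤ σS' ^ k * C₄ := by rw [norm_sub_rev]; exact ihu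
    calc ‖uo - us (k + 1)‖ = ‖-((us k - θS • (InnerProductSpace.toDual ℝ X).symm (T (us k))) -
          (uo - θS • (InnerProductSpace.toDual ℝ X).symm (T uo))) +
          θS • (InnerProductSpace.toDual ℝ X).symm (D.flip (p - lam (k + 1)))‖ := by
              rw [hustep]
    _ ≤ ‖-((us k - θS • (InnerProductSpace.toDual ℝ X).symm (T (us k))) -
          (uo - θS • (InnerProductSpace.toDual ℝ X).symm (T uo)))‖ +
        ‖θS • (InnerProductSpace.toDual ℝ X).symm (D.flip (p - lam (k + 1)))‖ :=
        norm_add_le _ _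
    _ = ‖(us k - θS • (InnerProductSpace.toDual ℝ X).symm (T (us k))) -
          (uo - θS • (InnerProductSpace.toDual ℝ X).symm (T uo))‖ +
        ‖θS • (InnerProductSpace.toDual ℝ X).symm (D.flip (p - lam (k + 1)))‖ := by
        rw [norm_neg]
    _ ≤ σS * ‖us k - uo‖ + θS * (((σS' - σS) / θS) * (σS' ^ k * C₄)) :=
        add_le_add hcontrS hD2
    _ ≤ σS * (σS' ^ k * C₄) + (σS' - σS) * (σS' ^ k * C₄) := by
        have hth : θS * (((σS' - σS) / θS) * (σS' ^ k * C₄)) =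
            (σS' - σS) * (σS' ^ k * C₄) := by
          field_simp
        rw [hth]
        exact add_le_add (mul_le_mul_of_nonneg_left husk hσSnn) le_rfl
    _ = σS' ^ (k + 1) * C₄ := by ring
end
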